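/- arXiv:1906.10086 — 8 statements merged into one kernel-verified Lean document; each statement's English description precedes it below -/
import Mathlib

section
/- In the one-dimensional split framework, let s* be a best split and suppose Δ(s*) > 0. Then s* ∈ (a,b) and there exists ε ∈ {−1,+1} such that P(s*) = (1/2)·(1 + ε·√(Ḡ(s*)² / (Ḡ(s*)² + Δ(s*)))); consequently 4·P(s*)·(1 − P(s*)) = Δ(s*) / (Ḡ(s*)² + Δ(s*)). -/
open MeasureTheory Set

noncomputable section

/-- In the one-dimensional split framework, a best split `s*` with
`Δ(s*) > 0` lies in the open interval `(a,b)`, and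
`P(s*) = (1 ± √(Ḡ(s*)² / (Ḡ(s*)² + Δ(s*))))/2`; consequently
`4 P(s*)(1 − P(s*)) = Δ(s*)/(Ḡ(s*)² + Δ(s*))`. -/
theorem best_split_probability_content
    (a b : ℝ) (hab : a < b)
    (p g : ℝ → ℝ)
    (hp_cont : ContinuousOn p (Set.Icc a b))
    (hp_pos : ∀ u ∈ Set.Icc a b, 0 < p u)
    (hp_one : (∫ u in a..b, p u) = 1)
    (hg_cont : ContinuousOn g (Set.Icc a b))
    (P M Xi G Δ : ℝ → ℝ)
    (hP : ∀ s, P s = ∫ u in a..s, p u)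
    (hM : ∀ s, M s = ∫ u in a..s, g u * p u)
    (hXi : ∀ s, Xi s = M s - M b * P s)
    (hG : ∀ s, G s = g s - M b)
    (hΔ : ∀ s, Δ s = Xi s ^ 2 / (P s * (1 - P s)))
    (sstar : ℝ) (hmem : sstar ∈ Set.Icc a b)
    (hmax : ∀ s ∈ Set.Icc a b, Δ s ≤ Δ sstar)
    (hpos : 0 < Δ sstar) :
    sstar ∈ Set.Ioo a b ∧
      ∃ ε : ℝ, (ε = 1 ∨ ε = -1) ∧
        P sstar = (1 + ε * Real.sqrt (G sstar ^ 2 / (G sstar ^ 2 + Δ sstar))) / 2 ∧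
        4 * P sstar * (1 - P sstar) = Δ sstar / (G sstar ^ 2 + Δ sstar) := by
  -- boundary values
  have hPa : P a = 0 := by rw [hP]; simp
  have hPb : P b = 1 := by rw [hP]; exact hp_one
  have hΔa : Δ a = 0 := by rw [hΔ, hPa]; simp
  have hΔb : Δ b = 0 := by rw [hΔ, hPb]; simp
  have hne_a : sstar ≠ a := by rintro rfl; rw [hΔa] at hpos; exact lt_irrefl 0 hpos
  have hne_b : sstar ≠ b := by rintro rfl; rw [hΔb] at hpos; exact lt_irrefl 0 hpos
  have hIoo : sstar ∈ Set.Ioo a b :=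
    ⟨lt_of_le_of_ne hmem.1 hne_a.symm, lt_of_le_of_ne hmem.2 hne_b⟩
  refine ⟨hIoo, ?_⟩
  -- positivity of denominator
  have hden : 0 < P sstar * (1 - P sstar) := by
    by_contra h
    push_neg at h
    rw [hΔ] at hpos
    exact absurd hpos (not_lt.mpr (div_nonpos_of_nonneg_of_nonpos (sq_nonneg _) h))
  have hXine : Xi sstar ≠ 0 := by
    intro h
    rw [hΔ, h] at hpos
    simp at hpos
  -- derivatives
  have hsub : Set.uIcc a sstar ⊆ Set.Icc a b := by
    rw [Set.uIcc_of_le hmem.1]; exact Set.Icc_subset_Icc le_rfl hmem.2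
  have hIccnhds : Set.Icc a b ∈ nhds sstar := Icc_mem_nhds hIoo.1 hIoo.2
  have hintp : IntervalIntegrable p volume a sstar := (hp_cont.mono hsub).intervalIntegrable
  have hintgp : IntervalIntegrable (fun u => g u * p u) volume a sstar :=
    ((hg_cont.mul hp_cont).mono hsub).intervalIntegrable
  have hmeasp : StronglyMeasurableAtFilter p (nhds sstar) :=
    ⟨Set.Ioo a b, Ioo_mem_nhds hIoo.1 hIoo.2,
      (hp_cont.mono Set.Ioo_subset_Icc_self).aestronglyMeasurable measurableSet_Ioo⟩
  have hmeasgp : StronglyMeasurableAtFilter (fun u => g u * p u) (nhds sstar) :=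
    ⟨Set.Ioo a b, Ioo_mem_nhds hIoo.1 hIoo.2,
      ((hg_cont.mul hp_cont).mono Set.Ioo_subset_Icc_self).aestronglyMeasurable
        measurableSet_Ioo⟩
  have hcontp : ContinuousAt p sstar := hp_cont.continuousAt hIccnhds
  have hcontgp : ContinuousAt (fun u => g u * p u) sstar :=
    (hg_cont.mul hp_cont).continuousAt hIccnhds
  have hdP : HasDerivAt P (p sstar) sstar := by
    have := intervalIntegral.integral_hasDerivAt_right hintp hmeasp hcontp
    exact this.congr_of_eventuallyEq (Filter.Eventually.of_forall fun s => (hP s))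
  have hdM : HasDerivAt M (g sstar * p sstar) sstar := by
    have := intervalIntegral.integral_hasDerivAt_right hintgp hmeasgp hcontgp
    exact this.congr_of_eventuallyEq (Filter.Eventually.of_forall fun s => (hM s))
  have hdXi : HasDerivAt Xi (g sstar * p sstar - M b * p sstar) sstar := by
    have := hdM.sub (hdP.const_mul (M b))
    exact this.congr_of_eventuallyEq (Filter.Eventually.of_forall fun s => (hXi s))
  have hdNum : HasDerivAt (fun s => Xi s ^ 2)
      (2 * Xi sstar ^ 1 * (g sstar * p sstar - M b * p sstar)) sstar := by
    simpa using hdXi.fun_pow 2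
  have hdDen : HasDerivAt (fun s => P s * (1 - P s))
      (p sstar * (1 - P sstar) + P sstar * (0 - p sstar)) sstar :=
    hdP.mul ((hasDerivAt_const sstar (1:ℝ)).sub hdP)
  have hdΔ : HasDerivAt Δ
      ((2 * Xi sstar ^ 1 * (g sstar * p sstar - M b * p sstar) * (P sstar * (1 - P sstar)) -
        Xi sstar ^ 2 * (p sstar * (1 - P sstar) + P sstar * (0 - p sstar))) /
        (P sstar * (1 - P sstar)) ^ 2) sstar := by
    have := hdNum.div hdDen hden.ne'
    exact this.congr_of_eventuallyEq (Filter.Eventually.of_forall fun s => (hΔ s))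
  have hloc : IsLocalMax Δ sstar := Filter.eventually_of_mem hIccnhds hmax
  have hzero := hloc.hasDerivAt_eq_zero hdΔ
  -- extract first-order condition
  have hnum : 2 * Xi sstar ^ 1 * (g sstar * p sstar - M b * p sstar) * (P sstar * (1 - P sstar)) -
      Xi sstar ^ 2 * (p sstar * (1 - P sstar) + P sstar * (0 - p sstar)) = 0 := by
    rcases div_eq_zero_iff.mp hzero with h | h
    · exact h
    · exact absurd h (pow_ne_zero 2 hden.ne')
  have hGv' : G sstar = g sstar - M b := hG sstar
  have hpp : 0 < p sstar := hp_pos sstar hmem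
  have key : 2 * G sstar * (P sstar * (1 - P sstar)) = Xi sstar * (1 - 2 * P sstar) := by
    have h2 : p sstar * (Xi sstar *
        (2 * G sstar * (P sstar * (1 - P sstar)) - Xi sstar * (1 - 2 * P sstar))) = 0 := by
      rw [hGv']; linear_combination hnum
    rcases mul_eq_zero.mp h2 with h | h
    · exact absurd h hpp.ne'
    · rcases mul_eq_zero.mp h with h | h
      · exact absurd h hXine
      · linarith
  -- algebra
  have hΔs : Δ sstar = Xi sstar ^ 2 / (P sstar * (1 - P sstar)) := hΔ sstar
  have hΞ2 : Xi sstar ^ 2 = Δ sstar * (P sstar * (1 - P sstar)) := by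
    rw [hΔs, div_mul_cancel₀ _ hden.ne']
  have hS : 0 < G sstar ^ 2 + Δ sstar := by positivity
  have hmain : 4 * G sstar ^ 2 * (P sstar * (1 - P sstar)) = Δ sstar * (1 - 2 * P sstar) ^ 2 := by
    have hsq : (2 * G sstar * (P sstar * (1 - P sstar))) ^ 2
        = (Xi sstar * (1 - 2 * P sstar)) ^ 2 := by rw [key]
    have h3 : 4 * G sstar ^ 2 * (P sstar * (1 - P sstar)) ^ 2
        = Δ sstar * (P sstar * (1 - P sstar)) * (1 - 2 * P sstar) ^ 2 := by
      linear_combination hsq + (1 - 2 * P sstar) ^ 2 * hΞ2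
    exact mul_right_cancel₀ hden.ne' (by linear_combination h3)
  have hfinal : 4 * P sstar * (1 - P sstar) = Δ sstar / (G sstar ^ 2 + Δ sstar) := by
    rw [eq_div_iff hS.ne']
    linear_combination hmain
  have hsq1 : (2 * P sstar - 1) ^ 2 = G sstar ^ 2 / (G sstar ^ 2 + Δ sstar) := by
    rw [eq_div_iff hS.ne']
    linear_combination -hmain
  have hsqrt : Real.sqrt (G sstar ^ 2 / (G sstar ^ 2 + Δ sstar)) = |2 * P sstar - 1| := by
    rw [← hsq1, Real.sqrt_sq_eq_abs]
  rcases le_or_gt 0 (2 * P sstar - 1) with h | h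
  · exact ⟨1, Or.inl rfl, by rw [hsqrt, abs_of_nonneg h]; ring, hfinal⟩
  · exact ⟨-1, Or.inr rfl, by rw [hsqrt, abs_of_neg h]; ring, hfinal⟩
end
end

section
/- In the one-dimensional split framework, let s* be a best split with Δ(s*) > 0. Then Ḡ(s*)² + Δ(s*) ≤ sup_{s ∈ [a,b]} Ḡ(s)² ≤ ω(g;[a,b])², where ω(g;[a,b]) = sup_{s,s' ∈ [a,b]} |g(s) − g(s')| is the oscillation of g on [a,b]. Moreover, if g is continuously differentiable on [a,b], then Ḡ(s*)² + Δ(s*) ≤ (∫_a^b |g′(s)| ds)². -/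
open MeasureTheory Set

noncomputable section

/-- For a best split `s*` with `Δ(s*) > 0`,
`Ḡ(s*)² + Δ(s*) ≤ sup_{s∈[a,b]} Ḡ(s)² ≤ ω(g;[a,b])²`, and if `g` is `C¹` on `[a,b]`
then `Ḡ(s*)² + Δ(s*) ≤ (∫_a^b |g′|)²`. -/
theorem best_split_oscillation_bound
    (a b : ℝ) (hab : a < b)
    (p g : ℝ → ℝ)
    (hp_cont : ContinuousOn p (Set.Icc a b))
    (hp_pos : ∀ u ∈ Set.Icc a b, 0 < p u)
    (hp_one : (∫ u in a..b, p u) = 1)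
    (hg_cont : ContinuousOn g (Set.Icc a b))
    (P M Xi G Δ : ℝ → ℝ)
    (hP : ∀ s, P s = ∫ u in a..s, p u)
    (hM : ∀ s, M s = ∫ u in a..s, g u * p u)
    (hXi : ∀ s, Xi s = M s - M b * P s)
    (hG : ∀ s, G s = g s - M b)
    (hΔ : ∀ s, Δ s = Xi s ^ 2 / (P s * (1 - P s)))
    (sstar : ℝ) (hmem : sstar ∈ Set.Icc a b)
    (hmax : ∀ s ∈ Set.Icc a b, Δ s ≤ Δ sstar)
    (hpos : 0 < Δ sstar)
    (ω : ℝ) (hω : ω = sSup ((fun q : ℝ × ℝ => |g q.1 - g q.2|) '' (Set.Icc a b ×ˢ Set.Icc a b))) :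
    (G sstar ^ 2 + Δ sstar ≤ sSup ((fun s => G s ^ 2) '' Set.Icc a b) ∧
      sSup ((fun s => G s ^ 2) '' Set.Icc a b) ≤ ω ^ 2) ∧
    (∀ g' : ℝ → ℝ, (∀ s ∈ Set.Icc a b, HasDerivWithinAt g (g' s) (Set.Icc a b) s) →
      ContinuousOn g' (Set.Icc a b) →
      G sstar ^ 2 + Δ sstar ≤ (∫ s in a..b, |g' s|) ^ 2) := by
  
  have habl : a ≤ b := hab.le
  have haI : a ∈ Icc a b := left_mem_Icc.mpr habl
  have hbI : b ∈ Icc a b := right_mem_Icc.mpr habl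
  set m := M b with hm
  -- basic values
  have hPa : P a = 0 := by rw [hP, intervalIntegral.integral_same]
  have hPb : P b = 1 := by rw [hP]; exact hp_one
  have hMa : M a = 0 := by rw [hM, intervalIntegral.integral_same]
  have hXia : Xi a = 0 := by rw [hXi, hMa, hPa]; ring
  have hXib : Xi b = 0 := by rw [hXi, hPb]; ring
  have hΔa : Δ a = 0 := by rw [hΔ, hXia]; simp
  have hΔb : Δ b = 0 := by rw [hΔ, hXib]; simp
  have hsa' : a < sstar := by
    rcases lt_or_eq_of_le hmem.1 with h | h
    · exact h
    · exfalso; rw [← h] at hpos; rw [hΔa] at hpos; exact lt_irrefl 0 hpos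
  have hsb' : sstar < b := by
    rcases lt_or_eq_of_le hmem.2 with h | h
    · exact h
    · exfalso; rw [h] at hpos; rw [hΔb] at hpos; exact lt_irrefl 0 hpos
  -- integrability helpers
  have hpi : ∀ x ∈ Icc a b, ∀ y ∈ Icc a b, IntervalIntegrable p volume x y :=
    fun x hx y hy => (hp_cont.mono (uIcc_subset_Icc hx hy)).intervalIntegrable
  have hgp_cont : ContinuousOn (fun u => g u * p u) (Icc a b) := hg_cont.mul hp_cont
  have hgpi : ∀ x ∈ Icc a b, ∀ y ∈ Icc a b, IntervalIntegrable (fun u => g u * p u) volume x y :=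
    fun x hx y hy => (hgp_cont.mono (uIcc_subset_Icc hx hy)).intervalIntegrable
  have hGp_cont : ContinuousOn (fun u => (g u - m) * p u) (Icc a b) :=
    (hg_cont.sub continuousOn_const).mul hp_cont
  have hGpi : ∀ x ∈ Icc a b, ∀ y ∈ Icc a b,
      IntervalIntegrable (fun u => (g u - m) * p u) volume x y :=
    fun x hx y hy => (hGp_cont.mono (uIcc_subset_Icc hx hy)).intervalIntegrable
  -- positivity of P s* and 1 - P s*
  have hP0 : 0 < P sstar := by
    rw [hP]
    exact intervalIntegral.intervalIntegral_pos_of_pos_on (hpi a haI sstar hmem)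
      (fun x hx => hp_pos x ⟨hx.1.le, hx.2.le.trans hmem.2⟩) hsa'
  have hPsum : P sstar + (∫ u in sstar..b, p u) = 1 := by
    rw [hP, ← hp_one]
    exact intervalIntegral.integral_add_adjacent_intervals (hpi a haI sstar hmem) (hpi sstar hmem b hbI)
  have hP1 : P sstar < 1 := by
    have h2 : 0 < ∫ u in sstar..b, p u :=
      intervalIntegral.intervalIntegral_pos_of_pos_on (hpi sstar hmem b hbI)
        (fun x hx => hp_pos x ⟨hmem.1.trans hx.1.le, hx.2.le⟩) hsb'
    linarith
  have hD : 0 < P sstar * (1 - P sstar) := mul_pos hP0 (by linarith)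
  have hDne : P sstar * (1 - P sstar) ≠ 0 := ne_of_gt hD
  -- derivatives at s*
  have hnhds : Icc a b ∈ nhds sstar := Icc_mem_nhds hsa' hsb'
  have hmeasur : ∀ f : ℝ → ℝ, ContinuousOn f (Icc a b) →
      StronglyMeasurableAtFilter f (nhds sstar) volume :=
    fun f hf => ⟨Icc a b, hnhds, hf.aestronglyMeasurable measurableSet_Icc⟩
  have hP' : HasDerivAt P (p sstar) sstar := by
    rw [show P = fun s => ∫ u in a..s, p u from funext hP]
    exact intervalIntegral.integral_hasDerivAt_right (hpi a haI sstar hmem)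
      (hmeasur p hp_cont) (hp_cont.continuousAt hnhds)
  have hM' : HasDerivAt M (g sstar * p sstar) sstar := by
    rw [show M = fun s => ∫ u in a..s, g u * p u from funext hM]
    exact intervalIntegral.integral_hasDerivAt_right (hgpi a haI sstar hmem)
      (hmeasur _ hgp_cont) (hgp_cont.continuousAt hnhds)
  have hXi' : HasDerivAt Xi ((g sstar - m) * p sstar) sstar := by
    rw [show Xi = fun s => M s - m * P s from funext hXi]
    have := hM'.sub (hP'.const_mul m)
    refine this.congr_deriv ?_
    ring
  have hnum' : HasDerivAt (fun s => Xi s ^ 2) (2 * Xi sstar * ((g sstar - m) * p sstar)) sstar := by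
    have := hXi'.pow 2
    refine this.congr_deriv ?_
    push_cast
    ring
  have hden' : HasDerivAt (fun s => P s * (1 - P s))
      (p sstar * (1 - P sstar) + P sstar * (0 - p sstar)) sstar :=
    hP'.mul ((hasDerivAt_const _ (1:ℝ)).sub hP')
  have hΔ' : HasDerivAt Δ
      ((2 * Xi sstar * ((g sstar - m) * p sstar) * (P sstar * (1 - P sstar)) -
        Xi sstar ^ 2 * (p sstar * (1 - P sstar) + P sstar * (0 - p sstar))) /
        (P sstar * (1 - P sstar)) ^ 2) sstar := by
    rw [show Δ = fun s => Xi s ^ 2 / (P s * (1 - P s)) from funext hΔ]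
    exact hnum'.div hden' hDne
  have hloc : IsLocalMax Δ sstar := Filter.eventually_of_mem hnhds hmax
  have h0 := hloc.hasDerivAt_eq_zero hΔ'
  have hnum0 : 2 * Xi sstar * ((g sstar - m) * p sstar) * (P sstar * (1 - P sstar)) -
      Xi sstar ^ 2 * (p sstar * (1 - P sstar) + P sstar * (0 - p sstar)) = 0 := by
    have hD2 : (P sstar * (1 - P sstar)) ^ 2 ≠ 0 := pow_ne_zero _ hDne
    rwa [div_eq_zero_iff, or_iff_left hD2] at h0
  have hXine : Xi sstar ≠ 0 := by
    intro h
    rw [hΔ, h] at hpos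
    simp at hpos
  have hpne : p sstar ≠ 0 := ne_of_gt (hp_pos sstar hmem)
  have hfoc : 2 * (g sstar - m) * (P sstar * (1 - P sstar)) = Xi sstar * (1 - 2 * P sstar) := by
    have hcanc : (Xi sstar * p sstar) * (2 * (g sstar - m) * (P sstar * (1 - P sstar))) =
        (Xi sstar * p sstar) * (Xi sstar * (1 - 2 * P sstar)) := by
      linear_combination hnum0
    exact mul_left_cancel₀ (mul_ne_zero hXine hpne) hcanc
  -- key identity
  have hkey : G sstar ^ 2 + Δ sstar = Xi sstar ^ 2 / (4 * (P sstar * (1 - P sstar)) ^ 2) := by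
    have hGval : g sstar - m = Xi sstar * (1 - 2 * P sstar) / (2 * (P sstar * (1 - P sstar))) := by
      rw [eq_div_iff (mul_ne_zero two_ne_zero hDne)]
      linarith [hfoc]
    rw [hG, hΔ, hGval]
    field_simp
    ring
  -- max of |G|
  have hGcont : ContinuousOn G (Icc a b) := by
    rw [show G = fun s => g s - m from funext hG]
    exact hg_cont.sub continuousOn_const
  obtain ⟨s₀, hs₀, hs₀max⟩ :=
    isCompact_Icc.exists_isMaxOn (nonempty_Icc.mpr habl) hGcont.abs
  set K := |G s₀| with hKdef
  have hK : ∀ s ∈ Icc a b, |G s| ≤ K := fun s hs => hs₀max hs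
  have hKnonneg : 0 ≤ K := abs_nonneg _
  -- Xi as integral
  have hXirepr : ∀ x ∈ Icc a b, Xi x = ∫ u in a..x, (g u - m) * p u := by
    intro x hx
    have hsplit : (∫ u in a..x, (g u - m) * p u) =
        (∫ u in a..x, g u * p u) - ∫ u in a..x, m * p u := by
      rw [← intervalIntegral.integral_sub (hgpi a haI x hx) ((hpi a haI x hx).const_mul m)]
      congr 1
      ext u
      ring
    rw [hXi, hM, hP, hsplit, intervalIntegral.integral_const_mul]
  -- general integral bound
  have hbnd : ∀ x y, x ∈ Icc a b → y ∈ Icc a b → x ≤ y →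
      |∫ u in x..y, (g u - m) * p u| ≤ K * ∫ u in x..y, p u := by
    intro x y hx hy hxy
    have h1 : |∫ u in x..y, (g u - m) * p u| ≤ ∫ u in x..y, |(g u - m) * p u| :=
      intervalIntegral.abs_integral_le_integral_abs hxy
    have h2 : (∫ u in x..y, |(g u - m) * p u|) ≤ ∫ u in x..y, K * p u := by
      apply intervalIntegral.integral_mono_on hxy
        ((hGp_cont.abs.mono (uIcc_subset_Icc hx hy)).intervalIntegrable)
        ((hpi x hx y hy).const_mul K)
      intro u hu
      have hu' : u ∈ Icc a b := ⟨hx.1.trans hu.1, hu.2.trans hy.2⟩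
      have hGu : |g u - m| ≤ K := by have := hK u hu'; rwa [hG] at this
      rw [abs_mul, abs_of_pos (hp_pos u hu')]
      exact mul_le_mul_of_nonneg_right hGu (hp_pos u hu').le
    rw [intervalIntegral.integral_const_mul] at h2
    linarith
  have hB1 : |Xi sstar| ≤ K * P sstar := by
    rw [hXirepr sstar hmem, hP]
    exact hbnd a sstar haI hmem hsa'.le
  have hB2 : |Xi sstar| ≤ K * (1 - P sstar) := by
    have hadd : (∫ u in a..sstar, (g u - m) * p u) + (∫ u in sstar..b, (g u - m) * p u) =
        ∫ u in a..b, (g u - m) * p u :=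
      intervalIntegral.integral_add_adjacent_intervals (hGpi a haI sstar hmem) (hGpi sstar hmem b hbI)
    have hfull : (∫ u in a..b, (g u - m) * p u) = 0 := by
      rw [← hXirepr b hbI]; exact hXib
    have hXs : Xi sstar = -(∫ u in sstar..b, (g u - m) * p u) := by
      rw [hXirepr sstar hmem]; linarith
    have h1mP : (1 : ℝ) - P sstar = ∫ u in sstar..b, p u := by linarith
    rw [hXs, abs_neg, h1mP]
    exact hbnd sstar b hmem hbI hsb'.le
  -- the main quantitative bound
  have hmin : |Xi sstar| ≤ 2 * K * (P sstar * (1 - P sstar)) := by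
    rcases le_total (P sstar) (1/2) with h | h
    · calc |Xi sstar| ≤ K * P sstar := hB1
        _ ≤ 2 * K * (P sstar * (1 - P sstar)) := by
            nlinarith [mul_nonneg (mul_nonneg hKnonneg hP0.le)
              (by linarith : (0:ℝ) ≤ 1 - 2 * P sstar)]
    · calc |Xi sstar| ≤ K * (1 - P sstar) := hB2
        _ ≤ 2 * K * (P sstar * (1 - P sstar)) := by
            nlinarith [mul_nonneg (mul_nonneg hKnonneg (by linarith : (0:ℝ) ≤ 1 - P sstar))
              (by linarith : (0:ℝ) ≤ 2 * P sstar - 1)]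
  have hmain : Xi sstar ^ 2 / (4 * (P sstar * (1 - P sstar)) ^ 2) ≤ K ^ 2 := by
    obtain ⟨hl, hr⟩ := abs_le.mp hmin
    have h2 : Xi sstar ^ 2 ≤ (2 * K * (P sstar * (1 - P sstar))) ^ 2 := sq_le_sq' hl hr
    rw [div_le_iff₀ (by positivity)]
    calc Xi sstar ^ 2 ≤ (2 * K * (P sstar * (1 - P sstar))) ^ 2 := h2
      _ = K ^ 2 * (4 * (P sstar * (1 - P sstar)) ^ 2) := by ring
  -- K^2 ≤ sup G^2
  have hbddG2 : BddAbove ((fun s => G s ^ 2) '' Icc a b) :=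
    isCompact_Icc.bddAbove_image (hGcont.pow 2)
  have hS1 : K ^ 2 ≤ sSup ((fun s => G s ^ 2) '' Icc a b) := by
    have hKsq : K ^ 2 = G s₀ ^ 2 := sq_abs _
    rw [hKsq]
    exact le_csSup hbddG2 ⟨s₀, hs₀, rfl⟩
  have hfirst : G sstar ^ 2 + Δ sstar ≤ sSup ((fun s => G s ^ 2) '' Icc a b) := by
    rw [hkey]; exact hmain.trans hS1
  -- oscillation bounds
  obtain ⟨smin, hsmin, hsminle⟩ :=
    isCompact_Icc.exists_isMinOn (nonempty_Icc.mpr habl) hg_cont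
  obtain ⟨smax, hsmax, hsmaxle⟩ :=
    isCompact_Icc.exists_isMaxOn (nonempty_Icc.mpr habl) hg_cont
  have hpaircont : ContinuousOn (fun q : ℝ × ℝ => |g q.1 - g q.2|) (Icc a b ×ˢ Icc a b) := by
    apply ContinuousOn.abs
    apply ContinuousOn.sub
    · exact hg_cont.comp continuousOn_fst (fun q hq => hq.1)
    · exact hg_cont.comp continuousOn_snd (fun q hq => hq.2)
  have hωbdd : BddAbove ((fun q : ℝ × ℝ => |g q.1 - g q.2|) '' (Icc a b ×ˢ Icc a b)) :=
    (isCompact_Icc.prod isCompact_Icc).bddAbove_image hpaircont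
  have hωge : ∀ x ∈ Icc a b, ∀ y ∈ Icc a b, |g x - g y| ≤ ω := by
    intro x hx y hy
    rw [hω]
    exact le_csSup hωbdd ⟨(x, y), ⟨hx, hy⟩, rfl⟩
  have hω0 : 0 ≤ ω := by
    have := hωge a haI a haI
    simpa using this
  have hmlow : g smin ≤ m := by
    have hmono : (∫ u in a..b, g smin * p u) ≤ ∫ u in a..b, g u * p u := by
      apply intervalIntegral.integral_mono_on habl ((hpi a haI b hbI).const_mul _)
        (hgpi a haI b hbI)
      intro u hu
      exact mul_le_mul_of_nonneg_right (hsminle hu) (hp_pos u hu).le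
    rw [intervalIntegral.integral_const_mul, hp_one, mul_one] at hmono
    rw [hm, hM]
    exact hmono
  have hmhigh : m ≤ g smax := by
    have hmono : (∫ u in a..b, g u * p u) ≤ ∫ u in a..b, g smax * p u := by
      apply intervalIntegral.integral_mono_on habl (hgpi a haI b hbI)
        ((hpi a haI b hbI).const_mul _)
      intro u hu
      exact mul_le_mul_of_nonneg_right (hsmaxle hu) (hp_pos u hu).le
    rw [intervalIntegral.integral_const_mul, hp_one, mul_one] at hmono
    rw [hm, hM]
    exact hmono
  have hGle : ∀ s ∈ Icc a b, G s ^ 2 ≤ ω ^ 2 := by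
    intro s hs
    have h1 : g s - m ≤ ω := by
      have h := hωge s hs smin hsmin
      have h' := hsminle hs
      have : g s - g smin ≤ |g s - g smin| := le_abs_self _
      linarith
    have h2 : -ω ≤ g s - m := by
      have h := hωge smax hsmax s hs
      have h' := hsmaxle hs
      have : g smax - g s ≤ |g smax - g s| := le_abs_self _
      linarith
    rw [hG]
    exact sq_le_sq' h2 h1
  have hS2 : sSup ((fun s => G s ^ 2) '' Icc a b) ≤ ω ^ 2 := by
    have hne : ((fun s => G s ^ 2) '' Icc a b).Nonempty := ⟨G a ^ 2, a, haI, rfl⟩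
    apply csSup_le hne
    rintro y ⟨s, hs, rfl⟩
    exact hGle s hs
  refine ⟨⟨hfirst, hS2⟩, ?_⟩
  -- smooth case
  intro g' hg' hg'c
  have habs_i : ∀ x ∈ Icc a b, ∀ y ∈ Icc a b,
      IntervalIntegrable (fun s => |g' s|) volume x y :=
    fun x hx y hy => (hg'c.abs.mono (uIcc_subset_Icc hx hy)).intervalIntegrable
  have claim : ∀ x ∈ Icc a b, ∀ y ∈ Icc a b, x ≤ y →
      |g y - g x| ≤ ∫ s in a..b, |g' s| := by
    intro x hx y hy hxy
    have heq : (∫ s in x..y, g' s) = g y - g x := by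
      apply intervalIntegral.integral_eq_sub_of_hasDeriv_right_of_le hxy
        (hg_cont.mono (Icc_subset_Icc hx.1 hy.2))
      · intro t ht
        have htI : t ∈ Icc a b := ⟨(hx.1.trans_lt ht.1).le, (ht.2.trans_le hy.2).le⟩
        have hnt : Icc a b ∈ nhds t := Icc_mem_nhds (hx.1.trans_lt ht.1) (ht.2.trans_le hy.2)
        exact ((hg' t htI).hasDerivAt hnt).hasDerivWithinAt
      · exact (hg'c.mono (uIcc_subset_Icc hx hy)).intervalIntegrable
    have e1 : (∫ s in a..x, |g' s|) + (∫ s in x..y, |g' s|) = ∫ s in a..y, |g' s| :=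
      intervalIntegral.integral_add_adjacent_intervals (habs_i a haI x hx) (habs_i x hx y hy)
    have e2 : (∫ s in a..y, |g' s|) + (∫ s in y..b, |g' s|) = ∫ s in a..b, |g' s| :=
      intervalIntegral.integral_add_adjacent_intervals (habs_i a haI y hy) (habs_i y hy b hbI)
    have n1 : 0 ≤ ∫ s in a..x, |g' s| :=
      intervalIntegral.integral_nonneg hx.1 (fun u _ => abs_nonneg _)
    have n2 : 0 ≤ ∫ s in y..b, |g' s| :=
      intervalIntegral.integral_nonneg hy.2 (fun u _ => abs_nonneg _)
    calc |g y - g x| = |∫ s in x..y, g' s| := by rw [heq]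
      _ ≤ ∫ s in x..y, |g' s| := intervalIntegral.abs_integral_le_integral_abs hxy
      _ ≤ ∫ s in a..b, |g' s| := by linarith
  have hωle : ω ≤ ∫ s in a..b, |g' s| := by
    rw [hω]
    have hne : ((fun q : ℝ × ℝ => |g q.1 - g q.2|) '' (Icc a b ×ˢ Icc a b)).Nonempty :=
      ⟨|g a - g a|, (a, a), ⟨haI, haI⟩, rfl⟩
    apply csSup_le hne
    rintro z ⟨⟨x, y⟩, ⟨hx, hy⟩, rfl⟩
    show |g x - g y| ≤ ∫ s in a..b, |g' s|
    rcases le_total x y with hxy | hxy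
    · rw [abs_sub_comm]
      exact claim x hx y hy hxy
    · exact claim y hy x hx hxy
  calc G sstar ^ 2 + Δ sstar ≤ sSup ((fun s => G s ^ 2) '' Icc a b) := hfirst
    _ ≤ ω ^ 2 := hS2
    _ ≤ (∫ s in a..b, |g' s|) ^ 2 := pow_le_pow_left₀ hω0 hωle 2
end
end

section
/- In the one-dimensional split framework, let s* be a best split with Δ(s*) > 0, and let ω = sup_{s,s' ∈ [a,b]} |g(s) − g(s')| be the oscillation of g on [a,b]. Then 4·P(s*)·(1 − P(s*)) ≥ Δ(s*)/ω², and both P(s*) and 1 − P(s*) lie in the closed interval [(1 − √(1 − Δ(s*)/ω²))/2, (1 + √(1 − Δ(s*)/ω²))/2]. -/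
open MeasureTheory Set

noncomputable section

set_option maxHeartbeats 1000000 in
/-- For a best split `s*` with `Δ(s*) > 0` and `ω` the oscillation of `g`
on `[a,b]`: `4 P(s*)(1 − P(s*)) ≥ Δ(s*)/ω²` and both `P(s*)` and `1 − P(s*)` lie in
`[(1 − √(1 − Δ(s*)/ω²))/2, (1 + √(1 − Δ(s*)/ω²))/2]`. -/
theorem best_split_daughter_probability_bounds
    (a b : ℝ) (hab : a < b)
    (p g : ℝ → ℝ)
    (hp_cont : ContinuousOn p (Set.Icc a b))
    (hp_pos : ∀ u ∈ Set.Icc a b, 0 < p u)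
    (hp_one : (∫ u in a..b, p u) = 1)
    (hg_cont : ContinuousOn g (Set.Icc a b))
    (P M Xi G Δ : ℝ → ℝ)
    (hP : ∀ s, P s = ∫ u in a..s, p u)
    (hM : ∀ s, M s = ∫ u in a..s, g u * p u)
    (hXi : ∀ s, Xi s = M s - M b * P s)
    (hG : ∀ s, G s = g s - M b)
    (hΔ : ∀ s, Δ s = Xi s ^ 2 / (P s * (1 - P s)))
    (sstar : ℝ) (hmem : sstar ∈ Set.Icc a b)
    (hmax : ∀ s ∈ Set.Icc a b, Δ s ≤ Δ sstar)
    (hpos : 0 < Δ sstar)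
    (ω : ℝ) (hω : ω = sSup ((fun q : ℝ × ℝ => |g q.1 - g q.2|) '' (Set.Icc a b ×ˢ Set.Icc a b))) :
    Δ sstar / ω ^ 2 ≤ 4 * P sstar * (1 - P sstar) ∧
    P sstar ∈ Set.Icc ((1 - Real.sqrt (1 - Δ sstar / ω ^ 2)) / 2)
      ((1 + Real.sqrt (1 - Δ sstar / ω ^ 2)) / 2) ∧
    (1 - P sstar) ∈ Set.Icc ((1 - Real.sqrt (1 - Δ sstar / ω ^ 2)) / 2)
      ((1 + Real.sqrt (1 - Δ sstar / ω ^ 2)) / 2) := by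
  obtain ⟨has, hsb⟩ := hmem
  have haI : a ∈ Set.Icc a b := ⟨le_refl a, hab.le⟩
  have hbI : b ∈ Set.Icc a b := ⟨hab.le, le_refl b⟩
  have hsI : sstar ∈ Set.Icc a b := ⟨has, hsb⟩
  -- generic integrability
  have hCI : ∀ (f : ℝ → ℝ), ContinuousOn f (Set.Icc a b) → ∀ {c d : ℝ}, c ∈ Set.Icc a b →
      d ∈ Set.Icc a b → IntervalIntegrable f volume c d := by
    intro f hf c d hc hd
    exact (hf.mono (Set.uIcc_subset_Icc hc hd)).intervalIntegrable
  have hgp_cont : ContinuousOn (fun u => g u * p u) (Set.Icc a b) := hg_cont.mul hp_cont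
  have hGp_cont : ContinuousOn (fun u => (g u - M b) * p u) (Set.Icc a b) :=
    (hg_cont.sub continuousOn_const).mul hp_cont
  have hωp_cont : ContinuousOn (fun u => ω * p u) (Set.Icc a b) := continuousOn_const.mul hp_cont
  have hnωp_cont : ContinuousOn (fun u => -(ω * p u)) (Set.Icc a b) := hωp_cont.neg
  -- ω is an upper bound on oscillation
  have hcomp : IsCompact ((fun q : ℝ × ℝ => |g q.1 - g q.2|) '' (Set.Icc a b ×ˢ Set.Icc a b)) := by
    apply (isCompact_Icc.prod isCompact_Icc).image_of_continuousOn
    exact ((hg_cont.comp continuousOn_fst fun q hq => hq.1).sub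
      (hg_cont.comp continuousOn_snd fun q hq => hq.2)).abs
  have hub : ∀ x ∈ Set.Icc a b, ∀ y ∈ Set.Icc a b, |g x - g y| ≤ ω := by
    intro x hx y hy
    rw [hω]
    exact le_csSup hcomp.bddAbove ⟨(x, y), ⟨hx, hy⟩, rfl⟩
  have hω0 : 0 ≤ ω := le_trans (abs_nonneg _) (hub a haI a haI)
  -- |g u - M b| ≤ ω on [a,b]
  have hgm : ∀ u ∈ Set.Icc a b, |g u - M b| ≤ ω := by
    intro u hu
    have heq : g u - M b = ∫ t in a..b, (g u - g t) * p t := by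
      have h1 : (fun t => (g u - g t) * p t) = fun t => g u * p t - g t * p t := by
        funext t; ring
      rw [hM, h1, intervalIntegral.integral_sub
        (hCI (fun t => g u * p t) (continuousOn_const.mul hp_cont) haI hbI) (hCI _ hgp_cont haI hbI),
        intervalIntegral.integral_const_mul, hp_one, mul_one]
    have hint1 : IntervalIntegrable (fun t => (g u - g t) * p t) volume a b :=
      hCI _ ((continuousOn_const.sub hg_cont).mul hp_cont) haI hbI
    have hint2 : IntervalIntegrable (fun t => ω * p t) volume a b := hCI _ hωp_cont haI hbI
    have hint3 : IntervalIntegrable (fun t => -(ω * p t)) volume a b := hCI _ hnωp_cont haI hbI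
    rw [heq, abs_le]
    constructor
    · have := intervalIntegral.integral_mono_on hab.le hint3 hint1 (fun t ht => by
        have h1 := (abs_le.mp (hub u hu t ht)).1
        have h2 := (hp_pos t ht).le
        nlinarith)
      rw [intervalIntegral.integral_neg, intervalIntegral.integral_const_mul, hp_one,
        mul_one] at this
      linarith
    · have := intervalIntegral.integral_mono_on hab.le hint1 hint2 (fun t ht => by
        have h1 := (abs_le.mp (hub u hu t ht)).2
        have h2 := (hp_pos t ht).le
        nlinarith)
      rw [intervalIntegral.integral_const_mul, hp_one, mul_one] at this
      linarith
  -- Xi as an integral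
  have hXi1 : Xi sstar = ∫ t in a..sstar, (g t - M b) * p t := by
    have h1 : (fun t => (g t - M b) * p t) = fun t => g t * p t - M b * p t := by
      funext t; ring
    rw [hXi, hM, hP, h1, intervalIntegral.integral_sub (hCI _ hgp_cont haI hsI)
      (hCI (fun t => M b * p t) (continuousOn_const.mul hp_cont) haI hsI), intervalIntegral.integral_const_mul]
  -- bound |Xi| ≤ ω * P
  have hXiP : |Xi sstar| ≤ ω * P sstar := by
    have hint1 : IntervalIntegrable (fun t => (g t - M b) * p t) volume a sstar :=
      hCI _ hGp_cont haI hsI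
    have hint2 : IntervalIntegrable (fun t => ω * p t) volume a sstar := hCI _ hωp_cont haI hsI
    have hint3 : IntervalIntegrable (fun t => -(ω * p t)) volume a sstar := hCI _ hnωp_cont haI hsI
    have hωP : ∫ t in a..sstar, ω * p t = ω * P sstar := by
      rw [intervalIntegral.integral_const_mul, hP]
    rw [hXi1, abs_le]
    constructor
    · have := intervalIntegral.integral_mono_on has hint3 hint1 (fun t ht => by
        have hmem' : t ∈ Set.Icc a b := ⟨ht.1, ht.2.trans hsb⟩
        have h1 := (abs_le.mp (hgm t hmem')).1
        have h2 := (hp_pos t hmem').le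
        nlinarith)
      rw [intervalIntegral.integral_neg, hωP] at this
      linarith
    · have := intervalIntegral.integral_mono_on has hint1 hint2 (fun t ht => by
        have hmem' : t ∈ Set.Icc a b := ⟨ht.1, ht.2.trans hsb⟩
        have h1 := (abs_le.mp (hgm t hmem')).2
        have h2 := (hp_pos t hmem').le
        nlinarith)
      rw [hωP] at this
      linarith
  -- bound |Xi| ≤ ω * (1 - P)
  have hQ : ∫ t in sstar..b, p t = 1 - P sstar := by
    have := intervalIntegral.integral_add_adjacent_intervals
      (hCI p hp_cont haI hsI) (hCI p hp_cont hsI hbI)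
    rw [hp_one] at this
    rw [hP]; linarith
  have hXi2 : Xi sstar = -∫ t in sstar..b, (g t - M b) * p t := by
    have htot : ∫ t in a..b, (g t - M b) * p t = 0 := by
      have h1 : (fun t => (g t - M b) * p t) = fun t => g t * p t - M b * p t := by
        funext t; ring
      rw [h1, intervalIntegral.integral_sub (hCI _ hgp_cont haI hbI)
        (hCI (fun t => M b * p t) (continuousOn_const.mul hp_cont) haI hbI),
        intervalIntegral.integral_const_mul, hp_one, ← hM]
      ring
    have := intervalIntegral.integral_add_adjacent_intervals
      (hCI _ hGp_cont haI hsI) (hCI _ hGp_cont hsI hbI)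
    rw [htot] at this
    rw [hXi1]; linarith
  have hXiQ : |Xi sstar| ≤ ω * (1 - P sstar) := by
    have hint1 : IntervalIntegrable (fun t => (g t - M b) * p t) volume sstar b :=
      hCI _ hGp_cont hsI hbI
    have hint2 : IntervalIntegrable (fun t => ω * p t) volume sstar b := hCI _ hωp_cont hsI hbI
    have hint3 : IntervalIntegrable (fun t => -(ω * p t)) volume sstar b := hCI _ hnωp_cont hsI hbI
    have hωQ : ∫ t in sstar..b, ω * p t = ω * (1 - P sstar) := by
      rw [intervalIntegral.integral_const_mul, hQ]
    rw [hXi2, abs_le]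
    constructor
    · have := intervalIntegral.integral_mono_on hsb hint1 hint2 (fun t ht => by
        have hmem' : t ∈ Set.Icc a b := ⟨has.trans ht.1, ht.2⟩
        have h1 := (abs_le.mp (hgm t hmem')).2
        have h2 := (hp_pos t hmem').le
        nlinarith)
      rw [hωQ] at this
      linarith
    · have := intervalIntegral.integral_mono_on hsb hint3 hint1 (fun t ht => by
        have hmem' : t ∈ Set.Icc a b := ⟨has.trans ht.1, ht.2⟩
        have h1 := (abs_le.mp (hgm t hmem')).1
        have h2 := (hp_pos t hmem').le
        nlinarith)
      rw [intervalIntegral.integral_neg, hωQ] at this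
      linarith
  -- positivity facts
  have hD : 0 < P sstar * (1 - P sstar) := by
    by_contra h
    push_neg at h
    rcases lt_or_eq_of_le h with h' | h'
    · have : Δ sstar ≤ 0 := by
        rw [hΔ]
        exact div_nonpos_of_nonneg_of_nonpos (sq_nonneg _) h'.le
      linarith
    · have : Δ sstar = 0 := by rw [hΔ, h', div_zero]
      linarith
  have hP0 : 0 < P sstar := by nlinarith
  have hP1 : P sstar < 1 := by nlinarith
  have hXisq : 0 < Xi sstar ^ 2 := by
    by_contra h
    push_neg at h
    have h0 : Xi sstar ^ 2 = 0 := le_antisymm h (sq_nonneg _)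
    have : Δ sstar = 0 := by rw [hΔ, h0, zero_div]
    linarith
  have hXne : Xi sstar ≠ 0 := by
    intro h; rw [h] at hXisq; simp at hXisq
  have habs : 0 < |Xi sstar| := abs_pos.mpr hXne
  have hωpos : 0 < ω := by nlinarith
  have hsq1 : Xi sstar ^ 2 ≤ (ω * P sstar) ^ 2 := by
    have := sq_abs (Xi sstar)
    nlinarith
  have hsq2 : Xi sstar ^ 2 ≤ (ω * (1 - P sstar)) ^ 2 := by
    have := sq_abs (Xi sstar)
    nlinarith
  -- key: Xi² ≤ 4 ω² P² (1-P)²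
  have hkey : Xi sstar ^ 2 ≤ 4 * ω ^ 2 * (P sstar * (1 - P sstar)) ^ 2 := by
    rcases le_total (P sstar) (1 / 2) with h | h
    · have hfac : 0 ≤ ω ^ 2 * P sstar ^ 2 * ((2 * (1 - P sstar) - 1) * (2 * (1 - P sstar) + 1)) :=
        mul_nonneg (mul_nonneg (sq_nonneg _) (sq_nonneg _))
          (mul_nonneg (by linarith) (by linarith))
      nlinarith [hsq1, hfac]
    · have hfac : 0 ≤ ω ^ 2 * (1 - P sstar) ^ 2 * ((2 * P sstar - 1) * (2 * P sstar + 1)) :=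
        mul_nonneg (mul_nonneg (sq_nonneg _) (sq_nonneg _))
          (mul_nonneg (by linarith) (by linarith))
      nlinarith [hsq2, hfac]
  -- first conclusion
  have hfirst : Δ sstar / ω ^ 2 ≤ 4 * P sstar * (1 - P sstar) := by
    rw [hΔ, div_div, div_le_iff₀ (by positivity)]
    refine le_trans hkey (le_of_eq (by ring))
  have hδpos : 0 < Δ sstar / ω ^ 2 := div_pos hpos (by positivity)
  have h4 : 4 * P sstar * (1 - P sstar) ≤ 1 := by nlinarith [sq_nonneg (2 * P sstar - 1)]
  have h1δ : 0 ≤ 1 - Δ sstar / ω ^ 2 := by linarith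
  have ht0 : 0 ≤ Real.sqrt (1 - Δ sstar / ω ^ 2) := Real.sqrt_nonneg _
  have htsq : Real.sqrt (1 - Δ sstar / ω ^ 2) ^ 2 = 1 - Δ sstar / ω ^ 2 := Real.sq_sqrt h1δ
  have hsq : (2 * P sstar - 1) ^ 2 ≤ Real.sqrt (1 - Δ sstar / ω ^ 2) ^ 2 := by
    rw [htsq]; nlinarith [hfirst]
  have habs2 : |2 * P sstar - 1| ≤ Real.sqrt (1 - Δ sstar / ω ^ 2) := by
    nlinarith [sq_abs (2 * P sstar - 1), abs_nonneg (2 * P sstar - 1), hsq, ht0]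
  obtain ⟨hl, hr⟩ := abs_le.mp habs2
  exact ⟨hfirst, ⟨by linarith, by linarith⟩, ⟨by linarith, by linarith⟩⟩
end
end

section
/- In the one-dimensional split framework, suppose in addition that p and g are continuously differentiable on [a,b], and let s* be a best split with Δ(s*) > 0. Then Ḡ(s*)² + Δ(s*) ≤ (|g′(s*)| / p(s*)) · √(P(s*)·(1 − P(s*))·Δ(s*)). -/
open MeasureTheory Set

noncomputable section

open Filter Topology

lemma second_deriv_test_min (f f₁ : ℝ → ℝ) (x c : ℝ)
    (hmin : IsLocalMin f x)
    (hf : ∀ᶠ y in 𝓝 x, HasDerivAt f (f₁ y) y)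
    (hf₁ : HasDerivAt f₁ c x) : 0 ≤ c := by
  by_contra hc
  push_neg at hc
  have hfx : HasDerivAt f (f₁ x) x := hf.self_of_nhds
  have h0 : f₁ x = 0 := by
    have h := hmin.deriv_eq_zero
    rwa [hfx.deriv] at h
  have hs : Tendsto (fun y => f₁ y / (y - x)) (𝓝[>] x) (𝓝 c) := by
    have h1 := hasDerivAt_iff_tendsto_slope.mp hf₁
    have h2 := h1.mono_left (nhdsWithin_mono x (fun y (hy : x < y) => hy.ne'))
    refine h2.congr (fun y => ?_)
    simp [slope_def_field, h0]
  have h2 : ∀ᶠ y in 𝓝[>] x, f₁ y < 0 := by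
    have hev : ∀ᶠ y in 𝓝[>] x, f₁ y / (y - x) < 0 :=
      hs.eventually ((tendsto_id.eventually_lt_const hc : _))
    filter_upwards [hev, self_mem_nhdsWithin] with y hy hy'
    rcases div_neg_iff.mp hy with ⟨h3, h4⟩ | ⟨h3, h4⟩
    · exfalso; simp only [mem_Ioi] at hy'; linarith
    · exact h3
  have hE : ∀ᶠ y in 𝓝[>] x, f₁ y < 0 ∧ HasDerivAt f (f₁ y) y ∧ f x ≤ f y := by
    filter_upwards [h2, (hf.filter_mono nhdsWithin_le_nhds),
      ((hmin : ∀ᶠ y in 𝓝 x, f x ≤ f y).filter_mono nhdsWithin_le_nhds)] with y a b c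
    exact ⟨a, b, c⟩
  rcases mem_nhdsGT_iff_exists_Ioc_subset.mp hE with ⟨u, hu, hsub⟩
  simp only [mem_Ioi] at hu
  have hcont : ContinuousOn f (Icc x u) := by
    intro y hy
    rcases eq_or_lt_of_le hy.1 with rfl | hxy
    · exact hfx.continuousAt.continuousWithinAt
    · exact ((hsub ⟨hxy, hy.2⟩).2.1).continuousAt.continuousWithinAt
  have hanti : StrictAntiOn f (Icc x u) := by
    refine strictAntiOn_of_deriv_neg (convex_Icc x u) hcont (fun y hy => ?_)
    rw [interior_Icc] at hy
    have h := hsub ⟨hy.1, hy.2.le⟩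
    rw [h.2.1.deriv]
    exact h.1
  have hlt : f u < f x :=
    hanti (left_mem_Icc.mpr hu.le) (right_mem_Icc.mpr hu.le) hu
  have := (hsub ⟨hu, le_refl u⟩).2.2
  linarith

/-- If `p` and `g` are `C¹` on `[a,b]` and `s*` is a best split with
`Δ(s*) > 0`, then `Ḡ(s*)² + Δ(s*) ≤ (|g′(s*)|/p(s*))·√(P(s*)(1 − P(s*))Δ(s*))`. -/
theorem best_split_second_order_bound
    (a b : ℝ) (hab : a < b)
    (p g : ℝ → ℝ)
    (hp_cont : ContinuousOn p (Set.Icc a b))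
    (hp_pos : ∀ u ∈ Set.Icc a b, 0 < p u)
    (hp_one : (∫ u in a..b, p u) = 1)
    (hg_cont : ContinuousOn g (Set.Icc a b))
    (p' g' : ℝ → ℝ)
    (hp' : ∀ s ∈ Set.Icc a b, HasDerivWithinAt p (p' s) (Set.Icc a b) s)
    (hp'_cont : ContinuousOn p' (Set.Icc a b))
    (hg' : ∀ s ∈ Set.Icc a b, HasDerivWithinAt g (g' s) (Set.Icc a b) s)
    (hg'_cont : ContinuousOn g' (Set.Icc a b))
    (P M Xi G Δ : ℝ → ℝ)
    (hP : ∀ s, P s = ∫ u in a..s, p u)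
    (hM : ∀ s, M s = ∫ u in a..s, g u * p u)
    (hXi : ∀ s, Xi s = M s - M b * P s)
    (hG : ∀ s, G s = g s - M b)
    (hΔ : ∀ s, Δ s = Xi s ^ 2 / (P s * (1 - P s)))
    (sstar : ℝ) (hmem : sstar ∈ Set.Icc a b)
    (hmax : ∀ s ∈ Set.Icc a b, Δ s ≤ Δ sstar)
    (hpos : 0 < Δ sstar) :
    G sstar ^ 2 + Δ sstar ≤
      |g' sstar| / p sstar * Real.sqrt (P sstar * (1 - P sstar) * Δ sstar) := by
  -- abbreviations
  set m : ℝ := M b with hm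
  set D : ℝ := Δ sstar with hD
  -- integrability of p and g*p on subintervals
  have hpi : ∀ s ∈ Icc a b, IntervalIntegrable p volume a s := by
    intro s hs
    refine (hp_cont.mono ?_).intervalIntegrable
    rw [uIcc_of_le hs.1]
    exact Icc_subset_Icc le_rfl hs.2
  have hgp_cont : ContinuousOn (fun u => g u * p u) (Icc a b) := hg_cont.mul hp_cont
  have hgpi : ∀ s ∈ Icc a b, IntervalIntegrable (fun u => g u * p u) volume a s := by
    intro s hs
    refine (hgp_cont.mono ?_).intervalIntegrable
    rw [uIcc_of_le hs.1]
    exact Icc_subset_Icc le_rfl hs.2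
  have hPa : P a = 0 := by rw [hP, intervalIntegral.integral_same]
  have hPb : P b = 1 := by rw [hP, hp_one]
  -- positivity of P(1-P) on the open interval
  have hppos : ∀ s ∈ Ioo a b, 0 < P s ∧ P s < 1 := by
    intro s hs
    have hsI : s ∈ Icc a b := Ioo_subset_Icc_self hs
    have h1 : 0 < ∫ u in a..s, p u := by
      refine intervalIntegral.intervalIntegral_pos_of_pos_on (hpi s hsI) ?_ hs.1
      intro x hx
      exact hp_pos x ⟨hx.1.le, hx.2.le.trans hsI.2⟩
    have hint2 : IntervalIntegrable p volume s b := by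
      refine (hp_cont.mono ?_).intervalIntegrable
      rw [uIcc_of_le hsI.2]
      exact Icc_subset_Icc hsI.1 le_rfl
    have h2 : 0 < ∫ u in s..b, p u := by
      refine intervalIntegral.intervalIntegral_pos_of_pos_on hint2 ?_ hs.2
      intro x hx
      exact hp_pos x ⟨hsI.1.trans hx.1.le, hx.2.le⟩
    have hadd : (∫ u in a..s, p u) + (∫ u in s..b, p u) = 1 := by
      rw [intervalIntegral.integral_add_adjacent_intervals (hpi s hsI) hint2, hp_one]
    constructor
    · rw [hP]; exact h1
    · rw [hP]; linarith
  -- sstar is interior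
  have hQs : 0 < P sstar * (1 - P sstar) := by
    by_contra h
    push_neg at h
    have : Δ sstar ≤ 0 := by
      rw [hΔ]
      exact div_nonpos_of_nonneg_of_nonpos (sq_nonneg _) h
    linarith
  have hs : sstar ∈ Ioo a b := by
    rcases eq_or_lt_of_le hmem.1 with rfl | h1
    · rw [hPa] at hQs; simp at hQs
    rcases eq_or_lt_of_le hmem.2 with rfl | h2
    · rw [hPb] at hQs; simp at hQs
    exact ⟨h1, h2⟩
  -- derivatives of P, M, Xi on Ioo a b
  have hPd : ∀ s ∈ Ioo a b, HasDerivAt P (p s) s := by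
    intro s hsI
    have hfun : P = fun u => ∫ x in a..u, p x := funext hP
    rw [hfun]
    refine intervalIntegral.integral_hasDerivAt_right (hpi s (Ioo_subset_Icc_self hsI)) ?_ ?_
    · exact ContinuousOn.stronglyMeasurableAtFilter isOpen_Ioo
        (hp_cont.mono Ioo_subset_Icc_self) s hsI
    · exact (hp_cont s (Ioo_subset_Icc_self hsI)).continuousAt (Icc_mem_nhds hsI.1 hsI.2)
  have hMd : ∀ s ∈ Ioo a b, HasDerivAt M (g s * p s) s := by
    intro s hsI
    have hfun : M = fun u => ∫ x in a..u, g x * p x := funext hM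
    rw [hfun]
    refine intervalIntegral.integral_hasDerivAt_right (hgpi s (Ioo_subset_Icc_self hsI)) ?_ ?_
    · exact ContinuousOn.stronglyMeasurableAtFilter isOpen_Ioo
        (hgp_cont.mono Ioo_subset_Icc_self) s hsI
    · exact (hgp_cont s (Ioo_subset_Icc_self hsI)).continuousAt (Icc_mem_nhds hsI.1 hsI.2)
  have hXid : ∀ s ∈ Ioo a b, HasDerivAt Xi ((g s - m) * p s) s := by
    intro s hsI
    have hfun : Xi = fun u => M u - m * P u := funext (fun u => by rw [hXi u, hm])
    rw [hfun]
    have := (hMd s hsI).sub ((hPd s hsI).const_mul m)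
    exact this.congr_deriv (by ring)
  -- the auxiliary function φ and its derivative φ₁
  set φ : ℝ → ℝ := fun s => D * (P s * (1 - P s)) - Xi s ^ 2 with hφ
  set φ₁ : ℝ → ℝ := fun s => D * (p s * (1 - 2 * P s)) - 2 * Xi s * ((g s - m) * p s) with hφ₁
  have hφd : ∀ s ∈ Ioo a b, HasDerivAt φ (φ₁ s) s := by
    intro s hsI
    have h1 := hPd s hsI
    have h2 := hXid s hsI
    have h3 := ((h1.mul ((hasDerivAt_const s (1 : ℝ)).sub h1)).const_mul D).sub (h2.pow 2)
    exact h3.congr_deriv (by simp only [hφ₁, Pi.sub_apply]; ring)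
  -- sstar is a local min of φ
  have hXisq : ∀ s ∈ Ioo a b, Xi s ^ 2 = Δ s * (P s * (1 - P s)) := by
    intro s hsI
    have hq := hppos s hsI
    have hqne : P s * (1 - P s) ≠ 0 := ne_of_gt (mul_pos hq.1 (by linarith [hq.2]))
    rw [hΔ, div_mul_cancel₀ _ hqne]
  have hmin : IsLocalMin φ sstar := by
    have h0 : φ sstar = 0 := by
      have hqne : P sstar * (1 - P sstar) ≠ 0 := ne_of_gt hQs
      simp only [hφ, hD, hΔ]
      field_simp
      rw [div_self hqne, sub_self, mul_zero]
    have : ∀ᶠ y in 𝓝 sstar, φ sstar ≤ φ y := by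
      filter_upwards [isOpen_Ioo.mem_nhds hs] with y hy
      rw [h0, hφ]
      simp only
      have h1 := hXisq y hy
      have h2 := (hppos y hy)
      have h3 : 0 < P y * (1 - P y) := by nlinarith [h2.1, h2.2]
      nlinarith [hmax y (Ioo_subset_Icc_self hy), h1, h3]
    exact this
  -- derivatives of p and g at sstar
  have hpd : HasDerivAt p (p' sstar) sstar :=
    (hp' sstar hmem).hasDerivAt (Icc_mem_nhds hs.1 hs.2)
  have hgd : HasDerivAt g (g' sstar) sstar :=
    (hg' sstar hmem).hasDerivAt (Icc_mem_nhds hs.1 hs.2)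
  -- second derivative of φ at sstar
  set c : ℝ := D * (p' sstar * (1 - 2 * P sstar) + p sstar * (-(2 * p sstar)))
      - (2 * ((g sstar - m) * p sstar) * ((g sstar - m) * p sstar)
        + 2 * Xi sstar * (g' sstar * p sstar + (g sstar - m) * p' sstar)) with hc_def
  have hφ₁d : HasDerivAt φ₁ c sstar := by
    have h1 := hPd sstar hs
    have h2 := hXid sstar hs
    have h3 := ((hpd.mul ((hasDerivAt_const sstar (1 : ℝ)).sub (h1.const_mul 2))).const_mul D).sub
      (((h2.const_mul 2).mul ((hgd.sub_const m).mul hpd)))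
    exact h3.congr_deriv (by rw [hc_def]; simp only [Pi.sub_apply, Pi.mul_apply]; ring)
  have hc : 0 ≤ c := by
    refine second_deriv_test_min φ φ₁ sstar c hmin ?_ hφ₁d
    filter_upwards [isOpen_Ioo.mem_nhds hs] with y hy
    exact hφd y hy
  -- first-order condition
  have hfo : φ₁ sstar = 0 := by
    have h := hmin.deriv_eq_zero
    rwa [(hφd sstar hs).deriv] at h
  have hp0 : 0 < p sstar := hp_pos sstar hmem
  have hfo' : D * (1 - 2 * P sstar) = 2 * Xi sstar * (g sstar - m) := by
    simp only [hφ₁] at hfo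
    have : (D * (1 - 2 * P sstar) - 2 * Xi sstar * (g sstar - m)) * p sstar = 0 := by
      ring_nf
      ring_nf at hfo
      linarith
    rcases mul_eq_zero.mp this with h | h
    · linarith
    · exact absurd h (ne_of_gt hp0)
  -- combine: ((g - m)^2 + D) * p^2 + Xi * g' * p ≤ 0
  have step1 : ((g sstar - m) ^ 2 + D) * p sstar ^ 2 + Xi sstar * g' sstar * p sstar ≤ 0 := by
    have h5 : D * (1 - 2 * P sstar) * p' sstar = 2 * Xi sstar * (g sstar - m) * p' sstar := by
      rw [hfo']
    nlinarith [hc, h5]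
  have step2 : ((g sstar - m) ^ 2 + D) * p sstar + Xi sstar * g' sstar ≤ 0 := by
    nlinarith [step1, hp0]
  -- conclude
  have hXisq' : Xi sstar ^ 2 = P sstar * (1 - P sstar) * D := by
    have h := hXisq sstar hs
    rw [h, hD]; ring
  have habs : |Xi sstar| = Real.sqrt (P sstar * (1 - P sstar) * D) := by
    rw [← hXisq', Real.sqrt_sq_eq_abs]
  have hmain : G sstar ^ 2 + D ≤ (-(Xi sstar * g' sstar)) / p sstar := by
    rw [hG, le_div_iff₀ hp0]
    nlinarith [step2]
  refine hmain.trans ?_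
  rw [div_le_iff₀ hp0] at *
  have h6 : -(Xi sstar * g' sstar) ≤ |Xi sstar| * |g' sstar| := by
    rw [← abs_mul]
    exact neg_le_abs _
  calc -(Xi sstar * g' sstar) ≤ |Xi sstar| * |g' sstar| := h6
    _ = |g' sstar| * Real.sqrt (P sstar * (1 - P sstar) * D) := by rw [habs]; ring
    _ ≤ |g' sstar| / p sstar * Real.sqrt (P sstar * (1 - P sstar) * Δ sstar) * p sstar := by
        rw [← hD]; field_simp; exact le_rfl
end
end

section
/- In the one-dimensional split framework, suppose in addition that p and g are continuously differentiable on [a,b], and let s* be a best split with Δ(s*) > 0. Then g′(s*) ≠ 0, 4·P(s*)·(1 − P(s*)) ≥ (4·p(s*)²·Δ(s*) / g′(s*)²)^{1/3}, and both P(s*) and 1 − P(s*) lie in the closed interval [(1 − √(1 − (4·p(s*)²·Δ(s*)/g′(s*)²)^{1/3}))/2, (1 + √(1 − (4·p(s*)²·Δ(s*)/g′(s*)²)^{1/3}))/2]. -/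
open MeasureTheory Set Filter

set_option maxHeartbeats 1000000

noncomputable section

lemma second_deriv_nonpos_of_max {f f' : ℝ → ℝ} {s c L : ℝ}
    (hsc : s < c)
    (hf : ∀ x ∈ Icc s c, HasDerivAt f (f' x) x)
    (hf's : f' s = 0)
    (hL : HasDerivAt f' L s)
    (hmax : ∀ x ∈ Icc s c, f x ≤ f s) : L ≤ 0 := by
  by_contra hLpos
  push_neg at hLpos
  have hslope := hasDerivAt_iff_tendsto_slope.mp hL
  have hev : ∀ᶠ x in nhdsWithin s {s}ᶜ, 0 < slope f' s x :=
    hslope.eventually (eventually_gt_nhds hLpos)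
  have hev' : ∀ᶠ x in nhdsWithin s (Ioi s), 0 < slope f' s x :=
    hev.filter_mono (nhdsWithin_mono s (fun x hx => ne_of_gt hx))
  obtain ⟨u, hu, hsub⟩ := mem_nhdsGT_iff_exists_Ioo_subset.mp hev'
  set t := min ((s + u) / 2) ((s + c) / 2) with ht
  have hst : s < t := by
    simp only [ht, lt_min_iff]; constructor <;> linarith [hu.out]
  have htu : t < u := by
    have h1 : (s + u) / 2 < u := by linarith [hu.out]
    calc t ≤ (s + u) / 2 := min_le_left _ _
      _ < u := h1
  have htc : t ≤ c := by
    have h1 : (s + c) / 2 < c := by linarith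
    calc t ≤ (s + c) / 2 := min_le_right _ _
      _ ≤ c := le_of_lt h1
  have hpos : ∀ x ∈ Ioo s t, 0 < f' x := by
    intro x hx
    have hsl : 0 < slope f' s x := hsub ⟨hx.1, lt_trans hx.2 htu⟩
    rw [slope_def_field, hf's, sub_zero] at hsl
    have hxs : 0 < x - s := by linarith [hx.1]
    have h2 := mul_pos hsl hxs
    rwa [div_mul_cancel₀] at h2
    exact ne_of_gt hxs
  have hmono : StrictMonoOn f (Icc s t) := by
    apply strictMonoOn_of_deriv_pos (convex_Icc s t)
    · exact fun x hx =>
        ((hf x ⟨hx.1, le_trans hx.2 htc⟩).differentiableAt).continuousAt.continuousWithinAt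
    · intro x hx
      rw [interior_Icc] at hx
      rw [(hf x ⟨le_of_lt hx.1, le_trans (le_of_lt hx.2) htc⟩).deriv]
      exact hpos x hx
  have h3 := hmono (left_mem_Icc.mpr (le_of_lt hst)) (right_mem_Icc.mpr (le_of_lt hst)) hst
  have h4 := hmax t ⟨le_of_lt hst, htc⟩
  linarith

/-- If `p` and `g` are `C¹` on `[a,b]` and `s*` is a best split with
`Δ(s*) > 0`, then `g′(s*) ≠ 0`, `4 P(s*)(1 − P(s*)) ≥ (4 p(s*)² Δ(s*)/g′(s*)²)^{1/3}`, and
both `P(s*)` and `1 − P(s*)` lie in the corresponding closed interval. -/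
theorem best_split_cube_root_bound
    (a b : ℝ) (hab : a < b)
    (p g : ℝ → ℝ)
    (hp_cont : ContinuousOn p (Set.Icc a b))
    (hp_pos : ∀ u ∈ Set.Icc a b, 0 < p u)
    (hp_one : (∫ u in a..b, p u) = 1)
    (hg_cont : ContinuousOn g (Set.Icc a b))
    (p' g' : ℝ → ℝ)
    (hp' : ∀ s ∈ Set.Icc a b, HasDerivWithinAt p (p' s) (Set.Icc a b) s)
    (hp'_cont : ContinuousOn p' (Set.Icc a b))
    (hg' : ∀ s ∈ Set.Icc a b, HasDerivWithinAt g (g' s) (Set.Icc a b) s)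
    (hg'_cont : ContinuousOn g' (Set.Icc a b))
    (P M Xi G Δ : ℝ → ℝ)
    (hP : ∀ s, P s = ∫ u in a..s, p u)
    (hM : ∀ s, M s = ∫ u in a..s, g u * p u)
    (hXi : ∀ s, Xi s = M s - M b * P s)
    (hG : ∀ s, G s = g s - M b)
    (hΔ : ∀ s, Δ s = Xi s ^ 2 / (P s * (1 - P s)))
    (sstar : ℝ) (hmem : sstar ∈ Set.Icc a b)
    (hmax : ∀ s ∈ Set.Icc a b, Δ s ≤ Δ sstar)
    (hpos : 0 < Δ sstar)
    (r : ℝ) (hr : r = (4 * p sstar ^ 2 * Δ sstar / g' sstar ^ 2) ^ ((1 : ℝ) / 3)) :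
    g' sstar ≠ 0 ∧
    r ≤ 4 * P sstar * (1 - P sstar) ∧
    P sstar ∈ Set.Icc ((1 - Real.sqrt (1 - r)) / 2) ((1 + Real.sqrt (1 - r)) / 2) ∧
    (1 - P sstar) ∈ Set.Icc ((1 - Real.sqrt (1 - r)) / 2) ((1 + Real.sqrt (1 - r)) / 2) := by
  -- basic integrability
  have hgp_cont : ContinuousOn (fun u => g u * p u) (Set.Icc a b) := hg_cont.mul hp_cont
  have hpInt : ∀ s ∈ Icc a b, IntervalIntegrable p volume a s := fun s hs =>
    (hp_cont.mono (by rw [Set.uIcc_of_le hs.1]; exact Icc_subset_Icc le_rfl hs.2)).intervalIntegrable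
  have hpInt' : ∀ s ∈ Icc a b, IntervalIntegrable p volume s b := fun s hs =>
    (hp_cont.mono (by rw [Set.uIcc_of_le hs.2]; exact Icc_subset_Icc hs.1 le_rfl)).intervalIntegrable
  have hgpInt : ∀ s ∈ Icc a b, IntervalIntegrable (fun u => g u * p u) volume a s := fun s hs =>
    (hgp_cont.mono (by rw [Set.uIcc_of_le hs.1]; exact Icc_subset_Icc le_rfl hs.2)).intervalIntegrable
  -- values of P at endpoints
  have hPa : P a = 0 := by rw [hP]; exact intervalIntegral.integral_same
  have hPb : P b = 1 := by rw [hP]; exact hp_one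
  -- P is strictly between 0 and 1 on the interior
  have hP01 : ∀ s ∈ Ioo a b, 0 < P s ∧ P s < 1 := by
    intro s hs
    have hsI : s ∈ Icc a b := ⟨hs.1.le, hs.2.le⟩
    constructor
    · rw [hP]
      exact intervalIntegral.intervalIntegral_pos_of_pos_on (hpInt s hsI)
        (fun x hx => hp_pos x ⟨hx.1.le, hx.2.le.trans hs.2.le⟩) hs.1
    · have hsplit : P s + ∫ u in s..b, p u = 1 := by
        rw [hP, ← hp_one]
        exact intervalIntegral.integral_add_adjacent_intervals (hpInt s hsI) (hpInt' s hsI)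
      have hp2 : 0 < ∫ u in s..b, p u :=
        intervalIntegral.intervalIntegral_pos_of_pos_on (hpInt' s hsI)
          (fun x hx => hp_pos x ⟨hs.1.le.trans hx.1.le, hx.2.le⟩) hs.2
      linarith
  -- s* is interior
  have hsa : a < sstar := by
    rcases hmem.1.lt_or_eq with h | h
    · exact h
    · exfalso
      have h0 : Δ sstar = 0 := by rw [hΔ sstar, ← h, hPa]; simp
      linarith
  have hsb : sstar < b := by
    rcases hmem.2.lt_or_eq with h | h
    · exact h
    · exfalso
      have h0 : Δ sstar = 0 := by rw [hΔ sstar, h, hPb]; simp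
      linarith
  have hsIoo : sstar ∈ Ioo a b := ⟨hsa, hsb⟩
  have hIcc_nhds : Icc a b ∈ nhds sstar := Icc_mem_nhds hsa hsb
  -- derivatives of P and M on the interior
  have hPfun : P = fun s => ∫ u in a..s, p u := funext hP
  have hMfun : M = fun s => ∫ u in a..s, g u * p u := funext hM
  have hXifun : Xi = fun s => M s - M b * P s := funext hXi
  have hPd : ∀ s ∈ Ioo a b, HasDerivAt P (p s) s := by
    intro s hs
    have h1 := hpInt s ⟨hs.1.le, hs.2.le⟩
    have h2 : StronglyMeasurableAtFilter p (nhds s) volume :=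
      ContinuousAt.stronglyMeasurableAtFilter isOpen_Ioo
        (fun x hx => hp_cont.continuousAt (Icc_mem_nhds hx.1 hx.2)) s hs
    have h3 : ContinuousAt p s := hp_cont.continuousAt (Icc_mem_nhds hs.1 hs.2)
    rw [hPfun]
    exact intervalIntegral.integral_hasDerivAt_right h1 h2 h3
  have hMd : ∀ s ∈ Ioo a b, HasDerivAt M (g s * p s) s := by
    intro s hs
    have h1 := hgpInt s ⟨hs.1.le, hs.2.le⟩
    have h2 : StronglyMeasurableAtFilter (fun u => g u * p u) (nhds s) volume :=
      ContinuousAt.stronglyMeasurableAtFilter isOpen_Ioo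
        (fun x hx => hgp_cont.continuousAt (Icc_mem_nhds hx.1 hx.2)) s hs
    have h3 : ContinuousAt (fun u => g u * p u) s := hgp_cont.continuousAt (Icc_mem_nhds hs.1 hs.2)
    rw [hMfun]
    exact intervalIntegral.integral_hasDerivAt_right h1 h2 h3
  -- auxiliary functions
  set ξf : ℝ → ℝ := fun s => g s * p s - M b * p s with hξf
  set Qf : ℝ → ℝ := fun s => P s * (1 - P s) with hQf
  set Q'f : ℝ → ℝ := fun s => p s * (1 - P s) - P s * p s with hQ'f
  set Nf : ℝ → ℝ := fun s => 2 * Xi s * ξf s * Qf s - Xi s ^ 2 * Q'f s with hNf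
  set D1 : ℝ → ℝ := fun s => Nf s / Qf s ^ 2 with hD1
  have hΔfun : Δ = fun u => Xi u ^ 2 / Qf u := funext (fun u => hΔ u)
  have hQpos : ∀ s ∈ Ioo a b, 0 < Qf s := by
    intro s hs
    obtain ⟨h1, h2⟩ := hP01 s hs
    rw [hQf]
    exact mul_pos h1 (by linarith)
  have hXid : ∀ s ∈ Ioo a b, HasDerivAt Xi (ξf s) s := by
    intro s hs
    have h1 := (hMd s hs).sub ((hPd s hs).const_mul (M b))
    rw [hXifun]
    exact h1
  have hQd : ∀ s ∈ Ioo a b, HasDerivAt Qf (Q'f s) s := by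
    intro s hs
    have h1 := (hPd s hs).mul ((hasDerivAt_const s (1 : ℝ)).sub (hPd s hs))
    have h2 : p s * (1 - P s) + P s * (0 - p s) = Q'f s := by rw [hQ'f]; ring
    rw [hQf]
    exact h2 ▸ h1
  have hΔd : ∀ s ∈ Ioo a b, HasDerivAt Δ (D1 s) s := by
    intro s hs
    have hQne : Qf s ≠ 0 := ne_of_gt (hQpos s hs)
    have hXi2 : HasDerivAt (fun u => Xi u ^ 2) (2 * Xi s * ξf s) s := by
      have h1 := (hXid s hs).pow 2
      have h2 : ((2 : ℕ) : ℝ) * Xi s ^ (2 - 1) * ξf s = 2 * Xi s * ξf s := by push_cast; ring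
      exact h2 ▸ h1
    have h3 := hXi2.div (hQd s hs) hQne
    have h4 : (2 * Xi s * ξf s * Qf s - Xi s ^ 2 * Q'f s) / Qf s ^ 2 = D1 s := by
      rw [hD1, hNf]
    rw [hΔfun]
    exact h4 ▸ h3
  -- first-order condition
  have hloc : IsLocalMax Δ sstar := Filter.eventually_of_mem hIcc_nhds hmax
  have hD1z : D1 sstar = 0 := hloc.hasDerivAt_eq_zero (hΔd sstar hsIoo)
  have hQs : 0 < Qf sstar := hQpos sstar hsIoo
  have hQsne : Qf sstar ≠ 0 := ne_of_gt hQs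
  have hNs0 : Nf sstar = 0 := by
    rw [hD1] at hD1z
    simp only at hD1z
    rcases div_eq_zero_iff.mp hD1z with h | h
    · exact h
    · exact absurd h (pow_ne_zero 2 hQsne)
  -- second derivative at s*
  have hpd : HasDerivAt p (p' sstar) sstar := (hp' sstar hmem).hasDerivAt hIcc_nhds
  have hgd : HasDerivAt g (g' sstar) sstar := (hg' sstar hmem).hasDerivAt hIcc_nhds
  have hPds := hPd sstar hsIoo
  have hXids := hXid sstar hsIoo
  have hQds := hQd sstar hsIoo
  have hξfd : HasDerivAt ξf (g' sstar * p sstar + g sstar * p' sstar - M b * p' sstar) sstar := by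
    have h1 := (hgd.mul hpd).sub (hpd.const_mul (M b))
    have h2 : g' sstar * p sstar + g sstar * p' sstar - M b * p' sstar =
        (g' sstar * p sstar + g sstar * p' sstar) - M b * p' sstar := by ring
    rw [hξf]
    exact h2 ▸ h1
  have hQ'fd : HasDerivAt Q'f
      (p' sstar * (1 - P sstar) - 2 * p sstar ^ 2 - P sstar * p' sstar + P sstar * p sstar * 0) sstar := by
    have h1 := (hpd.mul ((hasDerivAt_const sstar (1 : ℝ)).sub hPds)).sub (hPds.mul hpd)
    have h2 : p' sstar * (1 - P sstar) + p sstar * (0 - p sstar) -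
        (p sstar * p sstar + P sstar * p' sstar) =
        p' sstar * (1 - P sstar) - 2 * p sstar ^ 2 - P sstar * p' sstar + P sstar * p sstar * 0 := by
      ring
    rw [hQ'f]
    exact h2 ▸ h1
  obtain ⟨Nd, hNder, hNdeq⟩ :
      ∃ Nd, HasDerivAt Nf Nd sstar ∧ Nd =
        2 * (g sstar * p sstar - M b * p sstar) ^ 2 * (P sstar * (1 - P sstar)) +
        2 * Xi sstar * (g' sstar * p sstar + (g sstar - M b) * p' sstar) * (P sstar * (1 - P sstar)) +
        2 * Xi sstar * (g sstar * p sstar - M b * p sstar) * (p sstar * (1 - P sstar) - P sstar * p sstar) -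
        (2 * Xi sstar * (g sstar * p sstar - M b * p sstar) * (p sstar * (1 - P sstar) - P sstar * p sstar) +
          Xi sstar ^ 2 * (p' sstar * (1 - 2 * P sstar) - 2 * p sstar ^ 2)) := by
    have hch := (((hXids.const_mul 2).mul hξfd).mul hQds).sub ((hXids.pow 2).mul hQ'fd)
    exact ⟨_, hch, by simp only [hξf, hQf, hQ'f, Pi.pow_apply, Pi.mul_apply, Pi.sub_apply]; push_cast; ring⟩
  obtain ⟨L, hLder, hLeq⟩ : ∃ L, HasDerivAt D1 L sstar ∧ L = Nd / Qf sstar ^ 2 := by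
    have hch := hNder.div (hQds.pow 2) (pow_ne_zero 2 hQsne)
    exact ⟨_, hch, by rw [hNs0]; field_simp; simp only [Pi.pow_apply]; ring⟩
  -- second-order condition
  have hc1 : sstar < (sstar + b) / 2 := by linarith
  have hc2 : (sstar + b) / 2 < b := by linarith
  have hL_le : L ≤ 0 := by
    apply second_deriv_nonpos_of_max hc1 _ hD1z hLder
    · intro x hx
      exact hmax x ⟨hmem.1.trans hx.1, hx.2.trans hc2.le⟩
    · intro x hx
      exact hΔd x ⟨lt_of_lt_of_le hsa hx.1, lt_of_le_of_lt hx.2 hc2⟩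
  have hNd_le : Nd ≤ 0 := by
    rw [hLeq] at hL_le
    rcases div_nonpos_iff.mp hL_le with ⟨h1, h2⟩ | ⟨h1, h2⟩
    · nlinarith [pow_pos hQs 2]
    · exact h1
  -- scalar abbreviations
  set Pv := P sstar with hPv
  set pv := p sstar with hpvdef
  set pvd := p' sstar with hpvd
  set gs := g sstar with hgs0
  set gvd := g' sstar with hgvd
  set ξ := Xi sstar with hξdef
  set mB := M b with hmB
  have hpv : 0 < pv := hp_pos sstar hmem
  have hP0 : 0 < Pv := (hP01 sstar hsIoo).1
  have hP1 : Pv < 1 := (hP01 sstar hsIoo).2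
  have hqq : 0 < Pv * (1 - Pv) := mul_pos hP0 (by linarith)
  have hqqne : Pv * (1 - Pv) ≠ 0 := ne_of_gt hqq
  have hΔs : Δ sstar = ξ ^ 2 / (Pv * (1 - Pv)) := by rw [hΔ sstar]
  have hξ : ξ ≠ 0 := by
    intro h
    rw [hΔs, h] at hpos
    simp at hpos
  have hξ2 : 0 < ξ ^ 2 := sq_pos_of_ne_zero hξ
  -- expand first-order condition
  have hE1 : 2 * ξ * (gs * pv - mB * pv) * (Pv * (1 - Pv)) -
      ξ ^ 2 * (pv * (1 - Pv) - Pv * pv) = 0 := by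
    have h1 := hNs0
    rw [hNf] at h1
    simpa only [hξf, hQf, hQ'f] using h1
  have key : (gs - mB) * (2 * (Pv * (1 - Pv))) = ξ * (1 - 2 * Pv) := by
    have hne : ξ * pv ≠ 0 := mul_ne_zero hξ (ne_of_gt hpv)
    apply mul_left_cancel₀ hne
    linear_combination hE1
  have hPne0 : Pv ≠ 0 := hP0.ne'
  have h1Pne : 1 - Pv ≠ 0 := sub_ne_zero.mpr hP1.ne'
  have hgseq : gs = mB + ξ * (1 - 2 * Pv) / (2 * (Pv * (1 - Pv))) := by
    have hden : 2 * (Pv * (1 - Pv)) ≠ 0 := by positivity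
    have h : ξ * (1 - 2 * Pv) / (2 * (Pv * (1 - Pv))) = gs - mB := by
      rw [div_eq_iff hden]; linarith [key]
    linarith
  -- second-order inequality, cleaned up
  have hE3 : ξ ^ 2 * pv ^ 2 + 4 * ξ * (Pv * (1 - Pv)) ^ 2 * gvd * pv ≤ 0 := by
    have h2q : 2 * (Pv * (1 - Pv)) * Nd ≤ 0 :=
      mul_nonpos_of_nonneg_of_nonpos (by positivity) hNd_le
    have hident : 2 * (Pv * (1 - Pv)) * Nd =
        ξ ^ 2 * pv ^ 2 + 4 * ξ * (Pv * (1 - Pv)) ^ 2 * gvd * pv := by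
      rw [hNdeq, hgseq]
      field_simp
      ring
    linarith [hident ▸ h2q]
  clear hNdeq hNd_le hE1 key hgseq hNs0 hD1z hLeq hL_le hNder hLder
  -- sign of g'
  have hξg : ξ * gvd < 0 := by
    nlinarith [mul_pos (mul_pos hqq hqq) hpv, mul_pos hξ2 (mul_pos hpv hpv)]
  have hgne : gvd ≠ 0 := by
    intro h
    rw [h, mul_zero] at hξg
    exact lt_irrefl 0 hξg
  have hgvd2 : 0 < gvd ^ 2 := sq_pos_of_ne_zero hgne
  -- key quantitative bound
  have h5 : ξ ^ 2 * pv ≤ 4 * (Pv * (1 - Pv)) ^ 2 * (-(ξ * gvd)) := by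
    nlinarith [hE3, hpv]
  have h5' : 0 ≤ ξ ^ 2 * pv := mul_nonneg (sq_nonneg ξ) hpv.le
  have h6 := mul_self_le_mul_self h5' h5
  have key2 : ξ ^ 2 * pv ^ 2 ≤ 16 * gvd ^ 2 * (Pv * (1 - Pv)) ^ 4 := by
    nlinarith [h6, hξ2]
  -- the cube root bound
  have hX : 0 < 4 * pv ^ 2 * Δ sstar / gvd ^ 2 :=
    div_pos (mul_pos (mul_pos (by norm_num : (0:ℝ) < 4) (pow_pos hpv 2)) hpos) hgvd2
  have hr_nonneg : 0 ≤ r := by rw [hr]; exact Real.rpow_nonneg hX.le _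
  have hr3 : r ^ (3 : ℕ) = 4 * pv ^ 2 * Δ sstar / gvd ^ 2 := by
    rw [hr, ← Real.rpow_natCast (_ ^ ((1 : ℝ) / 3)) 3, ← Real.rpow_mul hX.le]
    norm_num
  have hXle : 4 * pv ^ 2 * Δ sstar / gvd ^ 2 ≤ (4 * (Pv * (1 - Pv))) ^ 3 := by
    have heq : 4 * pv ^ 2 * Δ sstar / gvd ^ 2 =
        4 * pv ^ 2 * ξ ^ 2 / (gvd ^ 2 * (Pv * (1 - Pv))) := by
      rw [hΔs]; field_simp
    rw [heq, div_le_iff₀ (mul_pos hgvd2 hqq)]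
    nlinarith [key2]
  have hrle : r ≤ 4 * (Pv * (1 - Pv)) := by
    have h7 : r ^ (3 : ℕ) ≤ (4 * (Pv * (1 - Pv))) ^ (3 : ℕ) := by rw [hr3]; exact hXle
    exact (pow_le_pow_iff_left₀ hr_nonneg (by positivity) (by norm_num)).mp h7
  have hr1 : r ≤ 1 := by nlinarith [sq_nonneg (1 - 2 * Pv)]
  have h7 : (1 - 2 * Pv) ^ 2 ≤ 1 - r := by nlinarith [hrle]
  have h8 : |1 - 2 * Pv| ≤ Real.sqrt (1 - r) := by
    rw [← Real.sqrt_sq_eq_abs]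
    exact Real.sqrt_le_sqrt h7
  obtain ⟨h9, h10⟩ := abs_le.mp h8
  refine ⟨hgne, by linarith [hrle], ⟨by linarith, by linarith⟩, ⟨by linarith, by linarith⟩⟩
end
end

section
/- In the multivariate node framework, suppose Assumption (A2) holds with constant η ∈ (0,1]. Let [0,1]^d = t⁰ ⊃ t¹ ⊃ ⋯ ⊃ t^K be a split chain with coordinates j_k and split points s_k, and fix a coordinate j. Then the marginal probability satisfies μ({x ∈ [0,1]^d : a_j(t^K) ≤ x_j ≤ b_j(t^K)}) ≤ exp( −(η/4) · Σ_{k < K, j_k = j} Δ(j, s_k; t^k) / (Δ(j, s_k; t^k) + Ḡ_j(s_k; t^k)²) ), where a summand is interpreted as 0 whenever Δ(j, s_k; t^k) = 0. -/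
open MeasureTheory Set
open scoped ENNReal NNReal

noncomputable section

namespace RegressionTree

/-- The unit cube `[0,1]^d`. -/
def cube (d : ℕ) : Set (Fin d → ℝ) := Set.univ.pi fun _ => Set.Icc 0 1

/-- The box (node) `∏_j [A j, B j]`. -/
def box {d : ℕ} (A B : Fin d → ℝ) : Set (Fin d → ℝ) := Set.univ.pi fun i => Set.Icc (A i) (B i)

/-- `A`, `B` describe a node: a nondegenerate box inside the unit cube. -/
def IsNode {d : ℕ} (A B : Fin d → ℝ) : Prop := ∀ i, 0 ≤ A i ∧ A i < B i ∧ B i ≤ 1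

/-- Conditional expectation `E_μ[f | t] = (∫_t f dμ)/μ(t)`. -/
def cAvg {d : ℕ} (μ : Measure (Fin d → ℝ)) (f : (Fin d → ℝ) → ℝ) (t : Set (Fin d → ℝ)) : ℝ :=
  (∫ x in t, f x ∂μ) / (μ t).toReal

/-- Left daughter node `{x ∈ t : x_j ≤ s}`. -/
def leftD {d : ℕ} (A B : Fin d → ℝ) (j : Fin d) (s : ℝ) : Set (Fin d → ℝ) :=
  {x | x ∈ box A B ∧ x j ≤ s}

/-- Right daughter node `{x ∈ t : x_j > s}`. -/
def rightD {d : ℕ} (A B : Fin d → ℝ) (j : Fin d) (s : ℝ) : Set (Fin d → ℝ) :=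
  {x | x ∈ box A B ∧ s < x j}

/-- Conditional probability content of the left daughter node, `P_j(s|t)`. -/
def Pj {d : ℕ} (μ : Measure (Fin d → ℝ)) (A B : Fin d → ℝ) (j : Fin d) (s : ℝ) : ℝ :=
  (μ (leftD A B j s)).toReal / (μ (box A B)).toReal

/-- Impurity decrease `Δ(j,s;t) = P_j(s|t)(1 − P_j(s|t))(E[f|t_L] − E[f|t_R])²`. -/
def impDec {d : ℕ} (μ : Measure (Fin d → ℝ)) (f : (Fin d → ℝ) → ℝ) (A B : Fin d → ℝ)
    (j : Fin d) (s : ℝ) : ℝ :=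
  Pj μ A B j s * (1 - Pj μ A B j s) *
    (cAvg μ f (leftD A B j s) - cAvg μ f (rightD A B j s)) ^ 2

/-- Conditional partial dependence function `F̄_j(s;t)` (the `j`-th coordinate of the
free variable is replaced by `s` and the remaining coordinates are averaged against the
density `ρ` over the node; the redundant `j`-th integration cancels between numerator and
denominator). -/
def Fbar {d : ℕ} (ρ f : (Fin d → ℝ) → ℝ) (A B : Fin d → ℝ) (j : Fin d) (s : ℝ) : ℝ :=
  (∫ x in box A B, f (Function.update x j s) * ρ (Function.update x j s)) /
    ∫ x in box A B, ρ (Function.update x j s)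

/-- Centered conditional partial dependence function `Ḡ_j(s;t) = F̄_j(s;t) − E_μ[f|t]`. -/
def Gbar {d : ℕ} (μ : Measure (Fin d → ℝ)) (ρ f : (Fin d → ℝ) → ℝ) (A B : Fin d → ℝ)
    (j : Fin d) (s : ℝ) : ℝ :=
  Fbar ρ f A B j s - cAvg μ f (box A B)

/-- A split chain of depth `K`: nodes `t^k = box (A k) (B k)` starting at the unit cube,
where at each step `k < K` the split point `s_k` maximizes the impurity decrease along
coordinate `j_k` and `t^{k+1}` is the corresponding left or right daughter node. -/
def SplitChain {d : ℕ} (μ : Measure (Fin d → ℝ)) (f : (Fin d → ℝ) → ℝ)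
    (K : ℕ) (A B : ℕ → Fin d → ℝ) (js : ℕ → Fin d) (ss : ℕ → ℝ) : Prop :=
  (A 0 = fun _ => 0) ∧ (B 0 = fun _ => 1) ∧
  (∀ k, k ≤ K → IsNode (A k) (B k)) ∧
  ∀ k, k < K →
    ss k ∈ Set.Icc (A k (js k)) (B k (js k)) ∧
    (∀ s ∈ Set.Icc (A k (js k)) (B k (js k)),
      impDec μ f (A k) (B k) (js k) s ≤ impDec μ f (A k) (B k) (js k) (ss k)) ∧
    ((A (k + 1) = A k ∧ B (k + 1) = Function.update (B k) (js k) (ss k)) ∨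
      (A (k + 1) = Function.update (A k) (js k) (ss k) ∧ B (k + 1) = B k))

-- ### basics
variable {d : ℕ}

lemma measurableSet_cube : MeasurableSet (cube d) :=
  MeasurableSet.univ_pi fun _ => measurableSet_Icc

lemma measurableSet_box (A B : Fin d → ℝ) : MeasurableSet (box A B) :=
  MeasurableSet.univ_pi fun _ => measurableSet_Icc

lemma isCompact_box (A B : Fin d → ℝ) : IsCompact (box A B) :=
  isCompact_univ_pi fun _ => isCompact_Icc

lemma box_subset_cube {A B : Fin d → ℝ} (h : IsNode A B) : box A B ⊆ cube d := by
  intro x hx i _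
  have h1 := hx i (Set.mem_univ i)
  have h2 := h i
  exact ⟨le_trans h2.1 h1.1, le_trans h1.2 h2.2.2⟩

lemma measurableSet_leftD (A B : Fin d → ℝ) (j : Fin d) (s : ℝ) :
    MeasurableSet (leftD A B j s) :=
  (measurableSet_box A B).inter ((measurable_pi_apply j) measurableSet_Iic)

lemma measurableSet_rightD (A B : Fin d → ℝ) (j : Fin d) (s : ℝ) :
    MeasurableSet (rightD A B j s) :=
  (measurableSet_box A B).inter ((measurable_pi_apply j) measurableSet_Ioi)

lemma leftD_subset (A B : Fin d → ℝ) (j : Fin d) (s : ℝ) : leftD A B j s ⊆ box A B :=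
  fun _ hx => hx.1

lemma rightD_subset (A B : Fin d → ℝ) (j : Fin d) (s : ℝ) : rightD A B j s ⊆ box A B :=
  fun _ hx => hx.1

lemma leftD_union_rightD (A B : Fin d → ℝ) (j : Fin d) (s : ℝ) :
    leftD A B j s ∪ rightD A B j s = box A B := by
  ext x
  simp only [leftD, rightD, Set.mem_union, Set.mem_setOf_eq]
  constructor
  · rintro (h | h) <;> exact h.1
  · intro hx
    rcases le_or_gt (x j) s with h | h
    · exact Or.inl ⟨hx, h⟩
    · exact Or.inr ⟨hx, h⟩

lemma disjoint_leftD_rightD (A B : Fin d → ℝ) (j : Fin d) (s : ℝ) :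
    Disjoint (leftD A B j s) (rightD A B j s) := by
  rw [Set.disjoint_left]
  rintro x ⟨_, h1⟩ ⟨_, h2⟩
  exact absurd h1 (not_le.2 h2)

lemma leftD_eq_box {A B : Fin d → ℝ} {j : Fin d} {s : ℝ} (hs : s ≤ B j) :
    leftD A B j s = box A (Function.update B j s) := by
  ext x
  simp only [leftD, box, Set.mem_setOf_eq, Set.mem_pi, Set.mem_univ, forall_true_left,
    Set.mem_Icc]
  constructor
  · rintro ⟨hx, hxj⟩ i
    rcases eq_or_ne i j with rfl | hij
    · exact ⟨(hx i).1, by rwa [Function.update_self]⟩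
    · rw [Function.update_of_ne hij]; exact hx i
  · intro hx
    refine ⟨fun i => ?_, ?_⟩
    · rcases eq_or_ne i j with rfl | hij
      · exact ⟨(hx i).1, le_trans (by simpa using (hx i).2) hs⟩
      · have := hx i; rwa [Function.update_of_ne hij] at this
    · simpa using (hx j).2

-- clamping
def clampV (x : Fin d → ℝ) : Fin d → ℝ := fun i => max 0 (min 1 (x i))

lemma continuous_clampV : Continuous (clampV (d := d)) := by
  apply continuous_pi; intro i
  exact continuous_const.max (continuous_const.min (continuous_apply i))

lemma clampV_mem_cube (x : Fin d → ℝ) : clampV x ∈ cube d := by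
  intro i _
  simp only [clampV, Set.mem_Icc]
  exact ⟨le_max_left _ _, max_le zero_le_one (min_le_left _ _)⟩

lemma clampV_eq_of_mem {x : Fin d → ℝ} (hx : x ∈ cube d) : clampV x = x := by
  funext i
  have h := hx i (Set.mem_univ i)
  simp only [clampV]
  rw [min_eq_right h.2, max_eq_right h.1]


-- ### Fubini infrastructure
section Fubini
variable {m : ℕ}

def restBox (A B : Fin (m+1) → ℝ) (j : Fin (m+1)) : Set (Fin m → ℝ) :=
  box (A ∘ j.succAbove) (B ∘ j.succAbove)

lemma isCompact_restBox (A B : Fin (m+1) → ℝ) (j : Fin (m+1)) : IsCompact (restBox A B j) :=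
  isCompact_box _ _

lemma measurableSet_restBox (A B : Fin (m+1) → ℝ) (j : Fin (m+1)) :
    MeasurableSet (restBox A B j) := measurableSet_box _ _

lemma box_fubini (g : (Fin (m+1) → ℝ) → ℝ) (hg : Continuous g) (A B : Fin (m+1) → ℝ)
    (j : Fin (m+1)) :
    ∫ x in box A B, g x =
      ∫ u in Set.Icc (A j) (B j), ∫ y in restBox A B j, g (j.insertNth u y) := by
  set e : ℝ × (Fin m → ℝ) ≃ᵐ (Fin (m+1) → ℝ) :=
    (MeasurableEquiv.piFinSuccAbove (fun _ => ℝ) j).symm with he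
  have hem : MeasurePreserving e :=
    (volume_preserving_piFinSuccAbove (fun _ : Fin (m+1) => ℝ) j).symm _
  have hec : Continuous e := by
    have : (e : ℝ × (Fin m → ℝ) → (Fin (m+1) → ℝ)) =
        fun z => j.insertNth z.1 z.2 := rfl
    rw [this]
    exact Continuous.finInsertNth (A := fun _ => ℝ) j continuous_fst continuous_snd
  have hbox : (e ⁻¹' box A B) = Set.Icc (A j) (B j) ×ˢ restBox A B j := by
    rw [box, Set.pi_univ_Icc, restBox, box, Set.pi_univ_Icc]
    exact ((Fin.insertNthOrderIso (fun _ => ℝ) j).preimage_Icc _ _).trans (Icc_prod_eq _ _)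
  rw [← hem.map_eq, setIntegral_map_equiv, hbox, Measure.volume_eq_prod, setIntegral_prod]
  · rfl
  · rw [← hbox]
    apply (hg.comp hec).continuousOn.integrableOn_compact
    rw [hbox]
    exact isCompact_Icc.prod (isCompact_restBox A B j)

lemma restBox_update (A B : Fin (m+1) → ℝ) (j : Fin (m+1)) (s : ℝ) :
    restBox A (Function.update B j s) j = restBox A B j := by
  have h : (Function.update B j s ∘ j.succAbove) = B ∘ j.succAbove := by
    funext i
    show Function.update B j s (j.succAbove i) = B (j.succAbove i)
    rw [Function.update_of_ne (Fin.succAbove_ne j i)]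
  unfold restBox
  rw [h]

lemma update_insertNth (j : Fin (m+1)) (u s : ℝ) (y : Fin m → ℝ) :
    Function.update (j.insertNth u y : Fin (m+1) → ℝ) j s = j.insertNth s y := by
  funext i
  rcases eq_or_ne i j with rfl | hij
  · rw [Function.update_self, Fin.insertNth_apply_same]
  · rw [Function.update_of_ne hij]
    obtain ⟨k, rfl⟩ := Fin.exists_succAbove_eq hij
    rw [Fin.insertNth_apply_succAbove, Fin.insertNth_apply_succAbove]

lemma insertNth_mem_box {A B : Fin (m+1) → ℝ} {j : Fin (m+1)} {u : ℝ} {y : Fin m → ℝ}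
    (hu : u ∈ Set.Icc (A j) (B j)) (hy : y ∈ restBox A B j) :
    (j.insertNth u y : Fin (m+1) → ℝ) ∈ box A B := by
  intro i _
  rcases eq_or_ne i j with rfl | hij
  · rw [Fin.insertNth_apply_same]; exact hu
  · obtain ⟨k, rfl⟩ := Fin.exists_succAbove_eq hij
    rw [Fin.insertNth_apply_succAbove]
    exact hy k (Set.mem_univ k)

lemma update_mem_box {A B : Fin (m+1) → ℝ} {j : Fin (m+1)} {x : Fin (m+1) → ℝ} {s : ℝ}
    (hx : x ∈ box A B) (hs : s ∈ Set.Icc (A j) (B j)) :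
    Function.update x j s ∈ box A B := by
  intro i _
  rcases eq_or_ne i j with rfl | hij
  · rw [Function.update_self]; exact hs
  · rw [Function.update_of_ne hij]; exact hx i (Set.mem_univ i)

lemma box_update_subset {A B : Fin (m+1) → ℝ} {j : Fin (m+1)} {s : ℝ} (hs : s ≤ B j) :
    box A (Function.update B j s) ⊆ box A B := by
  intro x hx i _
  have h := hx i (Set.mem_univ i)
  simp only [Set.mem_Icc] at h ⊢
  rcases eq_or_ne i j with rfl | hij
  · rw [Function.update_self] at h
    exact ⟨h.1, h.2.trans hs⟩
  · rwa [Function.update_of_ne hij] at h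

end Fubini

-- ### measure layer
section MeasureLayer
variable {R : (Fin d → ℝ) → ℝ} {μ : Measure (Fin d → ℝ)}
  (hR : Continuous R) (hRpos : ∀ x, 0 < R x)
  (hμ : μ = (volume.restrict (cube d)).withDensity fun x => ENNReal.ofReal (R x))

include hμ

lemma mu_restrict {S : Set (Fin d → ℝ)} (hS : MeasurableSet S) (hSc : S ⊆ cube d) :
    μ.restrict S = (volume.restrict S).withDensity fun x => ENNReal.ofReal (R x) := by
  rw [hμ, restrict_withDensity hS, Measure.restrict_restrict hS,
    Set.inter_eq_self_of_subset_left hSc]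

include hR hRpos

lemma setIntegral_mu {S : Set (Fin d → ℝ)} (hS : MeasurableSet S) (hSc : S ⊆ cube d)
    (g : (Fin d → ℝ) → ℝ) :
    ∫ x in S, g x ∂μ = ∫ x in S, g x * R x := by
  rw [mu_restrict hμ hS hSc]
  have hmeas : Measurable fun x => (R x).toNNReal :=
    (continuous_real_toNNReal.comp hR).measurable
  have hd : (fun x => ENNReal.ofReal (R x)) = fun x => ((R x).toNNReal : ℝ≥0∞) := rfl
  rw [hd, integral_withDensity_eq_integral_smul hmeas]
  apply setIntegral_congr_fun hS
  intro x _
  simp only [NNReal.smul_def, smul_eq_mul]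
  rw [Real.coe_toNNReal _ (hRpos x).le, mul_comm]

lemma measure_toReal_mu [IsFiniteMeasure μ] {S : Set (Fin d → ℝ)} (hS : MeasurableSet S)
    (hSc : S ⊆ cube d) : (μ S).toReal = ∫ x in S, R x := by
  have h1 : ∫ x in S, (1 : ℝ) ∂μ = (μ S).toReal • (1:ℝ) := setIntegral_const 1
  rw [setIntegral_mu hR hRpos hμ hS hSc] at h1
  simp only [one_mul, smul_eq_mul, mul_one] at h1
  exact h1.symm

lemma integrableOn_mu {S : Set (Fin d → ℝ)} (hS : MeasurableSet S) (hSc : S ⊆ cube d)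
    (hScomp : IsCompact S) {g : (Fin d → ℝ) → ℝ} (hg : Continuous g) :
    IntegrableOn g S μ := by
  unfold IntegrableOn
  rw [mu_restrict hμ hS hSc]
  have hmeas : Measurable fun x => (R x).toNNReal :=
    (continuous_real_toNNReal.comp hR).measurable
  have hd : (fun x => ENNReal.ofReal (R x)) = fun x => ((R x).toNNReal : ℝ≥0∞) := rfl
  rw [hd]
  refine (integrable_withDensity_iff_integrable_smul hmeas (g := g)).2 ?_
  have : Integrable (fun x => R x * g x) (volume.restrict S) :=
    ((hR.mul hg).continuousOn).integrableOn_compact hScomp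
  apply this.congr
  apply ae_of_all
  intro x
  simp only [NNReal.smul_def, smul_eq_mul]
  rw [Real.coe_toNNReal _ (hRpos x).le]

omit hR hRpos

lemma mu_compl_cube : μ (cube d)ᶜ = 0 := by
  rw [hμ, withDensity_apply _ measurableSet_cube.compl,
    Measure.restrict_restrict measurableSet_cube.compl, Set.compl_inter_self,
    Measure.restrict_empty, lintegral_zero_measure]

lemma mu_inter_cube {S : Set (Fin d → ℝ)} : μ S = μ (S ∩ cube d) := by
  apply le_antisymm
  · calc μ S ≤ μ ((S ∩ cube d) ∪ (cube d)ᶜ) := by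
          apply measure_mono; intro x hx
          by_cases h : x ∈ cube d
          · exact Or.inl ⟨hx, h⟩
          · exact Or.inr h
      _ ≤ μ (S ∩ cube d) + μ (cube d)ᶜ := measure_union_le _ _
      _ = μ (S ∩ cube d) := by rw [mu_compl_cube hμ, add_zero]
  · exact measure_mono (Set.inter_subset_left)

lemma mu_null {S : Set (Fin d → ℝ)} (hS : MeasurableSet S) (hvol : volume S = 0) :
    μ S = 0 := by
  rw [hμ, withDensity_apply _ hS, Measure.restrict_restrict hS,
    Measure.restrict_eq_zero.2 (measure_mono_null Set.inter_subset_left hvol),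
    lintegral_zero_measure]

end MeasureLayer

lemma volume_hyperplane {m : ℕ} (j : Fin (m+1)) (s : ℝ) :
    (volume : Measure (Fin (m+1) → ℝ)) {x | x j = s} = 0 := by
  set e := MeasurableEquiv.piFinSuccAbove (fun _ : Fin (m+1) => ℝ) j with he
  have hem : MeasurePreserving e := volume_preserving_piFinSuccAbove _ j
  have h : {x : Fin (m+1) → ℝ | x j = s} = e ⁻¹' ({s} ×ˢ (Set.univ : Set (Fin m → ℝ))) := by
    ext x
    simp [he, MeasurableEquiv.piFinSuccAbove, eq_comm]; rfl
  rw [h, hem.measure_preimage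
    ((measurableSet_singleton s).prod MeasurableSet.univ).nullMeasurableSet]
  rw [Measure.volume_eq_prod, Measure.prod_prod, Real.volume_singleton, zero_mul]

lemma setIntegral_pos_of_continuous {n : ℕ} {S : Set (Fin n → ℝ)} (hS : MeasurableSet S)
    (hcomp : IsCompact S) (hvol : 0 < volume S) {g : (Fin n → ℝ) → ℝ} (hg : Continuous g)
    (hgpos : ∀ x, 0 < g x) : 0 < ∫ x in S, g x := by
  rw [setIntegral_pos_iff_support_of_nonneg_ae
    (ae_of_all _ fun x => (hgpos x).le) (hg.continuousOn.integrableOn_compact hcomp)]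
  have : Function.support g = Set.univ := by
    ext x; simp [Function.support, (hgpos x).ne']
  rw [this, Set.univ_inter]
  exact hvol

lemma volume_box_pos {A B : Fin d → ℝ} (h : IsNode A B) : 0 < volume (box A B) := by
  rw [box, volume_pi_pi]
  rw [pos_iff_ne_zero]
  rw [Finset.prod_ne_zero_iff]
  intro i _
  rw [Real.volume_Icc]
  exact (ENNReal.ofReal_pos.2 (sub_pos.2 (h i).2.1)).ne'

lemma Pj_nonneg (μ : Measure (Fin d → ℝ)) (A B : Fin d → ℝ) (j : Fin d) (s : ℝ) :
    0 ≤ Pj μ A B j s :=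
  div_nonneg ENNReal.toReal_nonneg ENNReal.toReal_nonneg

lemma Pj_le_one (μ : Measure (Fin d → ℝ)) [IsFiniteMeasure μ] (A B : Fin d → ℝ) (j : Fin d)
    (s : ℝ) : Pj μ A B j s ≤ 1 := by
  apply div_le_one_of_le₀
  · exact ENNReal.toReal_mono (measure_ne_top μ _) (measure_mono (leftD_subset A B j s))
  · exact ENNReal.toReal_nonneg


lemma impDec_nonneg {d : ℕ} (μ : Measure (Fin d → ℝ)) [IsFiniteMeasure μ]
    (f : (Fin d → ℝ) → ℝ) (A B : Fin d → ℝ) (j : Fin d) (s : ℝ) :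
    0 ≤ impDec μ f A B j s :=
  mul_nonneg (mul_nonneg (Pj_nonneg μ A B j s) (sub_nonneg.2 (Pj_le_one μ A B j s)))
    (sq_nonneg _)


-- ### The key first-order-condition lemma
lemma key_ratio_le {d : ℕ} (ρ f : (Fin d → ℝ) → ℝ)
    (hρ_cont : ContinuousOn ρ (cube d)) (hρ_pos : ∀ x ∈ cube d, 0 < ρ x)
    (μ : Measure (Fin d → ℝ))
    (hμ : μ = (volume.restrict (cube d)).withDensity fun x => ENNReal.ofReal (ρ x))
    (hprob : IsProbabilityMeasure μ)
    (hf_cont : ContinuousOn f (cube d))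
    (A B : Fin d → ℝ) (hnode : IsNode A B) (j : Fin d)
    (S : ℝ) (hS : S ∈ Set.Icc (A j) (B j))
    (hmax : ∀ s ∈ Set.Icc (A j) (B j), impDec μ f A B j s ≤ impDec μ f A B j S) :
    impDec μ f A B j S / (impDec μ f A B j S + Gbar μ ρ f A B j S ^ 2) ≤
      4 * (Pj μ A B j S * (1 - Pj μ A B j S)) := by
  obtain ⟨m, rfl⟩ : ∃ m, d = m + 1 := ⟨d - 1, by have := j.pos; omega⟩
  set R : (Fin (m+1) → ℝ) → ℝ := fun x => ρ (clampV x) with hRdef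
  set F : (Fin (m+1) → ℝ) → ℝ := fun x => f (clampV x) with hFdef
  have hR : Continuous R := hρ_cont.comp_continuous continuous_clampV clampV_mem_cube
  have hF : Continuous F := hf_cont.comp_continuous continuous_clampV clampV_mem_cube
  have hRpos : ∀ x, 0 < R x := fun x => hρ_pos _ (clampV_mem_cube x)
  have hReq : ∀ x ∈ cube (m+1), R x = ρ x := fun x hx => by
    rw [hRdef]; simp only; rw [clampV_eq_of_mem hx]
  have hFeq : ∀ x ∈ cube (m+1), F x = f x := fun x hx => by
    rw [hFdef]; simp only; rw [clampV_eq_of_mem hx]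
  have hμ' : μ = (volume.restrict (cube (m+1))).withDensity fun x => ENNReal.ofReal (R x) := by
    rw [hμ]
    apply withDensity_congr_ae
    exact (ae_restrict_iff' measurableSet_cube).2 (ae_of_all _ fun x hx => by show ENNReal.ofReal (ρ x) = ENNReal.ofReal (R x); rw [hReq x hx])
  have hab : A j < B j := (hnode j).2.1
  have hboxcube : box A B ⊆ cube (m+1) := box_subset_cube hnode
  set c := (μ (box A B)).toReal with hc_def
  have hcpos : 0 < c := by
    rw [hc_def, measure_toReal_mu hR hRpos hμ' (measurableSet_box A B) hboxcube]
    exact setIntegral_pos_of_continuous (measurableSet_box A B) (isCompact_box A B)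
      (volume_box_pos hnode) hR hRpos
  set Ebar := cAvg μ f (box A B) with hEbar
  set RB := restBox A B j with hRB
  set w : ℝ → ℝ := fun u => ∫ y in RB, R (j.insertNth u y) with hwdef
  set φ : ℝ → ℝ := fun u => ∫ y in RB, (F (j.insertNth u y) - Ebar) * R (j.insertNth u y)
    with hφdef
  have hins : Continuous fun z : ℝ × (Fin m → ℝ) => (j.insertNth z.1 z.2 : Fin (m+1) → ℝ) :=
    Continuous.finInsertNth (A := fun _ => ℝ) j continuous_fst continuous_snd
  have hw_cont : Continuous w := by
    apply continuous_parametric_integral_of_continuous _ (isCompact_restBox A B j)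
    exact hR.comp hins
  have hφ_cont : Continuous φ := by
    apply continuous_parametric_integral_of_continuous _ (isCompact_restBox A B j)
    exact ((hF.comp hins).sub continuous_const).mul (hR.comp hins)
  have hnode' : IsNode (A ∘ j.succAbove) (B ∘ j.succAbove) := fun i => hnode (j.succAbove i)
  have hw_pos : ∀ u, 0 < w u := by
    intro u
    apply setIntegral_pos_of_continuous (measurableSet_restBox A B j) (isCompact_restBox A B j)
      (volume_box_pos hnode')
    · exact hR.comp (Continuous.finInsertNth (A := fun _ => ℝ) j continuous_const continuous_id)
    · intro y; exact hRpos _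
  set W : ℝ → ℝ := fun s => ∫ u in (A j)..s, w u with hWdef
  set H : ℝ → ℝ := fun s => ∫ u in (A j)..s, φ u with hHdef
  -- the master Fubini identity
  have master : ∀ g : (Fin (m+1) → ℝ) → ℝ, Continuous g → ∀ s ∈ Set.Icc (A j) (B j),
      ∫ x in leftD A B j s, g x ∂μ =
        ∫ u in (A j)..s, ∫ y in RB, g (j.insertNth u y) * R (j.insertNth u y) := by
    intro g hg s hs
    rw [leftD_eq_box hs.2]
    have hsub : box A (Function.update B j s) ⊆ cube (m+1) :=
      (box_update_subset hs.2).trans hboxcube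
    rw [setIntegral_mu hR hRpos hμ' (measurableSet_box _ _) hsub]
    rw [box_fubini (fun x => g x * R x) (hg.mul hR) A (Function.update B j s) j]
    rw [restBox_update, Function.update_self, ← hRB]
    rw [intervalIntegral.integral_of_le hs.1, ← integral_Icc_eq_integral_Ioc]
  have hWs : ∀ s ∈ Set.Icc (A j) (B j), (μ (leftD A B j s)).toReal = W s := by
    intro s hs
    have h1 : ∫ x in leftD A B j s, (1:ℝ) ∂μ = (μ (leftD A B j s)).toReal • (1:ℝ) :=
      setIntegral_const 1
    have h2 := master (fun _ => 1) continuous_const s hs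
    simp only [one_mul, smul_eq_mul, mul_one] at h1 h2
    rw [← h1, h2, hWdef]
  have hHs : ∀ s ∈ Set.Icc (A j) (B j), (∫ x in leftD A B j s, (f x - Ebar) ∂μ) = H s := by
    intro s hs
    have hcongr : ∫ x in leftD A B j s, (f x - Ebar) ∂μ
        = ∫ x in leftD A B j s, (F x - Ebar) ∂μ := by
      apply setIntegral_congr_fun (measurableSet_leftD A B j s)
      intro x hx
      show f x - Ebar = F x - Ebar
      rw [hFeq x (hboxcube (leftD_subset A B j s hx))]
    rw [hcongr, master (fun x => F x - Ebar) (hF.sub continuous_const) s hs]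
  have hbox_leftD : box A B = leftD A B j (B j) := by
    rw [leftD_eq_box (le_refl (B j)), Function.update_eq_self]
  have hcW : c = W (B j) := by
    rw [hc_def, hbox_leftD, hWs (B j) ⟨hab.le, le_refl _⟩]
  have hPjW : ∀ s ∈ Set.Icc (A j) (B j), Pj μ A B j s = W s / c := by
    intro s hs
    rw [Pj, hWs s hs, ← hc_def]
  have hW_pos_lt : ∀ s ∈ Set.Ioo (A j) (B j), 0 < W s ∧ W s < c := by
    intro s hs
    constructor
    · rw [hWdef]
      exact intervalIntegral.intervalIntegral_pos_of_pos (hw_cont.intervalIntegrable _ _)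
        hw_pos hs.1
    · have hadd : W s + ∫ u in s..(B j), w u = W (B j) :=
        intervalIntegral.integral_add_adjacent_intervals (hw_cont.intervalIntegrable _ _)
          (hw_cont.intervalIntegrable _ _)
      have hpos : 0 < ∫ u in s..(B j), w u :=
        intervalIntegral.intervalIntegral_pos_of_pos (hw_cont.intervalIntegrable _ _)
          hw_pos hs.2
      rw [hcW]
      linarith
  -- impDec identity on the open interval
  have hident : ∀ s ∈ Set.Ioo (A j) (B j),
      impDec μ f A B j s = H s ^ 2 / (W s * (c - W s)) := by
    intro s hs
    have hs' : s ∈ Set.Icc (A j) (B j) := Set.Ioo_subset_Icc_self hs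
    obtain ⟨hW0, hWc⟩ := hW_pos_lt s hs
    have hFint : IntegrableOn F (box A B) μ :=
      integrableOn_mu hR hRpos hμ' (measurableSet_box A B) hboxcube (isCompact_box A B) hF
    have hfint : IntegrableOn f (box A B) μ := by
      apply hFint.congr_fun _ (measurableSet_box A B)
      intro x hx; exact hFeq x (hboxcube hx)
    have hfintL : IntegrableOn f (leftD A B j s) μ := hfint.mono_set (leftD_subset A B j s)
    have hfintR : IntegrableOn f (rightD A B j s) μ := hfint.mono_set (rightD_subset A B j s)
    have hmuL : (μ (leftD A B j s)).toReal = W s := hWs s hs'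
    have hmuR : (μ (rightD A B j s)).toReal = c - W s := by
      have hunion := leftD_union_rightD A B j s
      have hdisj := disjoint_leftD_rightD A B j s
      have : μ (box A B) = μ (leftD A B j s) + μ (rightD A B j s) := by
        rw [← hunion]
        exact measure_union hdisj (measurableSet_rightD A B j s)
      have htr : c = W s + (μ (rightD A B j s)).toReal := by
        rw [hc_def, this, ENNReal.toReal_add (measure_ne_top μ _) (measure_ne_top μ _), hmuL]
      linarith
    have hintbox : ∫ x in box A B, f x ∂μ = Ebar * c := by
      rw [hEbar, cAvg, ← hc_def]
      field_simp
    have hintL : ∫ x in leftD A B j s, f x ∂μ = H s + Ebar * W s := by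
      have h1 : ∫ x in leftD A B j s, (f x - Ebar) ∂μ
          = (∫ x in leftD A B j s, f x ∂μ) - (μ (leftD A B j s)).toReal • Ebar := by
        rw [integral_sub hfintL (integrableOn_const (measure_ne_top μ _))]
        rw [setIntegral_const]; rfl
      rw [hHs s hs'] at h1
      rw [hmuL, smul_eq_mul] at h1
      linarith
    have hintR : ∫ x in rightD A B j s, f x ∂μ = Ebar * (c - W s) - H s := by
      have hsplit : ∫ x in box A B, f x ∂μ
          = (∫ x in leftD A B j s, f x ∂μ) + ∫ x in rightD A B j s, f x ∂μ := by
        rw [← leftD_union_rightD A B j s]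
        exact setIntegral_union (disjoint_leftD_rightD A B j s)
          (measurableSet_rightD A B j s) hfintL hfintR
      rw [hintbox, hintL] at hsplit
      linarith [hsplit]
    rw [impDec, hPjW s hs', cAvg, cAvg, hintL, hintR, hmuL, hmuR]
    have hWne : W s ≠ 0 := hW0.ne'
    have hcWne : c - W s ≠ 0 := (sub_pos.2 hWc).ne'
    have hcne : c ≠ 0 := hcpos.ne'
    field_simp
    ring
  -- case split on impDec = 0
  haveI := hprob
  rcases eq_or_lt_of_le (impDec_nonneg μ f A B j S) with hzero | hpos
  · rw [← hzero, zero_div]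
    have h1 := Pj_nonneg μ A B j S
    have h2 := Pj_le_one μ A B j S
    nlinarith
  -- positive case: S is interior
  have hSne_a : S ≠ A j := by
    intro h
    rw [h] at hpos
    have hP : Pj μ A B j (A j) = 0 := by
      rw [hPjW (A j) ⟨le_refl _, hab.le⟩, hWdef]
      simp [intervalIntegral.integral_same]
    rw [impDec, hP] at hpos
    simp at hpos
  have hSne_b : S ≠ B j := by
    intro h
    rw [h] at hpos
    have hP : Pj μ A B j (B j) = 1 := by
      rw [hPjW (B j) ⟨hab.le, le_refl _⟩, ← hcW]
      field_simp
    rw [impDec, hP] at hpos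
    simp at hpos
  have hSoo : S ∈ Set.Ioo (A j) (B j) :=
    ⟨lt_of_le_of_ne hS.1 (Ne.symm hSne_a), lt_of_le_of_ne hS.2 hSne_b⟩
  obtain ⟨hWS0, hWSc⟩ := hW_pos_lt S hSoo
  -- Gbar identity
  have hGbar : Gbar μ ρ f A B j S = φ S / w S := by
    have hupd : ∀ x ∈ box A B, (Function.update x j S : Fin (m+1) → ℝ) ∈ cube (m+1) :=
      fun x hx => hboxcube (update_mem_box hx hS)
    have hu : Continuous fun x : Fin (m+1) → ℝ => Function.update x j S :=
      continuous_id.update j continuous_const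
    have hinsS : Continuous fun y : Fin m → ℝ => (j.insertNth S y : Fin (m+1) → ℝ) :=
      Continuous.finInsertNth (A := fun _ => ℝ) j continuous_const continuous_id
    set φf : ℝ := ∫ y in RB, F (j.insertNth S y) * R (j.insertNth S y) with hφf
    have hbane : B j - A j ≠ 0 := by linarith
    have hNum : (∫ x in box A B, f (Function.update x j S) * ρ (Function.update x j S))
        = (B j - A j) * φf := by
      have hcongr : ∫ x in box A B, f (Function.update x j S) * ρ (Function.update x j S)
          = ∫ x in box A B, F (Function.update x j S) * R (Function.update x j S) := by
        apply setIntegral_congr_fun (measurableSet_box A B)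
        intro x hx
        show f _ * ρ _ = F _ * R _
        rw [hFeq _ (hupd x hx), hReq _ (hupd x hx)]
      have hcont : Continuous fun x : Fin (m+1) → ℝ =>
          F (Function.update x j S) * R (Function.update x j S) :=
        (hF.comp hu).mul (hR.comp hu)
      rw [hcongr, box_fubini _ hcont A B j, ← hRB]
      have hin : ∀ u : ℝ, (∫ y in RB, (fun x : Fin (m+1) → ℝ =>
          F (Function.update x j S) * R (Function.update x j S)) (j.insertNth u y)) = φf := by
        intro u
        rw [hφf]
        apply setIntegral_congr_fun (measurableSet_restBox A B j)
        intro y _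
        show F _ * R _ = F _ * R _
        rw [update_insertNth]
      have houter : (∫ u in Set.Icc (A j) (B j), ∫ y in RB, (fun x : Fin (m+1) → ℝ =>
          F (Function.update x j S) * R (Function.update x j S)) (j.insertNth u y))
          = ∫ u in Set.Icc (A j) (B j), φf :=
        setIntegral_congr_fun measurableSet_Icc fun u _ => hin u
      rw [houter, setIntegral_const, Real.volume_real_Icc_of_le (by linarith : A j ≤ B j), smul_eq_mul]
    have hDen : (∫ x in box A B, ρ (Function.update x j S)) = (B j - A j) * w S := by
      have hcongr : ∫ x in box A B, ρ (Function.update x j S)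
          = ∫ x in box A B, R (Function.update x j S) := by
        apply setIntegral_congr_fun (measurableSet_box A B)
        intro x hx
        show ρ _ = R _
        rw [hReq _ (hupd x hx)]
      rw [hcongr, box_fubini (fun x => R (Function.update x j S)) (hR.comp hu) A B j, ← hRB]
      have hin : ∀ u : ℝ, (∫ y in RB, (fun x : Fin (m+1) → ℝ =>
          R (Function.update x j S)) (j.insertNth u y)) = w S := by
        intro u
        show (∫ y in RB, R (Function.update (j.insertNth u y : Fin (m+1) → ℝ) j S)) = w S
        apply setIntegral_congr_fun (measurableSet_restBox A B j)
        intro y _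
        show R _ = R _
        rw [update_insertNth]
      have houter : (∫ u in Set.Icc (A j) (B j), ∫ y in RB, (fun x : Fin (m+1) → ℝ =>
          R (Function.update x j S)) (j.insertNth u y))
          = ∫ u in Set.Icc (A j) (B j), w S :=
        setIntegral_congr_fun measurableSet_Icc fun u _ => hin u
      rw [houter, setIntegral_const, Real.volume_real_Icc_of_le (by linarith : A j ≤ B j), smul_eq_mul]
    have hφS : φ S = φf - Ebar * w S := by
      have h0 : φ S = ∫ y in RB, (F (j.insertNth S y) - Ebar) * R (j.insertNth S y) := rfl
      have h1 : (∫ y in RB, (F (j.insertNth S y) - Ebar) * R (j.insertNth S y))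
          = ∫ y in RB, (F (j.insertNth S y) * R (j.insertNth S y)
              - Ebar * R (j.insertNth S y)) := by
        apply setIntegral_congr_fun (measurableSet_restBox A B j)
        intro y _
        ring
      have hint1 : IntegrableOn (fun y => F (j.insertNth S y) * R (j.insertNth S y)) RB :=
        (((hF.comp hinsS).mul (hR.comp hinsS)).continuousOn).integrableOn_compact
          (isCompact_restBox A B j)
      have hint2 : IntegrableOn (fun y => Ebar * R (j.insertNth S y)) RB :=
        ((continuous_const.mul (hR.comp hinsS)).continuousOn).integrableOn_compact
          (isCompact_restBox A B j)
      rw [h0, h1, integral_sub hint1 hint2, integral_const_mul]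
    have hwne : w S ≠ 0 := (hw_pos S).ne'
    rw [Gbar, Fbar, hNum, hDen, ← hEbar, mul_div_mul_left _ _ hbane, hφS]
    field_simp

  -- derivatives
  have hWd : HasDerivAt W (w S) S := by
    apply intervalIntegral.integral_hasDerivAt_right (hw_cont.intervalIntegrable _ _)
      (hw_cont.stronglyMeasurableAtFilter _ _) hw_cont.continuousAt
  have hHd : HasDerivAt H (φ S) S := by
    apply intervalIntegral.integral_hasDerivAt_right (hφ_cont.intervalIntegrable _ _)
      (hφ_cont.stronglyMeasurableAtFilter _ _) hφ_cont.continuousAt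
  have hden_ne : W S * (c - W S) ≠ 0 := mul_ne_zero hWS0.ne' (sub_pos.2 hWSc).ne'
  have hQd : HasDerivAt (fun s => H s ^ 2 / (W s * (c - W s)))
      ((2 * H S * φ S * (W S * (c - W S)) -
        H S ^ 2 * (w S * (c - W S) + W S * (-(w S)))) / (W S * (c - W S)) ^ 2) S := by
    have hnum : HasDerivAt (fun s => H s ^ 2) (2 * H S * φ S) S := by
      have : HasDerivAt (fun s => H s ^ 2) _ S := hHd.pow 2
      simpa [mul_comm, mul_assoc, mul_left_comm] using this
    have hd2' : HasDerivAt (fun s => c - W s) (-(w S)) S := by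
      have : HasDerivAt (fun s => c - W s) _ S := (hasDerivAt_const S c).sub hWd
      simpa using this
    have hd2 : HasDerivAt (fun s => W s * (c - W s)) (w S * (c - W S) + W S * (-(w S))) S :=
      hWd.mul hd2'
    exact hnum.div hd2 hden_ne
  have hloc : IsLocalMax (fun s => H s ^ 2 / (W s * (c - W s))) S := by
    filter_upwards [Ioo_mem_nhds hSoo.1 hSoo.2] with u hu
    rw [← hident u hu, ← hident S hSoo]
    exact hmax u (Set.Ioo_subset_Icc_self hu)
  have hder0 := hloc.hasDerivAt_eq_zero hQd
  have hFOC : 2 * H S * φ S * (W S * (c - W S)) -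
      H S ^ 2 * (w S * (c - W S) + W S * (-(w S))) = 0 := by
    have := div_eq_zero_iff.1 hder0
    rcases this with h | h
    · exact h
    · exact absurd h (pow_ne_zero 2 hden_ne)
  have hHne : H S ≠ 0 := by
    intro h0
    rw [hident S hSoo, h0] at hpos
    simp at hpos
  have heq2 : 2 * φ S * (W S * (c - W S)) = H S * (w S * (c - 2 * W S)) := by
    have h2 : H S * (2 * φ S * (W S * (c - W S)) - H S * (w S * (c - 2 * W S))) = 0 := by
      linear_combination hFOC
    rcases mul_eq_zero.1 h2 with h | h
    · exact absurd h hHne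
    · linarith
  -- final algebra
  rw [hident S hSoo, hGbar, hPjW S hS]
  have hwne : w S ≠ 0 := (hw_pos S).ne'
  have hWne : W S ≠ 0 := hWS0.ne'
  have hcWne : c - W S ≠ 0 := (sub_pos.2 hWSc).ne'
  have hcne : c ≠ 0 := hcpos.ne'
  have hφval : φ S = H S * w S * (c - 2 * W S) / (2 * (W S * (c - W S))) := by
    rw [eq_div_iff (by positivity)]
    linarith [heq2]
  have hsum : H S ^ 2 / (W S * (c - W S)) + (φ S / w S) ^ 2
      = (H S * c) ^ 2 / (4 * (W S * (c - W S)) ^ 2) := by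
    rw [hφval]
    field_simp
    ring
  rw [hsum]
  have hfin : H S ^ 2 / (W S * (c - W S)) / ((H S * c) ^ 2 / (4 * (W S * (c - W S)) ^ 2))
      = 4 * (W S / c * (1 - W S / c)) := by
    rw [div_div_div_comm]
    field_simp
  rw [hfin]


lemma volume_hyperplane' {d : ℕ} (j : Fin d) (s : ℝ) :
    (volume : Measure (Fin d → ℝ)) {x | x j = s} = 0 := by
  obtain ⟨m, rfl⟩ : ∃ m, d = m + 1 := ⟨d - 1, by have := j.pos; omega⟩
  exact volume_hyperplane j s

lemma mu_box_pos {d : ℕ} {R : (Fin d → ℝ) → ℝ} {μ : Measure (Fin d → ℝ)}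
    (hR : Continuous R) (hRpos : ∀ x, 0 < R x)
    (hμ : μ = (volume.restrict (cube d)).withDensity fun x => ENNReal.ofReal (R x))
    [IsFiniteMeasure μ] {A B : Fin d → ℝ} (hnode : IsNode A B) :
    0 < (μ (box A B)).toReal := by
  rw [measure_toReal_mu hR hRpos hμ (measurableSet_box A B) (box_subset_cube hnode)]
  exact setIntegral_pos_of_continuous (measurableSet_box A B) (isCompact_box A B)
    (volume_box_pos hnode) hR hRpos

set_option maxHeartbeats 1000000 in
/-- Under Assumption (A2), the marginal probability content of a terminal
subnode is exponentially small in the accumulated normalized impurity decreases (MDI). -/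
theorem subnode_probability_exponential_bound (d : ℕ)
    (ρ f : (Fin d → ℝ) → ℝ)
    (hρ_cont : ContinuousOn ρ (cube d)) (hρ_pos : ∀ x ∈ cube d, 0 < ρ x)
    (μ : Measure (Fin d → ℝ))
    (hμ : μ = (volume.restrict (cube d)).withDensity fun x => ENNReal.ofReal (ρ x))
    (hprob : IsProbabilityMeasure μ)
    (hf_cont : ContinuousOn f (cube d))
    (η : ℝ) (hη : η ∈ Set.Ioc (0 : ℝ) 1)
    (hA2 : ∀ A B : Fin d → ℝ, IsNode A B → ∀ j : Fin d, ∀ s ∈ Set.Icc (A j) (B j),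
      η * Pj μ A B j s ≤
        (μ {x | A j ≤ x j ∧ x j ≤ s}).toReal / (μ {x | A j ≤ x j ∧ x j ≤ B j}).toReal ∧
      η * (1 - Pj μ A B j s) ≤
        (μ {x | s < x j ∧ x j ≤ B j}).toReal / (μ {x | A j ≤ x j ∧ x j ≤ B j}).toReal)
    (K : ℕ) (A B : ℕ → Fin d → ℝ) (js : ℕ → Fin d) (ss : ℕ → ℝ)
    (hchain : SplitChain μ f K A B js ss)
    (j : Fin d) :
    (μ {x | x ∈ cube d ∧ A K j ≤ x j ∧ x j ≤ B K j}).toReal ≤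
      Real.exp (-(η / 4) * ∑ k ∈ Finset.range K,
        if js k = j then
          impDec μ f (A k) (B k) j (ss k) /
            (impDec μ f (A k) (B k) j (ss k) + Gbar μ ρ f (A k) (B k) j (ss k) ^ 2)
        else 0) := by
  haveI := hprob
  obtain ⟨h0A, h0B, hnodes, hsplit⟩ := hchain
  set R : (Fin d → ℝ) → ℝ := fun x => ρ (clampV x) with hRdef
  have hR : Continuous R := hρ_cont.comp_continuous continuous_clampV clampV_mem_cube
  have hRpos : ∀ x, 0 < R x := fun x => hρ_pos _ (clampV_mem_cube x)
  have hμ' : μ = (volume.restrict (cube d)).withDensity fun x => ENNReal.ofReal (R x) := by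
    rw [hμ]
    apply withDensity_congr_ae
    refine (ae_restrict_iff' measurableSet_cube).2 (ae_of_all _ fun x hx => ?_)
    show ENNReal.ofReal (ρ x) = ENNReal.ofReal (R x)
    rw [hRdef]; simp only; rw [clampV_eq_of_mem hx]
  set term : ℕ → ℝ := fun k =>
    if js k = j then
      impDec μ f (A k) (B k) j (ss k) /
        (impDec μ f (A k) (B k) j (ss k) + Gbar μ ρ f (A k) (B k) j (ss k) ^ 2)
    else 0 with hterm
  have hmeas_Icc : ∀ (α β : ℝ), MeasurableSet {x : Fin d → ℝ | α ≤ x j ∧ x j ≤ β} := by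
    intro α β
    have h : {x : Fin d → ℝ | α ≤ x j ∧ x j ≤ β}
        = (fun x : Fin d → ℝ => x j) ⁻¹' (Set.Icc α β) := rfl
    rw [h]
    exact (measurable_pi_apply j) measurableSet_Icc
  have hmeas_Ioc : ∀ (α β : ℝ), MeasurableSet {x : Fin d → ℝ | α < x j ∧ x j ≤ β} := by
    intro α β
    have h : {x : Fin d → ℝ | α < x j ∧ x j ≤ β}
        = (fun x : Fin d → ℝ => x j) ⁻¹' (Set.Ioc α β) := rfl
    rw [h]
    exact (measurable_pi_apply j) measurableSet_Ioc
  -- main induction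
  have main : ∀ k, k ≤ K →
      (μ {x | A k j ≤ x j ∧ x j ≤ B k j}).toReal ≤
        Real.exp (-(η / 4) * ∑ i ∈ Finset.range k, term i) := by
    intro k
    induction k with
    | zero =>
      intro _
      rw [h0A, h0B]
      simp only [Finset.range_zero, Finset.sum_empty, mul_zero, Real.exp_zero]
      have h1 : μ {x : Fin d → ℝ | (fun _ => (0:ℝ)) j ≤ x j ∧ x j ≤ (fun _ => (1:ℝ)) j} ≤ 1 :=
        prob_le_one
      exact ENNReal.toReal_le_of_le_ofReal zero_le_one (by simpa using h1)
    | succ k ih =>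
      intro hk1
      have hk : k < K := hk1
      have ihk := ih hk.le
      obtain ⟨hss_mem, hss_max, hupdate⟩ := hsplit k hk
      rw [Finset.sum_range_succ, mul_add, Real.exp_add]
      by_cases hjs : js k = j
      · -- split along coordinate j
        rw [hjs] at hss_mem hss_max
        have hnode := hnodes k hk.le
        have hkey := key_ratio_le ρ f hρ_cont hρ_pos μ hμ hprob hf_cont (A k) (B k)
          hnode j (ss k) hss_mem hss_max
        have hA2k := hA2 (A k) (B k) hnode j (ss k) hss_mem
        set p := Pj μ (A k) (B k) j (ss k) with hp
        have hp0 : 0 ≤ p := Pj_nonneg μ (A k) (B k) j (ss k)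
        have hp1 : p ≤ 1 := Pj_le_one μ (A k) (B k) j (ss k)
        set Sle := {x : Fin d → ℝ | A k j ≤ x j ∧ x j ≤ ss k} with hSle
        set Sgt := {x : Fin d → ℝ | ss k < x j ∧ x j ≤ B k j} with hSgt
        set Sab := {x : Fin d → ℝ | A k j ≤ x j ∧ x j ≤ B k j} with hSab
        have hunion : Sle ∪ Sgt = Sab := by
          ext x
          simp only [hSle, hSgt, hSab, Set.mem_union, Set.mem_setOf_eq]
          constructor
          · rintro (⟨h1, h2⟩ | ⟨h1, h2⟩)
            · exact ⟨h1, h2.trans hss_mem.2⟩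
            · exact ⟨hss_mem.1.trans h1.le, h2⟩
          · rintro ⟨h1, h2⟩
            rcases le_or_gt (x j) (ss k) with h | h
            · exact Or.inl ⟨h1, h⟩
            · exact Or.inr ⟨h, h2⟩
        have hdisj : Disjoint Sle Sgt := by
          rw [Set.disjoint_left]
          rintro x ⟨_, h1⟩ ⟨h2, _⟩
          exact absurd h1 (not_le.2 h2)
        have hLRT : (μ Sle).toReal + (μ Sgt).toReal = (μ Sab).toReal := by
          rw [← ENNReal.toReal_add (measure_ne_top μ _) (measure_ne_top μ _),
            ← measure_union hdisj (hmeas_Ioc _ _), hunion]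
        have hTpos : 0 < (μ Sab).toReal := by
          have hb := mu_box_pos hR hRpos hμ' hnode
          have hsub : box (A k) (B k) ⊆ Sab := by
            intro x hx
            have := hx j (Set.mem_univ j)
            exact ⟨this.1, this.2⟩
          exact lt_of_lt_of_le hb
            (ENNReal.toReal_mono (measure_ne_top μ _) (measure_mono hsub))
        have hL : η * p * (μ Sab).toReal ≤ (μ Sle).toReal :=
          (le_div_iff₀ hTpos).1 hA2k.1
        have hRr : η * (1 - p) * (μ Sab).toReal ≤ (μ Sgt).toReal :=
          (le_div_iff₀ hTpos).1 hA2k.2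
        have htermk : term k
            = impDec μ f (A k) (B k) j (ss k) /
              (impDec μ f (A k) (B k) j (ss k) + Gbar μ ρ f (A k) (B k) j (ss k) ^ 2) := by
          rw [hterm]; simp only [hjs, if_true]
        have hterm_nonneg : 0 ≤ term k := by
          rw [htermk]
          apply div_nonneg (impDec_nonneg μ f (A k) (B k) j (ss k))
          exact add_nonneg (impDec_nonneg μ f (A k) (B k) j (ss k)) (sq_nonneg _)
        have hterm_le : term k ≤ 4 * (p * (1 - p)) := by rw [htermk]; exact hkey
        have h4p : term k ≤ 4 * p := by nlinarith
        have h4q : term k ≤ 4 * (1 - p) := by nlinarith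
        have hexp : ∀ q : ℝ, 0 ≤ q → q ≤ 1 → term k ≤ 4 * q →
            1 - η * q ≤ Real.exp (-(η / 4) * term k) := by
          intro q hq0 _ hq4
          have h1 : 1 - η * q ≤ Real.exp (-(η * q)) := by
            have := Real.add_one_le_exp (-(η * q))
            linarith
          have h2 : -(η * q) ≤ -(η / 4) * term k := by
            have : (η / 4) * term k ≤ (η / 4) * (4 * q) :=
              mul_le_mul_of_nonneg_left hq4 (by linarith [hη.1])
            nlinarith [hη.1]
          exact h1.trans (Real.exp_le_exp.2 h2)
        have hchain2 : ∀ q : ℝ, 0 ≤ q → q ≤ 1 → term k ≤ 4 * q →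
            ∀ M : ℝ, 0 ≤ M → M ≤ (μ Sab).toReal - η * q * (μ Sab).toReal →
            M ≤ Real.exp (-(η / 4) * ∑ i ∈ Finset.range k, term i) *
              Real.exp (-(η / 4) * term k) := by
          intro q hq0 hq1 hq4 M hM0 hMle
          have hfac : (μ Sab).toReal - η * q * (μ Sab).toReal
              = (μ Sab).toReal * (1 - η * q) := by ring
          have h3 : M ≤ (μ Sab).toReal * Real.exp (-(η / 4) * term k) := by
            rcases le_or_gt (1 - η * q) 0 with hneg | hpos'
            · refine hMle.trans ?_
              rw [hfac]
              have := Real.exp_pos (-(η / 4) * term k)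
              nlinarith [hTpos]
            · refine hMle.trans ?_
              rw [hfac]
              exact mul_le_mul_of_nonneg_left (hexp q hq0 hq1 hq4) hTpos.le
          refine h3.trans ?_
          exact mul_le_mul_of_nonneg_right ihk (Real.exp_pos _).le |>.trans
            (le_of_eq rfl)
        rcases hupdate with ⟨hA1, hB1⟩ | ⟨hA1, hB1⟩
        · -- left daughter kept : new interval [A k j, ss k]
          have hAj : A (k+1) j = A k j := by rw [hA1]
          have hBj : B (k+1) j = ss k := by rw [hB1, hjs, Function.update_self]
          have hset : {x : Fin d → ℝ | A (k+1) j ≤ x j ∧ x j ≤ B (k+1) j} = Sle := by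
            rw [hAj, hBj]
          rw [hset]
          apply hchain2 (1 - p) (by linarith) (by linarith) h4q
            _ ENNReal.toReal_nonneg
          linarith [hLRT, hRr]
        · -- right daughter kept : new interval [ss k, B k j]
          have hAj : A (k+1) j = ss k := by rw [hA1, hjs, Function.update_self]
          have hBj : B (k+1) j = B k j := by rw [hB1]
          have hset : {x : Fin d → ℝ | A (k+1) j ≤ x j ∧ x j ≤ B (k+1) j}
              = {x : Fin d → ℝ | ss k ≤ x j ∧ x j ≤ B k j} := by
            rw [hAj, hBj]
          rw [hset]
          have hsplit2 : (μ {x : Fin d → ℝ | ss k ≤ x j ∧ x j ≤ B k j}).toReal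
              ≤ (μ Sgt).toReal := by
            have hsub : {x : Fin d → ℝ | ss k ≤ x j ∧ x j ≤ B k j}
                ⊆ Sgt ∪ {x : Fin d → ℝ | x j = ss k} := by
              intro x ⟨h1, h2⟩
              rcases eq_or_lt_of_le h1 with h | h
              · exact Or.inr h.symm
              · exact Or.inl ⟨h, h2⟩
            have hhyp : μ {x : Fin d → ℝ | x j = ss k} = 0 := by
              have h : {x : Fin d → ℝ | x j = ss k}
                  = (fun x : Fin d → ℝ => x j) ⁻¹' {ss k} := rfl
              refine mu_null hμ' ?_ (volume_hyperplane' j (ss k))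
              rw [h]
              exact (measurable_pi_apply j) (measurableSet_singleton (ss k))
            have : μ {x : Fin d → ℝ | ss k ≤ x j ∧ x j ≤ B k j}
                ≤ μ Sgt + μ {x : Fin d → ℝ | x j = ss k} :=
              (measure_mono hsub).trans (measure_union_le _ _)
            rw [hhyp, add_zero] at this
            exact ENNReal.toReal_mono (measure_ne_top μ _) this
          apply le_trans hsplit2
          apply hchain2 p hp0 hp1 h4p _ ENNReal.toReal_nonneg
          linarith [hLRT, hL]
      · -- no split along j
        have hAj : A (k+1) j = A k j := by
          rcases hupdate with ⟨hA1, _⟩ | ⟨hA1, _⟩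
          · rw [hA1]
          · rw [hA1, Function.update_of_ne (fun h => hjs h.symm)]
        have hBj : B (k+1) j = B k j := by
          rcases hupdate with ⟨_, hB1⟩ | ⟨_, hB1⟩
          · rw [hB1, Function.update_of_ne (fun h => hjs h.symm)]
          · rw [hB1]
        have htermk : term k = 0 := by rw [hterm]; simp only [hjs, if_false]
        rw [hAj, hBj, htermk, mul_zero, Real.exp_zero, mul_one]
        exact ihk
  -- conclude
  have hfinal := main K (le_refl K)
  have hsub : {x : Fin d → ℝ | x ∈ cube d ∧ A K j ≤ x j ∧ x j ≤ B K j}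
      ⊆ {x : Fin d → ℝ | A K j ≤ x j ∧ x j ≤ B K j} := fun x hx => hx.2
  have hle : (μ {x | x ∈ cube d ∧ A K j ≤ x j ∧ x j ≤ B K j}).toReal
      ≤ (μ {x | A K j ≤ x j ∧ x j ≤ B K j}).toReal :=
    ENNReal.toReal_mono (measure_ne_top μ _) (measure_mono hsub)
  exact hle.trans hfinal



end RegressionTree
end
end

section
/- In the multivariate node framework, let [0,1]^d = t⁰ ⊃ t¹ ⊃ ⋯ ⊃ t^K be a split chain with coordinates j_k and split points s_k, and suppose Δ(j_k, s_k; t^k) > 0 for every k < K. Then μ(t^K) = ∏_{k=0}^{K−1} (1/2)·(1 + η_k·√( Ḡ_{j_k}(s_k; t^k)² / (Ḡ_{j_k}(s_k; t^k)² + Δ(j_k, s_k; t^k)) )), where η_k = +1 if either (t^{k+1} is the right daughter of t^k and P_{j_k}(s_k|t^k) < 1/2) or (t^{k+1} is the left daughter of t^k and P_{j_k}(s_k|t^k) ≥ 1/2), and η_k = −1 otherwise. -/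
open MeasureTheory Set
open scoped ENNReal NNReal

noncomputable section

namespace RegressionTree6

/-- The unit cube `[0,1]^d`. -/
def cube (d : ℕ) : Set (Fin d → ℝ) := Set.univ.pi fun _ => Set.Icc 0 1

/-- The box (node) `∏_j [A j, B j]`. -/
def box {d : ℕ} (A B : Fin d → ℝ) : Set (Fin d → ℝ) := Set.univ.pi fun i => Set.Icc (A i) (B i)

/-- `A`, `B` describe a node: a nondegenerate box inside the unit cube. -/
def IsNode {d : ℕ} (A B : Fin d → ℝ) : Prop := ∀ i, 0 ≤ A i ∧ A i < B i ∧ B i ≤ 1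

/-- Conditional expectation `E_μ[f | t] = (∫_t f dμ)/μ(t)`. -/
def cAvg {d : ℕ} (μ : Measure (Fin d → ℝ)) (f : (Fin d → ℝ) → ℝ) (t : Set (Fin d → ℝ)) : ℝ :=
  (∫ x in t, f x ∂μ) / (μ t).toReal

/-- Left daughter node `{x ∈ t : x_j ≤ s}`. -/
def leftD {d : ℕ} (A B : Fin d → ℝ) (j : Fin d) (s : ℝ) : Set (Fin d → ℝ) :=
  {x | x ∈ box A B ∧ x j ≤ s}

/-- Right daughter node `{x ∈ t : x_j > s}`. -/
def rightD {d : ℕ} (A B : Fin d → ℝ) (j : Fin d) (s : ℝ) : Set (Fin d → ℝ) :=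
  {x | x ∈ box A B ∧ s < x j}

/-- Conditional probability content of the left daughter node, `P_j(s|t)`. -/
def Pj {d : ℕ} (μ : Measure (Fin d → ℝ)) (A B : Fin d → ℝ) (j : Fin d) (s : ℝ) : ℝ :=
  (μ (leftD A B j s)).toReal / (μ (box A B)).toReal

/-- Impurity decrease `Δ(j,s;t) = P_j(s|t)(1 − P_j(s|t))(E[f|t_L] − E[f|t_R])²`. -/
def impDec {d : ℕ} (μ : Measure (Fin d → ℝ)) (f : (Fin d → ℝ) → ℝ) (A B : Fin d → ℝ)
    (j : Fin d) (s : ℝ) : ℝ :=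
  Pj μ A B j s * (1 - Pj μ A B j s) *
    (cAvg μ f (leftD A B j s) - cAvg μ f (rightD A B j s)) ^ 2

/-- Conditional partial dependence function `F̄_j(s;t)` (the `j`-th coordinate of the
free variable is replaced by `s` and the remaining coordinates are averaged against the
density `ρ` over the node; the redundant `j`-th integration cancels between numerator and
denominator). -/
def Fbar {d : ℕ} (ρ f : (Fin d → ℝ) → ℝ) (A B : Fin d → ℝ) (j : Fin d) (s : ℝ) : ℝ :=
  (∫ x in box A B, f (Function.update x j s) * ρ (Function.update x j s)) /
    ∫ x in box A B, ρ (Function.update x j s)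

/-- Centered conditional partial dependence function `Ḡ_j(s;t) = F̄_j(s;t) − E_μ[f|t]`. -/
def Gbar {d : ℕ} (μ : Measure (Fin d → ℝ)) (ρ f : (Fin d → ℝ) → ℝ) (A B : Fin d → ℝ)
    (j : Fin d) (s : ℝ) : ℝ :=
  Fbar ρ f A B j s - cAvg μ f (box A B)

/-- A split chain of depth `K`: nodes `t^k = box (A k) (B k)` starting at the unit cube,
where at each step `k < K` the split point `s_k` maximizes the impurity decrease along
coordinate `j_k` and `t^{k+1}` is the corresponding left or right daughter node. -/
def SplitChain {d : ℕ} (μ : Measure (Fin d → ℝ)) (f : (Fin d → ℝ) → ℝ)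
    (K : ℕ) (A B : ℕ → Fin d → ℝ) (js : ℕ → Fin d) (ss : ℕ → ℝ) : Prop :=
  (A 0 = fun _ => 0) ∧ (B 0 = fun _ => 1) ∧
  (∀ k, k ≤ K → IsNode (A k) (B k)) ∧
  ∀ k, k < K →
    ss k ∈ Set.Icc (A k (js k)) (B k (js k)) ∧
    (∀ s ∈ Set.Icc (A k (js k)) (B k (js k)),
      impDec μ f (A k) (B k) (js k) s ≤ impDec μ f (A k) (B k) (js k) (ss k)) ∧
    ((A (k + 1) = A k ∧ B (k + 1) = Function.update (B k) (js k) (ss k)) ∨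
      (A (k + 1) = Function.update (A k) (js k) (ss k) ∧ B (k + 1) = B k))


section Helpers

variable {d : ℕ}

lemma mem_box {A B : Fin d → ℝ} {x : Fin d → ℝ} :
    x ∈ box A B ↔ ∀ i, A i ≤ x i ∧ x i ≤ B i := by
  simp only [box, Set.mem_pi, Set.mem_univ, forall_true_left, Set.mem_Icc]

lemma measurableSet_box (A B : Fin d → ℝ) : MeasurableSet (box A B) :=
  MeasurableSet.univ_pi fun _ => measurableSet_Icc

lemma isCompact_box (A B : Fin d → ℝ) : IsCompact (box A B) :=
  isCompact_univ_pi fun _ => isCompact_Icc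

lemma measurableSet_cube : MeasurableSet (cube d) :=
  MeasurableSet.univ_pi fun _ => measurableSet_Icc

lemma box_subset_cube {A B : Fin d → ℝ} (h : IsNode A B) : box A B ⊆ cube d := by
  intro x hx i _
  have hi := mem_box.1 hx i
  exact ⟨le_trans (h i).1 hi.1, le_trans hi.2 (h i).2.2⟩

lemma box_mono {A B A' B' : Fin d → ℝ} (hA : ∀ i, A i ≤ A' i) (hB : ∀ i, B' i ≤ B i) :
    box A' B' ⊆ box A B := by
  intro x hx
  rw [mem_box] at hx ⊢
  exact fun i => ⟨le_trans (hA i) (hx i).1, le_trans (hx i).2 (hB i)⟩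

/-- The clamping map onto the unit cube. -/
def clamp (x : Fin d → ℝ) : Fin d → ℝ := fun i => max 0 (min 1 (x i))

lemma continuous_clamp : Continuous (clamp (d := d)) := by
  unfold clamp; fun_prop

lemma clamp_mem_cube (x : Fin d → ℝ) : clamp x ∈ cube d := by
  intro i _
  refine ⟨le_max_left _ _, ?_⟩
  exact max_le zero_le_one (min_le_left _ _)

lemma clamp_eq_self {x : Fin d → ℝ} (hx : x ∈ cube d) : clamp x = x := by
  funext i
  have hi : x i ∈ Set.Icc (0:ℝ) 1 := hx i trivial
  simp [clamp, min_eq_right hi.2, max_eq_right hi.1]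

lemma continuous_update (j : Fin d) (s : ℝ) :
    Continuous fun x : Fin d → ℝ => Function.update x j s := by
  refine continuous_pi fun i => ?_
  by_cases h : i = j
  · subst h; simpa [Function.update_self] using continuous_const
  · simpa [Function.update_of_ne h] using continuous_apply i

end Helpers

section Slice

variable {n : ℕ}

/-- Integral of `H` over the reduced box, with `j`-th coordinate frozen at `u`. -/
def slice (H : (Fin (n+1) → ℝ) → ℝ) (A B : Fin (n+1) → ℝ) (j : Fin (n+1)) (u : ℝ) : ℝ :=
  ∫ y in box (fun i => A (j.succAbove i)) (fun i => B (j.succAbove i)), H (j.insertNth u y)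

lemma continuous_insertNth (j : Fin (n+1)) :
    Continuous fun p : ℝ × (Fin n → ℝ) => (j.insertNth p.1 p.2 : Fin (n+1) → ℝ) := by
  refine continuous_pi fun i => ?_
  by_cases h : i = j
  · subst h
    simpa [Fin.insertNth_apply_same] using continuous_fst
  · obtain ⟨i', rfl⟩ := Fin.exists_succAbove_eq h
    simpa [Fin.insertNth_apply_succAbove] using (by fun_prop :
      Continuous fun p : ℝ × (Fin n → ℝ) => p.2 i')

lemma box_preimage (A B : Fin (n+1) → ℝ) (j : Fin (n+1)) :
    box A B = (MeasurableEquiv.piFinSuccAbove (fun _ => ℝ) j) ⁻¹'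
      ((Set.Icc (A j) (B j)) ×ˢ
        box (fun i => A (j.succAbove i)) (fun i => B (j.succAbove i))) := by
  ext x
  simp only [Set.mem_preimage, MeasurableEquiv.piFinSuccAbove_apply, Set.mem_prod, mem_box]
  rw [show ((Fin.insertNthEquiv (fun _ => ℝ) j).symm x) = (x j, fun i => x (j.succAbove i)) from rfl]
  constructor
  · intro h
    exact ⟨⟨(h j).1, (h j).2⟩, fun i => h _⟩
  · rintro ⟨hj, hrest⟩ i
    by_cases h : i = j
    · subst h; exact ⟨hj.1, hj.2⟩
    · obtain ⟨i', rfl⟩ := Fin.exists_succAbove_eq h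
      exact hrest i'

lemma fubini_box (H : (Fin (n+1) → ℝ) → ℝ) (hH : Continuous H)
    (A B : Fin (n+1) → ℝ) (j : Fin (n+1)) (hj : A j ≤ B j) :
    ∫ x in box A B, H x = ∫ u in (A j)..(B j), slice H A B j u := by
  have hmp := volume_preserving_piFinSuccAbove (fun _ : Fin (n+1) => ℝ) j
  have hemb := (MeasurableEquiv.piFinSuccAbove (fun _ : Fin (n+1) => ℝ) j).measurableEmbedding
  have hsymm : ∀ z : ℝ × (Fin n → ℝ),
      (MeasurableEquiv.piFinSuccAbove (fun _ : Fin (n+1) => ℝ) j).symm z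
        = j.insertNth z.1 z.2 := by
    intro z
    simp [MeasurableEquiv.piFinSuccAbove_symm_apply, Fin.insertNthEquiv]
  have key : ∫ x in box A B, H x
      = ∫ z in (Set.Icc (A j) (B j)) ×ˢ
          box (fun i => A (j.succAbove i)) (fun i => B (j.succAbove i)),
            H (j.insertNth z.1 z.2) := by
    rw [box_preimage A B j]
    rw [← hmp.setIntegral_preimage_emb hemb
      (fun z => H (j.insertNth z.1 z.2)) _]
    refine setIntegral_congr_fun
      ((MeasurableEquiv.piFinSuccAbove (fun _ => ℝ) j).measurable
        (measurableSet_Icc.prod (measurableSet_box _ _))) fun x _ => ?_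
    show H x = H (j.insertNth _ _)
    congr 1
    exact (Fin.insertNth_self_removeNth j x).symm
  rw [key]
  have hcont : Continuous fun z : ℝ × (Fin n → ℝ) => H (j.insertNth z.1 z.2) :=
    hH.comp (continuous_insertNth j)
  have hint : IntegrableOn (fun z : ℝ × (Fin n → ℝ) => H (j.insertNth z.1 z.2))
      ((Set.Icc (A j) (B j)) ×ˢ
        box (fun i => A (j.succAbove i)) (fun i => B (j.succAbove i))) volume := by
    exact hcont.continuousOn.integrableOn_compact (isCompact_Icc.prod (isCompact_box _ _))
  rw [Measure.volume_eq_prod] at hint ⊢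
  rw [MeasureTheory.setIntegral_prod _ hint]
  rw [intervalIntegral.integral_of_le hj, ← integral_Icc_eq_integral_Ioc]
  rfl

lemma slice_continuous (H : (Fin (n+1) → ℝ) → ℝ) (hH : Continuous H)
    (A B : Fin (n+1) → ℝ) (j : Fin (n+1)) : Continuous (slice H A B j) := by
  apply continuous_parametric_integral_of_continuous
  · exact hH.comp (continuous_insertNth j)
  · exact isCompact_box _ _

lemma slice_pos {H : (Fin (n+1) → ℝ) → ℝ} (hH : Continuous H)
    {A B : Fin (n+1) → ℝ} (hAB : ∀ i, A i < B i) {j : Fin (n+1)} {u : ℝ}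
    (hpos : ∀ y ∈ box (fun i => A (j.succAbove i)) (fun i => B (j.succAbove i)),
      0 < H (j.insertNth u y)) :
    0 < slice H A B j u := by
  set T := box (fun i => A (j.succAbove i)) (fun i => B (j.succAbove i)) with hT
  have hmeas : MeasurableSet T := measurableSet_box _ _
  have hnn : 0 ≤ᵐ[volume.restrict T] fun y => H (j.insertNth u y) :=
    (ae_restrict_iff' hmeas).2 (Filter.Eventually.of_forall fun y hy => (hpos y hy).le)
  have hint : IntegrableOn (fun y => H (j.insertNth u y)) T volume :=
    ((hH.comp ((continuous_insertNth j).comp (Continuous.prodMk_right u))).continuousOn).integrableOn_compact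
      (isCompact_box _ _)
  rw [slice, ← hT]
  rw [setIntegral_pos_iff_support_of_nonneg_ae hnn hint]
  have hsub : T ⊆ Function.support (fun y => H (j.insertNth u y)) ∩ T :=
    fun y hy => ⟨ne_of_gt (hpos y hy), hy⟩
  refine lt_of_lt_of_le ?_ (measure_mono hsub)
  rw [hT, box, volume_pi_pi]
  rw [CanonicallyOrderedAdd.prod_pos]
  intro i _
  rw [Real.volume_Icc]
  exact ENNReal.ofReal_pos.2 (sub_pos.2 (hAB _))

end Slice

section MeasureLemmas

variable {d : ℕ} {ρ : (Fin d → ℝ) → ℝ}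

lemma mu_toReal (hρc : Continuous ρ) (hρnn : ∀ x, 0 ≤ ρ x)
    {S : Set (Fin d → ℝ)} (hS : MeasurableSet S) (hsub : S ⊆ cube d) :
    (((volume.restrict (cube d)).withDensity fun x => ENNReal.ofReal (ρ x)) S).toReal
      = ∫ x in S, ρ x := by
  rw [withDensity_apply _ hS, Measure.restrict_restrict hS,
    Set.inter_eq_self_of_subset_left hsub]
  rw [MeasureTheory.integral_eq_lintegral_of_nonneg_ae
    (Filter.Eventually.of_forall fun x => hρnn x)
    (hρc.aestronglyMeasurable)]

lemma integral_mu (hρc : Continuous ρ) (hρnn : ∀ x, 0 ≤ ρ x)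
    (g : (Fin d → ℝ) → ℝ)
    {S : Set (Fin d → ℝ)} (hS : MeasurableSet S) (hsub : S ⊆ cube d) :
    ∫ x in S, g x ∂((volume.restrict (cube d)).withDensity fun x => ENNReal.ofReal (ρ x))
      = ∫ x in S, g x * ρ x := by
  have h1 : ((volume.restrict (cube d)).withDensity
      fun x => ENNReal.ofReal (ρ x)).restrict S
      = (volume.restrict S).withDensity fun x => ENNReal.ofReal (ρ x) := by
    rw [restrict_withDensity hS, Measure.restrict_restrict hS,
      Set.inter_eq_self_of_subset_left hsub]
  rw [show (∫ x in S, g x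
      ∂((volume.restrict (cube d)).withDensity fun x => ENNReal.ofReal (ρ x)))
      = ∫ x, g x ∂(((volume.restrict (cube d)).withDensity
        fun x => ENNReal.ofReal (ρ x)).restrict S) from rfl, h1]
  have h2 : (fun x => ENNReal.ofReal (ρ x)) = fun x => ((ρ x).toNNReal : ℝ≥0∞) := rfl
  rw [h2, integral_withDensity_eq_integral_smul (hρc.measurable.real_toNNReal) g]
  refine setIntegral_congr_fun hS fun x _ => ?_
  rw [NNReal.smul_def, smul_eq_mul, Real.coe_toNNReal _ (hρnn x), mul_comm]

lemma mu_cube_eq_one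
    (μ : Measure (Fin d → ℝ))
    (hμ : μ = (volume.restrict (cube d)).withDensity fun x => ENNReal.ofReal (ρ x))
    (hprob : IsProbabilityMeasure μ) : μ (cube d) = 1 := by
  have h : μ (cube d) = μ Set.univ := by
    rw [hμ, withDensity_apply _ (measurableSet_cube), withDensity_apply _ MeasurableSet.univ,
      Measure.restrict_restrict (measurableSet_cube), Set.inter_self, Measure.restrict_univ]
  rw [h, hprob.measure_univ]

end MeasureLemmas



section Step

variable {n : ℕ}

lemma volume_hyperplane (j : Fin (n+1)) (c : ℝ) :
    volume {x : Fin (n+1) → ℝ | x j = c} = 0 := by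
  have hmp := volume_preserving_piFinSuccAbove (fun _ : Fin (n+1) => ℝ) j
  have hset : {x : Fin (n+1) → ℝ | x j = c}
      = (MeasurableEquiv.piFinSuccAbove (fun _ => ℝ) j) ⁻¹' ({c} ×ˢ Set.univ) := by
    ext x
    simp [MeasurableEquiv.piFinSuccAbove_apply, Set.mem_prod]
  rw [hset, hmp.measure_preimage ((measurableSet_singleton c).prod MeasurableSet.univ).nullMeasurableSet]
  rw [Measure.volume_eq_prod, Measure.prod_prod, Real.volume_singleton, zero_mul]

lemma update_insertNth (j : Fin (n+1)) (u s : ℝ) (y : Fin n → ℝ) :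
    Function.update (j.insertNth u y : Fin (n+1) → ℝ) j s = j.insertNth s y := by
  funext i
  by_cases h : i = j
  · subst h; simp
  · obtain ⟨i', rfl⟩ := Fin.exists_succAbove_eq h
    simp [Function.update_of_ne h]

open Classical in
lemma step_formula (ρ f : (Fin (n+1) → ℝ) → ℝ)
    (hρc : Continuous ρ) (hfc : Continuous f)
    (hρpos : ∀ x, 0 < ρ x)
    (μ : Measure (Fin (n+1) → ℝ))
    (hμ : μ = (volume.restrict (cube (n+1))).withDensity fun x => ENNReal.ofReal (ρ x))
    (A B A' B' : Fin (n+1) → ℝ) (hnode : IsNode A B)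
    (j : Fin (n+1)) (s : ℝ)
    (hs : s ∈ Set.Icc (A j) (B j))
    (hmax : ∀ u ∈ Set.Icc (A j) (B j), impDec μ f A B j u ≤ impDec μ f A B j s)
    (hstep : (A' = A ∧ B' = Function.update B j s) ∨ (A' = Function.update A j s ∧ B' = B))
    (hpos : 0 < impDec μ f A B j s) :
    (μ (box A' B')).toReal =
      (1 +
        (if (A' = Function.update A j s ∧ B' = B) ∧ Pj μ A B j s < 1 / 2 ∨
              (A' = A ∧ B' = Function.update B j s) ∧ 1 / 2 ≤ Pj μ A B j s
          then (1:ℝ) else -1) *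
        Real.sqrt (Gbar μ ρ f A B j s ^ 2 /
          (Gbar μ ρ f A B j s ^ 2 + impDec μ f A B j s))) / 2 *
      (μ (box A B)).toReal := by
  have hρnn : ∀ x, 0 ≤ ρ x := fun x => (hρpos x).le
  set a := A j with ha
  set b := B j with hb
  have hab : a < b := (hnode j).2.1
  have hcube : box A B ⊆ cube (n+1) := box_subset_cube hnode
  set fρ : (Fin (n+1) → ℝ) → ℝ := fun x => f x * ρ x with hfρdef
  have hfρc : Continuous fρ := hfc.mul hρc
  set g : ℝ → ℝ := slice ρ A B j with hgdef
  set gf : ℝ → ℝ := slice fρ A B j with hgfdef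
  have hgc : Continuous g := slice_continuous ρ hρc A B j
  have hgfc : Continuous gf := slice_continuous fρ hfρc A B j
  set m : ℝ → ℝ := fun u => ∫ v in a..u, g v with hmdef
  set L : ℝ → ℝ := fun u => ∫ v in a..u, gf v with hLdef
  -- updates don't change slices
  have hBu : ∀ (c : ℝ) (i : Fin n), (Function.update B j c) (j.succAbove i) = B (j.succAbove i) :=
    fun c i => Function.update_of_ne (Fin.succAbove_ne j i) _ _
  have hAu : ∀ (c : ℝ) (i : Fin n), (Function.update A j c) (j.succAbove i) = A (j.succAbove i) :=
    fun c i => Function.update_of_ne (Fin.succAbove_ne j i) _ _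
  have hsliceB : ∀ (H : (Fin (n+1) → ℝ) → ℝ) (c : ℝ),
      slice H A (Function.update B j c) j = slice H A B j := by
    intro H c; unfold slice; simp only [hBu]
  have hsliceA : ∀ (H : (Fin (n+1) → ℝ) → ℝ) (c : ℝ),
      slice H (Function.update A j c) B j = slice H A B j := by
    intro H c; unfold slice; simp only [hAu]
  -- left boxes
  have key_left : ∀ u, a ≤ u → u ≤ b →
      (μ (box A (Function.update B j u))).toReal = m u ∧
      (∫ x in box A (Function.update B j u), f x ∂μ) = L u := by
    intro u hau hub
    have hsub1 : box A (Function.update B j u) ⊆ box A B := by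
      refine box_mono (fun i => le_refl _) fun i => ?_
      by_cases h : i = j
      · subst h; rw [Function.update_self]; exact hub
      · rw [Function.update_of_ne h]
    have hsub : box A (Function.update B j u) ⊆ cube (n+1) := hsub1.trans hcube
    have hju : (Function.update B j u) j = u := Function.update_self j u B
    constructor
    · rw [hμ, mu_toReal hρc hρnn (measurableSet_box _ _) hsub,
        fubini_box ρ hρc A (Function.update B j u) j (by rw [hju]; exact hau),
        hju, hsliceB]
    · rw [hμ, integral_mu hρc hρnn f (measurableSet_box _ _) hsub,
        fubini_box fρ hfρc A (Function.update B j u) j (by rw [hju]; exact hau),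
        hju, hsliceB]
  have key_box : (μ (box A B)).toReal = m b ∧ (∫ x in box A B, f x ∂μ) = L b := by
    constructor
    · rw [hμ, mu_toReal hρc hρnn (measurableSet_box _ _) hcube, fubini_box ρ hρc A B j hab.le]
    · rw [hμ, integral_mu hρc hρnn f (measurableSet_box _ _) hcube,
        fubini_box fρ hfρc A B j hab.le]
  have key_right : ∀ u, a ≤ u → u ≤ b →
      (μ (box (Function.update A j u) B)).toReal = m b - m u ∧
      (∫ x in box (Function.update A j u) B, f x ∂μ) = L b - L u := by
    intro u hau hub
    have hsub1 : box (Function.update A j u) B ⊆ box A B := by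
      refine box_mono (fun i => ?_) fun i => le_refl _
      by_cases h : i = j
      · subst h; rw [Function.update_self]; exact hau
      · rw [Function.update_of_ne h]
    have hsub : box (Function.update A j u) B ⊆ cube (n+1) := hsub1.trans hcube
    have hju : (Function.update A j u) j = u := Function.update_self j u A
    constructor
    · rw [hμ, mu_toReal hρc hρnn (measurableSet_box _ _) hsub,
        fubini_box ρ hρc (Function.update A j u) B j (by rw [hju]; exact hub),
        hju, hsliceA]
      exact (intervalIntegral.integral_interval_sub_left (hgc.intervalIntegrable a b)
        (hgc.intervalIntegrable a u)).symm
    · rw [hμ, integral_mu hρc hρnn f (measurableSet_box _ _) hsub,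
        fubini_box fρ hfρc (Function.update A j u) B j (by rw [hju]; exact hub),
        hju, hsliceA]
      exact (intervalIntegral.integral_interval_sub_left (hgfc.intervalIntegrable a b)
        (hgfc.intervalIntegrable a u)).symm
  -- leftD is a box
  have hleftD : ∀ u, u ≤ b → leftD A B j u = box A (Function.update B j u) := by
    intro u hub
    ext x
    simp only [leftD, Set.mem_setOf_eq, mem_box]
    constructor
    · rintro ⟨hx, hxj⟩ i
      by_cases h : i = j
      · subst h; rw [Function.update_self]; exact ⟨(hx i).1, hxj⟩
      · rw [Function.update_of_ne h]; exact hx i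
    · intro h
      have hj := h j
      rw [Function.update_self] at hj
      refine ⟨fun i => ?_, hj.2⟩
      by_cases hij : i = j
      · subst hij; exact ⟨hj.1, hj.2.trans hub⟩
      · have := h i; rwa [Function.update_of_ne hij] at this
  -- rightD is a.e. a box
  have hμnull : ∀ c : ℝ, μ {x : Fin (n+1) → ℝ | x j = c} = 0 := by
    intro c
    have hmeas : MeasurableSet {x : Fin (n+1) → ℝ | x j = c} :=
      measurableSet_eq_fun (measurable_pi_apply j) measurable_const
    rw [hμ, withDensity_apply _ hmeas]
    have h0 : (volume.restrict (cube (n+1))) {x : Fin (n+1) → ℝ | x j = c} = 0 := by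
      rw [Measure.restrict_apply hmeas]
      exact measure_mono_null Set.inter_subset_left (volume_hyperplane j c)
    exact setLIntegral_measure_zero _ _ h0
  have key_rightD : ∀ u, a ≤ u → u ≤ b →
      (μ (rightD A B j u)).toReal = m b - m u ∧
      (∫ x in rightD A B j u, f x ∂μ) = L b - L u := by
    intro u hau hub
    have hae : rightD A B j u =ᵐ[μ] box (Function.update A j u) B := by
      rw [ae_eq_set]
      constructor
      · have hsub : rightD A B j u \ box (Function.update A j u) B = ∅ := by
          rw [Set.diff_eq_empty]
          rintro x ⟨hxb, hlt⟩
          rw [mem_box] at hxb ⊢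
          intro i
          by_cases h : i = j
          · subst h; rw [Function.update_self]; exact ⟨hlt.le, (hxb i).2⟩
          · rw [Function.update_of_ne h]; exact hxb i
        rw [hsub]; exact measure_empty
      · refine measure_mono_null ?_ (hμnull u)
        rintro x ⟨hxb, hxr⟩
        rw [mem_box] at hxb
        have h1 : u ≤ x j := by
          have := (hxb j).1; rwa [Function.update_self] at this
        have hxbox : x ∈ box A B := by
          rw [mem_box]
          intro i
          by_cases h : i = j
          · subst h; exact ⟨hau.trans h1, (hxb i).2⟩
          · have := hxb i; rwa [Function.update_of_ne h] at this
        have h2 : ¬ u < x j := fun hlt => hxr ⟨hxbox, hlt⟩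
        exact le_antisymm (not_lt.1 h2) h1
    refine ⟨?_, by rw [setIntegral_congr_set hae]; exact (key_right u hau hub).2⟩
    rw [measure_congr hae]
    exact (key_right u hau hub).1
  -- positivity and monotonicity
  have hgpos : ∀ u, 0 < g u := fun u =>
    slice_pos hρc (fun i => (hnode _).2.1) (fun y _ => hρpos _)
  have hmono : ∀ {c c' : ℝ}, c < c' → m c < m c' := by
    intro c c' hcc
    have h1 : m c' - m c = ∫ v in c..c', g v :=
      intervalIntegral.integral_interval_sub_left (hgc.intervalIntegrable a c')
        (hgc.intervalIntegrable a c)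
    have h2 : 0 < ∫ v in c..c', g v :=
      intervalIntegral.intervalIntegral_pos_of_pos_on (hgc.intervalIntegrable c c')
        (fun x _ => hgpos x) hcc
    linarith
  have hma : m a = 0 := intervalIntegral.integral_same
  set M := m b with hMdef
  set T := L b with hTdef
  have hMpos : 0 < M := hma ▸ hmono hab
  have hMne : M ≠ 0 := ne_of_gt hMpos
  -- values of Pj and cAvg
  have hPj : ∀ u, a ≤ u → u ≤ b → Pj μ A B j u = m u / M := by
    intro u hau hub
    rw [Pj, hleftD u hub, (key_left u hau hub).1, key_box.1]
  have hcl : ∀ u, a ≤ u → u ≤ b → cAvg μ f (leftD A B j u) = L u / m u := by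
    intro u hau hub
    rw [cAvg, hleftD u hub, (key_left u hau hub).1, (key_left u hau hub).2]
  have hcr : ∀ u, a ≤ u → u ≤ b → cAvg μ f (rightD A B j u) = (T - L u) / (M - m u) := by
    intro u hau hub
    rw [cAvg, (key_rightD u hau hub).1, (key_rightD u hau hub).2]
  -- interiority
  have hP01 : 0 < Pj μ A B j s ∧ Pj μ A B j s < 1 := by
    have h := hpos
    rw [impDec] at h
    have hy := sq_nonneg (cAvg μ f (leftD A B j s) - cAvg μ f (rightD A B j s))
    set P := Pj μ A B j s with hP
    constructor
    · by_contra hc; push_neg at hc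
      nlinarith [mul_nonneg (mul_nonneg (neg_nonneg.2 hc) (by linarith : (0:ℝ) ≤ 1 - P)) hy]
    · by_contra hc; push_neg at hc
      nlinarith [mul_nonneg (mul_nonneg (by linarith : (0:ℝ) ≤ P) (by linarith : (0:ℝ) ≤ P - 1)) hy]
  have hmspos : 0 < m s ∧ m s < M := by
    have h1 := hP01.1; have h2 := hP01.2
    rw [hPj s hs.1 hs.2] at h1 h2
    constructor
    · rw [div_pos_iff] at h1
      rcases h1 with ⟨h, _⟩ | ⟨_, h⟩
      · exact h
      · linarith
    · exact (div_lt_one hMpos).1 h2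
  have hsa : a < s := by
    rcases lt_or_eq_of_le hs.1 with h | h
    · exact h
    · exfalso; rw [← h, hma] at hmspos; exact lt_irrefl 0 hmspos.1
  have hsb : s < b := by
    rcases lt_or_eq_of_le hs.2 with h | h
    · exact h
    · exfalso; rw [h] at hmspos; exact lt_irrefl M hmspos.2
  -- impurity decrease as a rational function of the split point
  have himp : ∀ u, a < u → u < b →
      impDec μ f A B j u = (L u * M - m u * T)^2 / (M^2 * (m u * (M - m u))) := by
    intro u hau hub
    have hmu : 0 < m u := hma ▸ hmono hau
    have hMu : m u < M := hmono hub
    have h1 : m u ≠ 0 := ne_of_gt hmu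
    have h2 : M - m u ≠ 0 := ne_of_gt (by linarith)
    rw [impDec, hPj u hau.le hub.le, hcl u hau.le hub.le, hcr u hau.le hub.le]
    field_simp
    ring
  -- the rational function has a local max at s
  have hloc : IsLocalMax (fun u => (L u * M - m u * T)^2 / (M^2 * (m u * (M - m u)))) s := by
    filter_upwards [Ioo_mem_nhds hsa hsb] with u hu
    rw [← himp u hu.1 hu.2, ← himp s hsa hsb]
    exact hmax u ⟨hu.1.le, hu.2.le⟩
  -- derivatives
  have hm' : HasDerivAt m (g s) s :=
    intervalIntegral.integral_hasDerivAt_right (hgc.intervalIntegrable a s)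
      (hgc.stronglyMeasurableAtFilter volume (nhds s)) hgc.continuousAt
  have hL' : HasDerivAt L (gf s) s :=
    intervalIntegral.integral_hasDerivAt_right (hgfc.intervalIntegrable a s)
      (hgfc.stronglyMeasurableAtFilter volume (nhds s)) hgfc.continuousAt
  have hnum' : HasDerivAt (fun u => (L u * M - m u * T)^2)
      (2 * (L s * M - m s * T) * (gf s * M - g s * T)) s := by
    have h := ((hL'.mul_const M).sub (hm'.mul_const T)).pow 2
    refine h.congr_deriv ?_
    norm_num [Pi.sub_apply]
  have hden' : HasDerivAt (fun u => M^2 * (m u * (M - m u)))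
      (M^2 * (g s * (M - m s) + m s * (0 - g s))) s := by
    exact (hm'.mul ((hasDerivAt_const s M).sub hm')).const_mul (M^2)
  have hdenne : M^2 * (m s * (M - m s)) ≠ 0 := by
    have h3 : 0 < M - m s := sub_pos.2 hmspos.2
    exact ne_of_gt (mul_pos (pow_pos hMpos 2) (mul_pos hmspos.1 h3))
  have hdiv := hnum'.div hden' hdenne
  have hzero := hloc.hasDerivAt_eq_zero hdiv
  have hkey : 2 * (L s * M - m s * T) * (gf s * M - g s * T) * (M^2 * (m s * (M - m s)))
      - (L s * M - m s * T)^2 * (M^2 * (g s * (M - m s) + m s * (0 - g s))) = 0 := by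
    rcases div_eq_zero_iff.1 hzero with h | h
    · exact h
    · exact absurd h (pow_ne_zero 2 hdenne)
  -- value of the partial dependence function
  have hFnum : (∫ x in box A B, f (Function.update x j s) * ρ (Function.update x j s))
      = (b - a) * gf s := by
    have hHc : Continuous fun x : Fin (n+1) → ℝ =>
        f (Function.update x j s) * ρ (Function.update x j s) :=
      (hfc.comp (continuous_update j s)).mul (hρc.comp (continuous_update j s))
    rw [fubini_box _ hHc A B j hab.le]
    have hsl : ∀ u, slice (fun x => f (Function.update x j s) * ρ (Function.update x j s))
        A B j u = gf s := by
      intro u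
      unfold slice
      simp only [update_insertNth]
      rfl
    simp only [hsl]
    rw [intervalIntegral.integral_const, smul_eq_mul]
  have hFden : (∫ x in box A B, ρ (Function.update x j s)) = (b - a) * g s := by
    have hHc : Continuous fun x : Fin (n+1) → ℝ => ρ (Function.update x j s) :=
      hρc.comp (continuous_update j s)
    rw [fubini_box _ hHc A B j hab.le]
    have hsl : ∀ u, slice (fun x => ρ (Function.update x j s)) A B j u = g s := by
      intro u
      unfold slice
      simp only [update_insertNth]
      rfl
    simp only [hsl]
    rw [intervalIntegral.integral_const, smul_eq_mul]
  have hFbar : Fbar ρ f A B j s = gf s / g s := by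
    rw [Fbar, hFnum, hFden, mul_div_mul_left _ _ (ne_of_gt (sub_pos.2 hab))]
  have hGbar : Gbar μ ρ f A B j s = gf s / g s - T / M := by
    rw [Gbar, hFbar, cAvg, key_box.1, key_box.2]
  -- algebraic endgame
  set p := m s with hpdef
  have hp : 0 < p := hmspos.1
  have hq : 0 < M - p := sub_pos.2 hmspos.2
  have hgs : 0 < g s := hgpos s
  have hΔ : impDec μ f A B j s = (L s * M - p * T)^2 / (M^2 * (p * (M - p))) :=
    himp s hsa hsb
  have hNne : L s * M - p * T ≠ 0 := by
    intro h
    rw [hΔ, h] at hpos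
    norm_num at hpos
  have hN' : gf s * M - g s * T = Gbar μ ρ f A B j s * (g s * M) := by
    rw [hGbar]
    field_simp
  have hfact : (L s * M - p * T) * M^2 * g s *
      (2 * Gbar μ ρ f A B j s * M * (p * (M - p)) - (L s * M - p * T) * ((M - p) - p)) = 0 := by
    rw [hN'] at hkey
    linear_combination hkey
  have hE2 : 2 * Gbar μ ρ f A B j s * M * (p * (M - p))
      = (L s * M - p * T) * ((M - p) - p) := by
    rcases mul_eq_zero.1 hfact with h | h
    · exact absurd h (mul_ne_zero (mul_ne_zero hNne (pow_ne_zero 2 hMne)) (ne_of_gt hgs))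
    · linarith
  have hGval : Gbar μ ρ f A B j s = (L s * M - p * T) * ((M - p) - p) / (2 * M * (p * (M - p))) := by
    field_simp
    linear_combination hE2
  have hratio : Gbar μ ρ f A B j s ^ 2 /
      (Gbar μ ρ f A B j s ^ 2 + impDec μ f A B j s) = ((M - p) - p)^2 / M^2 := by
    have hsum : Gbar μ ρ f A B j s ^ 2 + impDec μ f A B j s
        = (L s * M - p * T)^2 / (4 * p^2 * (M - p)^2) := by
      rw [hΔ, hGval]
      have hM2 : M = p + (M - p) := by ring
      field_simp
      ring
    rw [hsum, hGval]
    field_simp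
    ring
  have hsqrt : Real.sqrt (((M - p) - p)^2 / M^2) = |(M - p) - p| / M := by
    rw [show ((M - p) - p)^2 / M^2 = (((M - p) - p)/M)^2 by rw [div_pow],
      Real.sqrt_sq_eq_abs, abs_div, abs_of_pos hMpos]
  rw [hratio, hsqrt, key_box.1, hPj s hs.1 hs.2]
  have hAupd : A ≠ Function.update A j s := by
    intro h
    have h2 := congrFun h j
    rw [Function.update_self] at h2
    exact (ne_of_lt hsa) h2
  have hBupd : B ≠ Function.update B j s := by
    intro h
    have h2 := congrFun h j
    rw [Function.update_self] at h2
    exact (ne_of_gt hsb) h2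
  rcases hstep with ⟨hA', hB'⟩ | ⟨hA', hB'⟩
  · -- left daughter
    subst hA'; subst hB'
    rw [(key_left s hs.1 hs.2).1]
    rcases le_or_gt (1/2 : ℝ) (p / M) with hhalf | hhalf
    · rw [if_pos (Or.inr ⟨⟨rfl, rfl⟩, hhalf⟩)]
      have hple : M - p ≤ p := by
        have := (div_le_div_iff₀ (by norm_num) hMpos).1 hhalf
        linarith
      rw [abs_of_nonpos (by linarith : (M - p) - p ≤ 0)]
      field_simp
      ring
    · rw [if_neg ?_]
      · have hplt : p < M - p := by
          have := (div_lt_div_iff₀ hMpos (by norm_num)).1 hhalf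
          linarith
        rw [abs_of_nonneg (by linarith : (0:ℝ) ≤ (M - p) - p)]
        field_simp
        ring
      · rintro (⟨⟨h1, _⟩, _⟩ | ⟨_, h2⟩)
        · exact hAupd h1
        · exact absurd h2 (not_le.2 hhalf)
  · -- right daughter
    subst hA'; subst hB'
    rw [(key_right s hs.1 hs.2).1]
    rcases lt_or_ge (p / M) (1/2 : ℝ) with hhalf | hhalf
    · rw [if_pos (Or.inl ⟨⟨rfl, rfl⟩, hhalf⟩)]
      have hplt : p < M - p := by
        have := (div_lt_div_iff₀ hMpos (by norm_num)).1 hhalf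
        linarith
      rw [abs_of_nonneg (by linarith : (0:ℝ) ≤ (M - p) - p)]
      field_simp
      ring
    · rw [if_neg ?_]
      · have hple : M - p ≤ p := by
          have := (div_le_div_iff₀ (by norm_num) hMpos).1 hhalf
          linarith
        rw [abs_of_nonpos (by linarith : (M - p) - p ≤ 0)]
        field_simp
        ring
      · rintro (⟨_, h2⟩ | ⟨⟨h1, _⟩, _⟩)
        · exact absurd h2 (not_lt.2 hhalf)
        · exact hAupd h1.symm

end Step



open Classical in
/-- The probability content of a terminal node of a split chain factors
exactly as a product over the ancestor splits, with signs determined by which daughter was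
taken and whether the split is below the conditional median. -/
theorem node_probability_product_formula (d : ℕ)
    (ρ f : (Fin d → ℝ) → ℝ)
    (hρ_cont : ContinuousOn ρ (cube d)) (hρ_pos : ∀ x ∈ cube d, 0 < ρ x)
    (μ : Measure (Fin d → ℝ))
    (hμ : μ = (volume.restrict (cube d)).withDensity fun x => ENNReal.ofReal (ρ x))
    (hprob : IsProbabilityMeasure μ)
    (hf_cont : ContinuousOn f (cube d))
    (K : ℕ) (A B : ℕ → Fin d → ℝ) (js : ℕ → Fin d) (ss : ℕ → ℝ)
    (hchain : SplitChain μ f K A B js ss)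
    (hpos : ∀ k, k < K → 0 < impDec μ f (A k) (B k) (js k) (ss k)) :
    (μ (box (A K) (B K))).toReal =
      ∏ k ∈ Finset.range K,
        (1 +
          (if (A (k + 1) = Function.update (A k) (js k) (ss k) ∧ B (k + 1) = B k) ∧
                Pj μ (A k) (B k) (js k) (ss k) < 1 / 2 ∨
              (A (k + 1) = A k ∧ B (k + 1) = Function.update (B k) (js k) (ss k)) ∧
                1 / 2 ≤ Pj μ (A k) (B k) (js k) (ss k)
            then (1 : ℝ) else -1) *
          Real.sqrt (Gbar μ ρ f (A k) (B k) (js k) (ss k) ^ 2 /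
            (Gbar μ ρ f (A k) (B k) (js k) (ss k) ^ 2 +
              impDec μ f (A k) (B k) (js k) (ss k)))) / 2 := by
  obtain ⟨hA0, hB0, hnodes, hsteps⟩ := hchain
  -- clamped (globally continuous) versions of the density and regression function
  set ρ' : (Fin d → ℝ) → ℝ := fun x => ρ (clamp x) with hρ'def
  set f' : (Fin d → ℝ) → ℝ := fun x => f (clamp x) with hf'def
  have hρ'c : Continuous ρ' := hρ_cont.comp_continuous continuous_clamp clamp_mem_cube
  have hf'c : Continuous f' := hf_cont.comp_continuous continuous_clamp clamp_mem_cube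
  have hρ'pos : ∀ x, 0 < ρ' x := fun x => hρ_pos _ (clamp_mem_cube x)
  have hμ' : μ = (volume.restrict (cube d)).withDensity fun x => ENNReal.ofReal (ρ' x) := by
    rw [hμ]
    apply withDensity_congr_ae
    refine (ae_restrict_iff' measurableSet_cube).2 (Filter.Eventually.of_forall fun x hx => ?_)
    rw [hρ'def]
    simp [clamp_eq_self hx]
  have hcompl : μ (cube d)ᶜ = 0 := by
    rw [hμ, withDensity_apply _ measurableSet_cube.compl]
    have h0 : (volume.restrict (cube d)) (cube d)ᶜ = 0 := by
      rw [Measure.restrict_apply measurableSet_cube.compl]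
      simp
    exact setLIntegral_measure_zero _ _ h0
  have hfae : f =ᵐ[μ] f' := by
    rw [Filter.EventuallyEq, ae_iff]
    refine measure_mono_null (fun x hx => ?_) hcompl
    intro hxc
    exact hx (by rw [hf'def]; simp [clamp_eq_self hxc])
  have hint_eq : ∀ S : Set (Fin d → ℝ), (∫ x in S, f x ∂μ) = ∫ x in S, f' x ∂μ :=
    fun S => integral_congr_ae (ae_restrict_of_ae hfae)
  have himp_eq : ∀ (A₀ B₀ : Fin d → ℝ) (j : Fin d) (u : ℝ),
      impDec μ f A₀ B₀ j u = impDec μ f' A₀ B₀ j u := by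
    intro A₀ B₀ j u
    rw [impDec, impDec, cAvg, cAvg, cAvg, cAvg, hint_eq, hint_eq]
  have hGbar_eq : ∀ (A₀ B₀ : Fin d → ℝ) (j : Fin d) (u : ℝ), IsNode A₀ B₀ →
      u ∈ Set.Icc (A₀ j) (B₀ j) → Gbar μ ρ f A₀ B₀ j u = Gbar μ ρ' f' A₀ B₀ j u := by
    intro A₀ B₀ j u hnode hu
    have hupd : ∀ x ∈ box A₀ B₀, Function.update x j u ∈ cube d := by
      intro x hx i _
      by_cases h : i = j
      · subst h
        rw [Function.update_self]
        exact ⟨le_trans (hnode i).1 hu.1, le_trans hu.2 (hnode i).2.2⟩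
      · rw [Function.update_of_ne h]
        exact box_subset_cube hnode hx i trivial
    have h1 : (∫ x in box A₀ B₀, f (Function.update x j u) * ρ (Function.update x j u))
        = ∫ x in box A₀ B₀, f' (Function.update x j u) * ρ' (Function.update x j u) := by
      refine setIntegral_congr_fun (measurableSet_box _ _) fun x hx => ?_
      rw [hρ'def, hf'def]
      simp [clamp_eq_self (hupd x hx)]
    have h2 : (∫ x in box A₀ B₀, ρ (Function.update x j u))
        = ∫ x in box A₀ B₀, ρ' (Function.update x j u) := by
      refine setIntegral_congr_fun (measurableSet_box _ _) fun x hx => ?_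
      rw [hρ'def]
      simp [clamp_eq_self (hupd x hx)]
    rw [Gbar, Gbar, Fbar, Fbar, cAvg, cAvg, h1, h2, hint_eq]
  -- base case
  have base : (μ (box (A 0) (B 0))).toReal = 1 := by
    have hbox : box (A 0) (B 0) = cube d := by
      rw [hA0, hB0]; rfl
    rw [hbox, mu_cube_eq_one (ρ := ρ') μ hμ' hprob, ENNReal.toReal_one]
  -- one-step factorization
  have step : ∀ k, k < K →
      (μ (box (A (k+1)) (B (k+1)))).toReal =
      (1 +
          (if (A (k + 1) = Function.update (A k) (js k) (ss k) ∧ B (k + 1) = B k) ∧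
                Pj μ (A k) (B k) (js k) (ss k) < 1 / 2 ∨
              (A (k + 1) = A k ∧ B (k + 1) = Function.update (B k) (js k) (ss k)) ∧
                1 / 2 ≤ Pj μ (A k) (B k) (js k) (ss k)
            then (1 : ℝ) else -1) *
          Real.sqrt (Gbar μ ρ f (A k) (B k) (js k) (ss k) ^ 2 /
            (Gbar μ ρ f (A k) (B k) (js k) (ss k) ^ 2 +
              impDec μ f (A k) (B k) (js k) (ss k)))) / 2 *
      (μ (box (A k) (B k))).toReal := by
    intro k hk
    have hd : d ≠ 0 := fun h => (h ▸ js k).elim0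
    obtain ⟨n, rfl⟩ : ∃ n, d = n + 1 := ⟨d - 1, (Nat.succ_pred_eq_of_ne_zero hd).symm⟩
    obtain ⟨hss, hmax, hstep⟩ := hsteps k hk
    have hnode := hnodes k hk.le
    rw [hGbar_eq (A k) (B k) (js k) (ss k) hnode hss, himp_eq]
    have hmax' : ∀ u ∈ Set.Icc (A k (js k)) (B k (js k)),
        impDec μ f' (A k) (B k) (js k) u ≤ impDec μ f' (A k) (B k) (js k) (ss k) := by
      intro u hu
      rw [← himp_eq, ← himp_eq]
      exact hmax u hu
    have hpos' : 0 < impDec μ f' (A k) (B k) (js k) (ss k) := by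
      rw [← himp_eq]; exact hpos k hk
    exact step_formula ρ' f' hρ'c hf'c hρ'pos μ hμ' (A k) (B k) (A (k+1)) (B (k+1))
      hnode (js k) (ss k) hss hmax' hstep hpos'
  -- telescoping
  have hprod : ∀ mk, mk ≤ K → (μ (box (A mk) (B mk))).toReal =
      ∏ k ∈ Finset.range mk,
        (1 +
          (if (A (k + 1) = Function.update (A k) (js k) (ss k) ∧ B (k + 1) = B k) ∧
                Pj μ (A k) (B k) (js k) (ss k) < 1 / 2 ∨
              (A (k + 1) = A k ∧ B (k + 1) = Function.update (B k) (js k) (ss k)) ∧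
                1 / 2 ≤ Pj μ (A k) (B k) (js k) (ss k)
            then (1 : ℝ) else -1) *
          Real.sqrt (Gbar μ ρ f (A k) (B k) (js k) (ss k) ^ 2 /
            (Gbar μ ρ f (A k) (B k) (js k) (ss k) ^ 2 +
              impDec μ f (A k) (B k) (js k) (ss k)))) / 2 := by
    intro mk
    induction mk with
    | zero => intro _; simpa using base
    | succ i ih =>
      intro hik
      rw [Finset.prod_range_succ, ← ih (Nat.le_of_succ_le hik),
        step i (Nat.lt_of_succ_le hik)]
      ring
  exact hprod K le_rfl

end RegressionTree6
end
end

section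
/- Let P_1, …, P_K be distinct real polynomials with zero constant term and let R_1, …, R_K be real polynomials. If Σ_{k=1}^K R_k(x)·e^{P_k(x)} = 0 for all x in some nonempty open interval of ℝ, then R_1 = R_2 = ⋯ = R_K = 0 (as polynomials). -/
open Set

section ExpPolyAux
open Polynomial Filter Real Asymptotics

open Polynomial Filter Real Asymptotics

lemma ev_sign (D : Polynomial ℝ) (h : 0 ≤ D.leadingCoeff) :
    ∀ᶠ x in atTop, 0 ≤ D.eval x := by
  rcases le_or_gt D.degree 0 with hd | hd
  · have hD : D = Polynomial.C (D.coeff 0) := Polynomial.eq_C_of_degree_le_zero hd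
    have : D.leadingCoeff = D.coeff 0 := by rw [hD]; simp
    refine Eventually.of_forall fun x => ?_
    rw [hD]; simpa using this ▸ h
  · exact (Polynomial.tendsto_atTop_of_leadingCoeff_nonneg D hd h).eventually_ge_atTop 0

lemma ev_le_total (p q : Polynomial ℝ) :
    (∀ᶠ x in atTop, p.eval x ≤ q.eval x) ∨ (∀ᶠ x in atTop, q.eval x ≤ p.eval x) := by
  rcases le_total 0 (q - p).leadingCoeff with h | h
  · left
    filter_upwards [ev_sign _ h] with x hx
    simpa [sub_nonneg] using hx
  · right
    have h' : 0 ≤ (p - q).leadingCoeff := by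
      have : p - q = -(q - p) := by ring
      rw [this, Polynomial.leadingCoeff_neg]; linarith
    filter_upwards [ev_sign _ h'] with x hx
    simpa [sub_nonneg] using hx

lemma exists_ev_max {ι : Type*} (s : Finset ι) (hs : s.Nonempty) (P : ι → Polynomial ℝ) :
    ∃ m ∈ s, ∀ k ∈ s, ∀ᶠ x in atTop, (P k).eval x ≤ (P m).eval x := by
  induction hs using Finset.Nonempty.cons_induction with
  | singleton a => exact ⟨a, by simp, by simp⟩
  | cons a s ha hs IH =>
    obtain ⟨m, hm, hmax⟩ := IH
    rcases ev_le_total (P a) (P m) with h | h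
    · refine ⟨m, Finset.mem_cons_of_mem hm, fun k hk => ?_⟩
      rcases Finset.mem_cons.mp hk with rfl | hk
      · exact h
      · exact hmax k hk
    · refine ⟨a, Finset.mem_cons_self a s, fun k hk => ?_⟩
      rcases Finset.mem_cons.mp hk with rfl | hk
      · exact Eventually.of_forall fun _ => le_refl _
      · filter_upwards [hmax k hk, h] with x h1 h2 using le_trans h1 h2

open Polynomial Filter Real Asymptotics

lemma poly_mul_exp_neg (R : Polynomial ℝ) {b : ℝ} (hb : 0 < b) :
    Tendsto (fun x => R.eval x * Real.exp (-(b * x))) atTop (nhds 0) := by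
  have h1 : (fun x : ℝ => R.eval x) =O[atTop] (fun x => x ^ R.natDegree) := by
    have := Polynomial.isBigO_of_degree_le R (Polynomial.X ^ R.natDegree)
      (by simpa [Polynomial.degree_X_pow] using Polynomial.degree_le_natDegree)
    simpa using this
  have h2 : Tendsto (fun x : ℝ => x ^ R.natDegree * Real.exp (-(b * x))) atTop (nhds 0) := by
    have hcomp := (Real.tendsto_pow_mul_exp_neg_atTop_nhds_zero R.natDegree).comp
      (Filter.tendsto_id.const_mul_atTop hb)
    have := hcomp.const_mul ((b : ℝ) ^ R.natDegree)⁻¹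
    rw [mul_zero] at this
    refine this.congr fun x => ?_
    simp only [Function.comp, id]
    rw [mul_pow]
    field_simp
  exact (h1.mul (isBigO_refl (fun x : ℝ => Real.exp (-(b * x))) atTop)).trans_tendsto h2

lemma decay (D : Polynomial ℝ) (hD : D ≠ 0) (h0 : D.coeff 0 = 0)
    (hle : ∀ᶠ x in atTop, D.eval x ≤ 0) (R : Polynomial ℝ) :
    Tendsto (fun x => R.eval x * Real.exp (D.eval x)) atTop (nhds 0) := by
  have hdeg : 0 < D.degree := by
    by_contra h
    push_neg at h
    have := Polynomial.eq_C_of_degree_le_zero h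
    rw [h0] at this
    simp only [map_zero] at this
    exact hD this
  have hlc : D.leadingCoeff < 0 := by
    by_contra h
    push_neg at h
    have := (Polynomial.tendsto_atTop_of_leadingCoeff_nonneg D hdeg h).eventually_ge_atTop 1
    obtain ⟨x, hx1, hx2⟩ := (this.and hle).exists
    linarith
  set c := D.leadingCoeff with hc
  set n := D.natDegree with hn
  -- eventually D.eval x ≤ (c/2) * x
  have hequiv := Polynomial.isEquivalent_atTop_lead D
  have hbound : ∀ᶠ x in atTop, D.eval x ≤ c / 2 * x := by
    have h3 := hequiv.isLittleO.def (by norm_num : (0:ℝ) < 1/2)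
    filter_upwards [h3, eventually_ge_atTop (1:ℝ)] with x h3 hx1
    have hxn : (1:ℝ) ≤ x ^ n := one_le_pow₀ hx1
    have hx0 : (0:ℝ) < x := lt_of_lt_of_le one_pos hx1
    have h3' : |D.eval x - c * x ^ n| ≤ 1/2 * (-c * |x| ^ n) := by
      simpa [Real.norm_eq_abs, abs_mul, ← hc, ← hn, abs_of_neg hlc] using h3
    rw [abs_of_pos hx0] at h3'
    have h4 : D.eval x ≤ c * x ^ n + 1/2 * (-c * x ^ n) := by
      linarith [(abs_le.mp h3').2]
    have h5 : c * x ^ n + 1/2 * (-c * x ^ n) = c / 2 * x ^ n := by ring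
    rw [h5] at h4
    refine h4.trans ?_
    have : c / 2 * x ^ n ≤ c / 2 * x := by
      have hxx : x ≤ x ^ n := by
        calc x = x ^ 1 := (pow_one x).symm
        _ ≤ x ^ n := pow_le_pow_right₀ hx1 (by
            rw [hn]
            exact Polynomial.natDegree_pos_iff_degree_pos.mpr hdeg)
      nlinarith
    exact this
  have hmain := poly_mul_exp_neg R (b := -(c/2)) (by linarith)
  have hmain' : Tendsto (fun x => R.eval x * Real.exp (c / 2 * x)) atTop (nhds 0) := by
    refine hmain.congr fun x => ?_
    ring_nf
  refine squeeze_zero_norm' ?_ (by simpa using hmain'.abs)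
  filter_upwards [hbound] with x hx
  rw [Real.norm_eq_abs, abs_mul, Real.abs_exp]
  exact mul_le_mul_of_nonneg_left (Real.exp_le_exp.mpr hx) (abs_nonneg _)

lemma poly_eq_zero_of_tendsto (R : Polynomial ℝ)
    (h : Tendsto (fun x => R.eval x) atTop (nhds 0)) : R = 0 := by
  exact Polynomial.leadingCoeff_eq_zero.mp ((Polynomial.tendsto_nhds_iff R).mp h).1

lemma exp_poly_aux {ι : Type*} [DecidableEq ι] (P R : ι → Polynomial ℝ)
    (s : Finset ι)
    (hP0 : ∀ k ∈ s, (P k).coeff 0 = 0)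
    (hPd : ∀ k ∈ s, ∀ l ∈ s, k ≠ l → P k ≠ P l)
    (hz : ∀ x : ℝ, ∑ k ∈ s, (R k).eval x * Real.exp ((P k).eval x) = 0) :
    ∀ k ∈ s, R k = 0 := by
  induction s using Finset.strongInduction with
  | _ s IH =>
    rcases s.eq_empty_or_nonempty with rfl | hs
    · simp
    obtain ⟨m, hm, hmax⟩ := exists_ev_max s hs P
    have hRmval : ∀ x : ℝ, (R m).eval x =
        -∑ k ∈ s.erase m, (R k).eval x * Real.exp ((P k - P m).eval x) := by
      intro x
      have h := hz x
      rw [← Finset.add_sum_erase _ _ hm] at h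
      have h2 : (R m).eval x * Real.exp ((P m).eval x) =
          -∑ k ∈ s.erase m, (R k).eval x * Real.exp ((P k).eval x) :=
        eq_neg_of_add_eq_zero_left h
      have e1 : (R m).eval x = ((R m).eval x * Real.exp ((P m).eval x)) *
          Real.exp (-(P m).eval x) := by
        rw [mul_assoc, ← Real.exp_add, add_neg_cancel, Real.exp_zero, mul_one]
      rw [e1, h2, neg_mul, Finset.sum_mul]
      congr 1
      refine Finset.sum_congr rfl fun k _ => ?_
      rw [mul_assoc, ← Real.exp_add, Polynomial.eval_sub]
      ring_nf
    have hRm : R m = 0 := by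
      apply poly_eq_zero_of_tendsto
      have hsum : Tendsto (fun x => -∑ k ∈ s.erase m,
          (R k).eval x * Real.exp ((P k - P m).eval x)) atTop (nhds 0) := by
        rw [show (0:ℝ) = -0 by ring]
        apply Tendsto.neg
        rw [show (0:ℝ) = ∑ k ∈ s.erase m, (0:ℝ) by simp]
        apply tendsto_finset_sum
        intro k hk
        have hkm : k ≠ m := Finset.ne_of_mem_erase hk
        have hks : k ∈ s := Finset.mem_of_mem_erase hk
        refine decay _ (sub_ne_zero_of_ne (hPd k hks m hm hkm)) ?_ ?_ (R k)
        · simp [Polynomial.coeff_sub, hP0 k hks, hP0 m hm]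
        · filter_upwards [hmax k hks] with x hx
          simpa [sub_nonpos] using hx
      exact hsum.congr fun x => (hRmval x).symm
    have hz' : ∀ x : ℝ, ∑ k ∈ s.erase m, (R k).eval x * Real.exp ((P k).eval x) = 0 := by
      intro x
      have h := hz x
      rw [← Finset.add_sum_erase _ _ hm, hRm] at h
      simpa using h
    have hrec := IH (s.erase m) (Finset.erase_ssubset hm)
      (fun k hk => hP0 k (Finset.mem_of_mem_erase hk))
      (fun k hk l hl => hPd k (Finset.mem_of_mem_erase hk) l (Finset.mem_of_mem_erase hl))
      hz'
    intro k hk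
    by_cases hkm : k = m
    · exact hkm ▸ hRm
    · exact hrec k (Finset.mem_erase.mpr ⟨hkm, hk⟩)

end ExpPolyAux

open Polynomial Filter Real Asymptotics in
/-- **linear independence of exponential polynomials.** If `P₁, …, P_K` are
distinct real polynomials with zero constant term, `R₁, …, R_K` are real polynomials, and
`Σ_k R_k(x)·e^{P_k(x)} = 0` on a nonempty open interval, then every `R_k` is the zero
polynomial. -/
theorem exp_poly_linear_independence (K : ℕ)
    (P R : Fin K → Polynomial ℝ)
    (hP0 : ∀ k, (P k).coeff 0 = 0)
    (hPdist : ∀ k l, k ≠ l → P k ≠ P l)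
    (a b : ℝ) (hab : a < b)
    (hzero : ∀ x ∈ Set.Ioo a b,
      ∑ k, (R k).eval x * Real.exp ((P k).eval x) = 0) :
    ∀ k, R k = 0 := by
  set f : ℝ → ℝ := fun x => ∑ k, (R k).eval x * Real.exp ((P k).eval x) with hf
  have hanal : AnalyticOnNhd ℝ f Set.univ := by
    have hfs : f = ∑ k, fun x => (R k).eval x * Real.exp ((P k).eval x) := by
      funext x
      rw [Finset.sum_apply]
    rw [hfs]
    apply Finset.analyticOnNhd_sum
    intro k _
    exact (AnalyticOnNhd.eval_polynomial (𝕜 := ℝ) (R k)).mul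
      (AnalyticOnNhd.eval_polynomial (𝕜 := ℝ) (P k)).rexp
  have hmid : (a + b) / 2 ∈ Set.Ioo a b := ⟨by linarith, by linarith⟩
  have hev : f =ᶠ[nhds ((a + b) / 2)] 0 := by
    filter_upwards [isOpen_Ioo.mem_nhds hmid] with x hx
    exact hzero x hx
  have hall : ∀ x : ℝ, f x = 0 := by
    intro x
    exact hanal.eqOn_zero_of_preconnected_of_eventuallyEq_zero isPreconnected_univ
      (Set.mem_univ _) hev (Set.mem_univ x)
  have := exp_poly_aux P R Finset.univ (fun k _ => hP0 k)
    (fun k _ l _ hkl => hPdist k l hkl) hall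
  exact fun k => this k (Finset.mem_univ k)
end
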